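/- arXiv:1503.08941 — 11 statements merged into one kernel-verified Lean document; each statement's English description precedes it below -/
import Mathlib

section
/- Let G be a connected graph on n vertices. Then mvc(G) = n if and only if diam(G) ≤ 2. -/
open SimpleGraph

/-- A vertex-coloring `c` of `G` is an MVC-coloring if any two vertices are joined by a
path whose internal vertices all have the same color. -/
def IsMVCColoring {V : Type*} (G : SimpleGraph V) (c : V → ℕ) : Prop :=
  ∀ u v : V, ∃ p : G.Walk u v, p.IsPath ∧
    ∀ x ∈ p.support.tail.dropLast, ∀ y ∈ p.support.tail.dropLast, c x = c y

/-- The monochromatic vertex-connection number: the maximum number of colors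
used in an MVC-coloring of `G`. -/
noncomputable def mvc {V : Type*} (G : SimpleGraph V) : ℕ :=
  sSup {k : ℕ | ∃ c : V → ℕ, IsMVCColoring G c ∧ (Set.range c).ncard = k}

lemma eq_of_mem_short {α : Type*} {l : List α} (h : l.length ≤ 1) {x y : α}
    (hx : x ∈ l) (hy : y ∈ l) : x = y := by
  match l with
  | [] => simp at hx
  | [a] => simp at hx hy; simp [hx, hy]
  | a :: b :: t => simp at h

lemma internal_length {V : Type*} {G : SimpleGraph V} {u v : V} (p : G.Walk u v) :
    p.support.tail.dropLast.length = p.length - 1 := by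
  rw [List.length_dropLast, List.length_tail, SimpleGraph.Walk.length_support]
  omega

lemma ncard_range_eq {V : Type*} [Fintype V] (c : V → ℕ) :
    (Set.range c).ncard = (Finset.univ.image c).card := by
  rw [← Set.ncard_coe_finset, Finset.coe_image, Finset.coe_univ, Set.image_univ]

theorem stmt_3 {V : Type*} [Fintype V] (G : SimpleGraph V) (hG : G.Connected) :
    mvc G = Fintype.card V ↔ G.diam ≤ 2 := by
  classical
  have hne : Nonempty V := hG.nonempty
  have hetop : G.ediam ≠ ⊤ := by
    obtain ⟨u, v, h⟩ := SimpleGraph.exists_edist_eq_ediam_of_finite (G := G)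
    rw [← h]
    exact SimpleGraph.edist_ne_top_iff_reachable.mpr (hG u v)
  -- bound: every element of the mvc set is ≤ card V
  have hbound : ∀ k ∈ {k : ℕ | ∃ c : V → ℕ, IsMVCColoring G c ∧ (Set.range c).ncard = k},
      k ≤ Fintype.card V := by
    rintro k ⟨c, -, rfl⟩
    rw [ncard_range_eq]
    exact (Finset.card_image_le).trans (by simp)
  have hbdd : BddAbove {k : ℕ | ∃ c : V → ℕ, IsMVCColoring G c ∧ (Set.range c).ncard = k} :=
    ⟨Fintype.card V, hbound⟩
  have hnonempty : (1 : ℕ) ∈ {k : ℕ | ∃ c : V → ℕ, IsMVCColoring G c ∧ (Set.range c).ncard = k} := by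
    refine ⟨fun _ => 0, fun u v => ⟨((hG u v).some).bypass, SimpleGraph.Walk.bypass_isPath _, by simp⟩, ?_⟩
    simp [Set.range_const]
  constructor
  · intro hmvc
    -- sSup attained, so ∃ c MVC with ncard range = card V
    have hmem := Nat.sSup_mem ⟨1, hnonempty⟩ hbdd
    rw [show sSup {k : ℕ | ∃ c : V → ℕ, IsMVCColoring G c ∧ (Set.range c).ncard = k} = mvc G from rfl,
      hmvc] at hmem
    obtain ⟨c, hc, hcard⟩ := hmem
    have hinj : Function.Injective c := by
      rw [ncard_range_eq] at hcard
      have := Finset.card_image_iff.mp (by rw [hcard]; simp)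
      intro a b hab
      exact this (Finset.mem_coe.mpr (Finset.mem_univ a)) (Finset.mem_coe.mpr (Finset.mem_univ b)) hab
    have hd : G.ediam ≤ 2 := by
      rw [SimpleGraph.ediam_le_iff]
      intro u v
      obtain ⟨p, hp, hmono⟩ := hc u v
      have hlen : p.support.tail.dropLast.length ≤ 1 := by
        by_contra hlong
        push_neg at hlong
        have hnd : p.support.tail.dropLast.Nodup :=
          hp.support_nodup.sublist ((List.dropLast_sublist _).trans (List.tail_sublist _))
        match hl : p.support.tail.dropLast, hlong, hnd with
        | a :: b :: t, _, hnd =>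
          have hab : a ≠ b := by simp at hnd; tauto
          exact hab (hinj (hmono a (by rw [hl]; simp) b (by rw [hl]; simp)))
        | [], hlong, _ => simp at hlong
        | [a], hlong, _ => simp at hlong
      have : p.length ≤ 2 := by
        have := internal_length p
        omega
      calc G.edist u v ≤ p.length := SimpleGraph.edist_le p
        _ ≤ 2 := by exact_mod_cast this
    calc G.diam = G.ediam.toNat := rfl
      _ ≤ (2 : ℕ∞).toNat := ENat.toNat_le_toNat hd (by simp)
      _ = 2 := rfl
  · intro hdiam
    have hdist : ∀ u v : V, G.dist u v ≤ 2 := fun u v =>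
      (SimpleGraph.dist_le_diam hetop).trans hdiam
    set c : V → ℕ := fun v => (Fintype.equivFin V v : ℕ) with hc
    have hinj : Function.Injective c := fun a b h =>
      (Fintype.equivFin V).injective (Fin.val_injective h)
    have hmvcc : IsMVCColoring G c := by
      intro u v
      obtain ⟨p, hp⟩ := hG.exists_walk_length_eq_dist u v
      refine ⟨p.bypass, SimpleGraph.Walk.bypass_isPath p, ?_⟩
      have hlen : p.bypass.length ≤ 2 := (SimpleGraph.Walk.length_bypass_le p).trans (hp ▸ hdist u v)
      have hl : p.bypass.support.tail.dropLast.length ≤ 1 := by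
        have := internal_length p.bypass
        omega
      intro x hx y hy
      rw [eq_of_mem_short hl hx hy]
    have hmem : Fintype.card V ∈
        {k : ℕ | ∃ c : V → ℕ, IsMVCColoring G c ∧ (Set.range c).ncard = k} := by
      refine ⟨c, hmvcc, ?_⟩
      rw [ncard_range_eq, Finset.card_image_of_injective _ hinj, Finset.card_univ]
    exact le_antisymm (csSup_le ⟨1, hnonempty⟩ hbound) (le_csSup hbdd hmem)
end

section
/- Let G be a connected graph on n vertices with diameter d ≥ 3. Then mvc(G) ≤ n − d + 2. -/
open SimpleGraph

theorem stmt_4 {V : Type*} [Fintype V] (G : SimpleGraph V) (hG : G.Connected)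
    (d : ℕ) (hd : G.diam = d) (h3 : 3 ≤ d) :
    mvc G ≤ Fintype.card V - d + 2 := by
  classical
  apply csSup_le'
  rintro k ⟨c, hc, rfl⟩
  haveI : Nonempty V := hG.nonempty
  obtain ⟨u, v, huv⟩ := G.exists_dist_eq_diam
  rw [hd] at huv
  obtain ⟨p, hp, hmono⟩ := hc u v
  have hlen : d ≤ p.length := huv ▸ G.dist_le p
  set L : List V := p.support.tail.dropLast with hL
  have hnodup : L.Nodup :=
    ((p.support.tail.dropLast_sublist).trans p.support.tail_sublist).nodup hp.support_nodup
  have hLlen : L.length = p.length - 1 := by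
    simp [hL, List.length_dropLast, List.length_tail, p.length_support]
  set T : Finset V := L.toFinset with hT
  have hTcard : T.card = p.length - 1 := by
    rw [hT, List.toFinset_card_of_nodup hnodup, hLlen]
  have hrange : Set.range c ⊆ c '' (↑T : Set V) ∪ c '' ((↑T : Set V)ᶜ) := by
    rintro x ⟨y, rfl⟩
    by_cases hy : y ∈ T
    · exact Or.inl ⟨y, hy, rfl⟩
    · exact Or.inr ⟨y, hy, rfl⟩
  have h1 : (c '' (↑T : Set V)).ncard ≤ 1 := by
    have hsub : (c '' (↑T : Set V)).Subsingleton := by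
      rintro a ⟨x, hx, rfl⟩ b ⟨y, hy, rfl⟩
      exact hmono x (List.mem_toFinset.mp hx) y (List.mem_toFinset.mp hy)
    exact (Set.ncard_le_one (Set.toFinite _)).mpr fun a ha b hb => hsub ha hb
  have h2 : (c '' ((↑T : Set V)ᶜ)).ncard ≤ Fintype.card V - T.card := by
    calc (c '' ((↑T : Set V)ᶜ)).ncard ≤ ((↑T : Set V)ᶜ).ncard :=
          Set.ncard_image_le (Set.toFinite _)
      _ = Fintype.card V - T.card := by
          rw [← Finset.coe_compl, Set.ncard_coe_finset, Finset.card_compl]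
  calc (Set.range c).ncard ≤ (c '' (↑T : Set V) ∪ c '' ((↑T : Set V)ᶜ)).ncard :=
        Set.ncard_le_ncard hrange (Set.toFinite _)
    _ ≤ (c '' (↑T : Set V)).ncard + (c '' ((↑T : Set V)ᶜ)).ncard := Set.ncard_union_le ..
    _ ≤ 1 + (Fintype.card V - T.card) := add_le_add h1 h2
    _ ≤ Fintype.card V - d + 2 := by omega
end

section
/- For every n ≥ 4 and every d with 3 ≤ d ≤ n−1, the graph G obtained from a complete graph K_{n−d+1} by attaching a path of length d−1 at one of its vertices satisfies diam(G) = d and mvc(G) = n − d + 2. -/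
open SimpleGraph

/-- The graph obtained from `K_{n-d+1}` (on vertices `0,…,n-d`) by attaching a path of
length `d-1` at vertex `n-d` (through vertices `n-d, n-d+1, …, n-1`). -/
def cliqueWithPath (n d : ℕ) : SimpleGraph (Fin n) :=
  SimpleGraph.fromRel (fun i j =>
    (i.val ≤ n - d ∧ j.val ≤ n - d) ∨ (j.val = i.val + 1 ∧ n - d ≤ i.val))

namespace CWPAux

lemma adj_iff {n d : ℕ} {i j : Fin n} :
    (cliqueWithPath n d).Adj i j ↔ i ≠ j ∧
      ((i.val ≤ n - d ∧ j.val ≤ n - d) ∨ (j.val = i.val + 1 ∧ n - d ≤ i.val) ∨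
        (i.val = j.val + 1 ∧ n - d ≤ j.val)) := by
  simp only [cliqueWithPath, fromRel_adj]
  tauto

/-- The walk along the attached path from `a` to `a+k`. -/
def pathWalk (n d : ℕ) : (a k : ℕ) → (ha : n - d ≤ a) → (hk : a + k < n) →
    (cliqueWithPath n d).Walk ⟨a, by omega⟩ ⟨a + k, hk⟩
  | a, 0, _, _ => SimpleGraph.Walk.nil
  | a, k + 1, ha, hk =>
      SimpleGraph.Walk.cons
        (show (cliqueWithPath n d).Adj ⟨a, by omega⟩ ⟨a + 1, by omega⟩ by
          rw [adj_iff]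
          refine ⟨?_, Or.inr (Or.inl ⟨rfl, ha⟩)⟩
          simp [Fin.ext_iff])
        ((pathWalk n d (a + 1) k (by omega) (by omega)).copy rfl (by
          congr 1
          omega))

lemma pathWalk_length (n d : ℕ) : ∀ (k a : ℕ) (ha : n - d ≤ a) (hk : a + k < n),
    (pathWalk n d a k ha hk).length = k
  | 0, a, _, _ => rfl
  | k + 1, a, ha, hk => by
      simp [pathWalk, pathWalk_length n d k (a + 1)]

lemma pathWalk_support (n d : ℕ) : ∀ (k a : ℕ) (ha : n - d ≤ a) (hk : a + k < n),
    ((pathWalk n d a k ha hk).support).map Fin.val = List.range' a (k + 1)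
  | 0, a, _, _ => by simp [pathWalk]
  | k + 1, a, ha, hk => by
      rw [show k + 1 + 1 = (k + 1) + 1 from rfl, List.range'_succ]
      simp [pathWalk, pathWalk_support n d k (a + 1)]

lemma pathWalk_isPath (n d : ℕ) (k a : ℕ) (ha : n - d ≤ a) (hk : a + k < n) :
    (pathWalk n d a k ha hk).IsPath := by
  rw [SimpleGraph.Walk.isPath_def]
  have h1 : (((pathWalk n d a k ha hk).support).map Fin.val).Nodup := by
    rw [pathWalk_support]
    exact List.nodup_range'
  exact h1.of_map _

lemma mem_support_val {n d : ℕ} {k a : ℕ} {ha : n - d ≤ a} {hk : a + k < n} {x : Fin n}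
    (hx : x ∈ (pathWalk n d a k ha hk).support) : a ≤ x.val ∧ x.val ≤ a + k := by
  have : x.val ∈ ((pathWalk n d a k ha hk).support).map Fin.val :=
    List.mem_map_of_mem hx
  rw [pathWalk_support] at this
  rw [List.mem_range'_1] at this
  omega

/-- Interior membership for paths. -/
lemma mem_interior_iff {V : Type*} {G : SimpleGraph V} {u v : V} (p : G.Walk u v)
    (hp : p.IsPath) (huv : u ≠ v) {x : V} :
    x ∈ p.support.tail.dropLast ↔ x ∈ p.support ∧ x ≠ u ∧ x ≠ v := by
  have hs : p.support = u :: p.support.tail := p.support_eq_cons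
  have hn : p.support.tail ≠ [] := by
    cases p with
    | nil => exact absurd rfl huv
    | cons h q => simp
  have key : ∀ (l₁ l₂ : List V) (h₁ : l₁ ≠ []) (h₂ : l₂ ≠ []), l₁ = l₂ →
      l₁.getLast h₁ = l₂.getLast h₂ := by
    rintro l₁ l₂ h₁ h₂ rfl; rfl
  have hlast : p.support.tail.getLast hn = v := by
    have h4 : (u :: p.support.tail).getLast (List.cons_ne_nil _ _) = v :=
      (key _ _ _ (p.support_ne_nil) hs.symm).trans p.getLast_support
    rw [List.getLast_cons hn] at h4
    exact h4
  have htl : p.support.tail = p.support.tail.dropLast ++ [v] := by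
    conv_lhs => rw [← List.dropLast_append_getLast hn, hlast]
  have hnodup : p.support.Nodup := hp.support_nodup
  rw [hs] at hnodup
  have hu_not : u ∉ p.support.tail := (List.nodup_cons.mp hnodup).1
  have htail_nodup : p.support.tail.Nodup := (List.nodup_cons.mp hnodup).2
  have hv_not : v ∉ p.support.tail.dropLast := by
    rw [htl] at htail_nodup
    intro hv
    have := List.disjoint_of_nodup_append htail_nodup hv
    simp at this
  constructor
  · intro hx
    have hx' : x ∈ p.support.tail := List.dropLast_subset _ hx
    refine ⟨hs ▸ List.mem_cons_of_mem _ hx', ?_, ?_⟩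
    · rintro rfl; exact hu_not hx'
    · rintro rfl; exact hv_not hx
  · rintro ⟨hx, hxu, hxv⟩
    rw [hs, List.mem_cons] at hx
    rcases hx with rfl | hx
    · exact absurd rfl hxu
    · rw [htl, List.mem_append, List.mem_singleton] at hx
      rcases hx with hx | rfl
      · exact hx
      · exact absurd rfl hxv

/-- Crossing lemma: any walk crossing the threshold `t ≥ n - d` passes through `t`. -/
lemma mem_support_of_cross {n d : ℕ} {t : ℕ} (hm : n - d ≤ t) (ht : t < n)
    {u v : Fin n} (p : (cliqueWithPath n d).Walk u v) :
    u.val ≤ t → t < v.val → (⟨t, ht⟩ : Fin n) ∈ p.support := by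
  induction p with
  | nil => intro hu hv; omega
  | @cons a b c hab q ih =>
      intro hu hv
      rw [SimpleGraph.Walk.support_cons]
      by_cases hb : b.val ≤ t
      · exact List.mem_cons_of_mem _ (ih hb hv)
      · have := adj_iff.mp hab
        have hat : a.val = t := by
          rcases this.2 with ⟨h1, h2⟩ | ⟨h1, h2⟩ | ⟨h1, h2⟩ <;> omega
        have : (⟨t, ht⟩ : Fin n) = a := by
          exact (Fin.ext hat.symm)
        rw [this]
        exact List.mem_cons_self

lemma potential_le {n d : ℕ} (f : Fin n → ℕ)
    (hf : ∀ a b : Fin n, (cliqueWithPath n d).Adj a b → f b ≤ f a + 1)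
    {u v : Fin n} (p : (cliqueWithPath n d).Walk u v) : f v ≤ f u + p.length := by
  induction p with
  | nil => simp
  | @cons a b c hab q ih =>
      have := hf a b hab
      rw [SimpleGraph.Walk.length_cons]
      omega

/-- The optimal MVC coloring. -/
def mvcColoring (n d : ℕ) (x : Fin n) : ℕ :=
  if x.val < n - d then x.val else if x.val = n - 1 then n - d + 1 else n - d

end CWPAux

open CWPAux in
theorem stmt_5 (n d : ℕ) (hn : 4 ≤ n) (hd : 3 ≤ d) (hdn : d ≤ n - 1) :
    (cliqueWithPath n d).diam = d ∧ mvc (cliqueWithPath n d) = n - d + 2 := by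
  set m := n - d with hm
  have hm1 : 1 ≤ m := by omega
  have hmd : m + d = n := by omega
  have hmn : m + 3 ≤ n := by omega
  set G := cliqueWithPath n d with hG
  -- the distinguished vertices
  have h0n : 0 < n := by omega
  have hmltn : m < n := by omega
  have hn1 : n - 1 < n := by omega
  -- every walk from 0 to n-1 has length at least d
  have hlow : ∀ p : G.Walk ⟨0, h0n⟩ ⟨n - 1, hn1⟩, d ≤ p.length := by
    intro p
    have := potential_le (fun x : Fin n => if x.val < m then 0 else x.val - m + 1)
      (by
        intro a b hab
        have := adj_iff.mp hab
        rcases this.2 with ⟨h1, h2⟩ | ⟨h1, h2⟩ | ⟨h1, h2⟩ <;>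
          split_ifs <;> omega) p
    simp only at this
    split_ifs at this <;> omega
  -- short walks exist between every pair
  have hshort : ∀ u v : Fin n, u.val ≤ v.val → ∃ p : G.Walk u v, p.length ≤ d := by
    intro u v huv
    by_cases hvv : v.val ≤ m
    · by_cases hueq : u = v
      · subst hueq; exact ⟨SimpleGraph.Walk.nil, by simp⟩
      · refine ⟨SimpleGraph.Walk.cons ?_ SimpleGraph.Walk.nil, ?_⟩
        · rw [adj_iff]
          exact ⟨hueq, Or.inl ⟨by omega, hvv⟩⟩
        · simp only [SimpleGraph.Walk.length_cons, SimpleGraph.Walk.length_nil]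
          omega
    · push_neg at hvv
      by_cases hum : m ≤ u.val
      · refine ⟨(pathWalk n d u.val (v.val - u.val) hum (by omega)).copy
          (Fin.ext rfl) (Fin.ext (by simp only [Fin.val_mk]; omega)), ?_⟩
        rw [SimpleGraph.Walk.length_copy, pathWalk_length]
        omega
      · push_neg at hum
        refine ⟨SimpleGraph.Walk.cons
          (show G.Adj u ⟨m, hmltn⟩ by
            rw [adj_iff]
            exact ⟨fun h => absurd (congrArg Fin.val h) (by simp only [Fin.val_mk]; omega), Or.inl ⟨by omega, le_rfl⟩⟩)
          ((pathWalk n d m (v.val - m) le_rfl (by omega)).copy rfl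
            (Fin.ext (by simp only [Fin.val_mk]; omega))), ?_⟩
        rw [SimpleGraph.Walk.length_cons, SimpleGraph.Walk.length_copy, pathWalk_length]
        omega
  have hshort' : ∀ u v : Fin n, ∃ p : G.Walk u v, p.length ≤ d := by
    intro u v
    rcases le_total u.val v.val with h | h
    · exact hshort u v h
    · obtain ⟨p, hp⟩ := hshort v u h
      exact ⟨p.reverse, by simpa using hp⟩
  -- diameter computation
  have hediam : G.ediam = d := by
    apply le_antisymm
    · apply SimpleGraph.ediam_le_of_edist_le
      intro u v
      obtain ⟨p, hp⟩ := hshort' u v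
      refine le_trans (SimpleGraph.edist_le p) ?_
      exact_mod_cast hp
    · calc (d : ℕ∞) ≤ G.edist ⟨0, h0n⟩ ⟨n - 1, hn1⟩ := by
            rw [SimpleGraph.edist_eq_sInf]
            apply le_sInf
            rintro x ⟨p, rfl⟩
            show (d : ℕ∞) ≤ (p.length : ℕ∞)
            exact_mod_cast hlow p
        _ ≤ G.ediam := SimpleGraph.edist_le_ediam
  have hdiam : G.diam = d := by
    rw [SimpleGraph.diam, hediam]
    simp
  refine ⟨hdiam, ?_⟩
  -- the MVC part
  -- upper bound: any MVC coloring uses at most m + 2 colors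
  have hub : ∀ c : Fin n → ℕ, IsMVCColoring G c → (Set.range c).ncard ≤ m + 2 := by
    intro c hc
    obtain ⟨p, hp, hmono⟩ := hc ⟨0, h0n⟩ ⟨n - 1, hn1⟩
    have hne : (⟨0, h0n⟩ : Fin n) ≠ ⟨n - 1, hn1⟩ := by simp [Fin.ext_iff]; omega
    have hint : ∀ x : Fin n, m ≤ x.val → x.val < n - 1 →
        x ∈ p.support.tail.dropLast := by
      intro x hx1 hx2
      rw [mem_interior_iff p hp hne]
      refine ⟨?_, ?_, ?_⟩
      · have := mem_support_of_cross (t := x.val) (by omega) x.isLt p (by simp) (by simp; omega)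
        simpa using this
      · simp [Fin.ext_iff]; omega
      · simp [Fin.ext_iff]; omega
    have hconst : ∀ x : Fin n, m ≤ x.val → x.val < n - 1 → c x = c ⟨m, hmltn⟩ := by
      intro x hx1 hx2
      exact hmono x (hint x hx1 hx2) _ (hint ⟨m, hmltn⟩ (by simp) (by simp; omega))
    -- the exceptional set
    set f : Fin (m + 1) → Fin n :=
      fun i => if h : i.val < m then ⟨i.val, by omega⟩ else ⟨n - 1, hn1⟩ with hf
    have hsub : Set.range c ⊆ (c '' Set.range f) ∪ {c ⟨m, hmltn⟩} := by
      rintro y ⟨x, rfl⟩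
      by_cases hx : x.val < m ∨ x.val = n - 1
      · left
        refine ⟨x, ?_, rfl⟩
        rcases hx with hx | hx
        · exact ⟨⟨x.val, by omega⟩, by simp [hf, hx, Fin.ext_iff]⟩
        · exact ⟨⟨m, by omega⟩, by simp [hf, Fin.ext_iff, hx.symm]⟩
      · right
        push_neg at hx
        have : c x = c ⟨m, hmltn⟩ := hconst x (by omega) (by omega)
        simp [this]
    calc (Set.range c).ncard ≤ ((c '' Set.range f) ∪ {c ⟨m, hmltn⟩}).ncard :=
          Set.ncard_le_ncard hsub (Set.toFinite _)
      _ ≤ (c '' Set.range f).ncard + ({c ⟨m, hmltn⟩} : Set ℕ).ncard :=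
          Set.ncard_union_le _ _
      _ ≤ (Set.range f).ncard + 1 := by
          rw [Set.ncard_singleton]
          exact Nat.add_le_add_right (Set.ncard_image_le (Set.toFinite _)) _
      _ ≤ (m + 1) + 1 := by
          have : (Set.range f).ncard ≤ Fintype.card (Fin (m + 1)) := by
            rw [← Fintype.coe_image_univ, Set.ncard_coe_finset]
            calc (Finset.univ.image f).card ≤ Finset.univ.card := Finset.card_image_le
              _ = Fintype.card (Fin (m + 1)) := rfl
          simpa using this
      _ = m + 2 := by omega
  -- lower bound: an explicit MVC coloring with m + 2 colors
  set c₀ : Fin n → ℕ := mvcColoring n d with hc₀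
  have hc₀eval : ∀ x : Fin n, c₀ x = if x.val < m then x.val else if x.val = n - 1 then m + 1 else m := by
    intro x; rfl
  have hc₀range : Set.range c₀ = ↑(Finset.range (m + 2)) := by
    ext k
    simp only [Set.mem_range, Finset.coe_range, Set.mem_Iio]
    constructor
    · rintro ⟨x, rfl⟩
      rw [hc₀eval]
      split_ifs <;> omega
    · intro hk
      by_cases h1 : k < m
      · refine ⟨⟨k, by omega⟩, ?_⟩
        rw [hc₀eval]
        simp only [Fin.val_mk]
        simp only [if_pos h1]
      · by_cases h2 : k = m
        · refine ⟨⟨m, hmltn⟩, ?_⟩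
          rw [hc₀eval]
          simp only [Fin.val_mk]
          split_ifs <;> omega
        · refine ⟨⟨n - 1, hn1⟩, ?_⟩
          rw [hc₀eval]
          simp only [Fin.val_mk]
          split_ifs <;> omega
  have hc₀card : (Set.range c₀).ncard = m + 2 := by
    rw [hc₀range, Set.ncard_coe_finset, Finset.card_range]
  have hc₀MVC : IsMVCColoring G c₀ := by
    have H : ∀ u v : Fin n, u.val ≤ v.val → ∃ p : G.Walk u v, p.IsPath ∧
        ∀ x ∈ p.support.tail.dropLast, ∀ y ∈ p.support.tail.dropLast, c₀ x = c₀ y := by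
      intro u v huv
      by_cases hueq : u = v
      · subst hueq
        exact ⟨SimpleGraph.Walk.nil, by simp, by simp⟩
      have huvval : u.val < v.val := by
        rcases lt_or_eq_of_le huv with h | h
        · exact h
        · exact absurd (Fin.ext h) hueq
      by_cases hvv : v.val ≤ m
      · refine ⟨SimpleGraph.Walk.cons (by rw [adj_iff]; exact ⟨hueq, Or.inl ⟨by omega, hvv⟩⟩)
          SimpleGraph.Walk.nil, ?_, ?_⟩
        · rw [SimpleGraph.Walk.isPath_def]
          simp [hueq]
        · simp
      · push_neg at hvv
        by_cases hum : m ≤ u.val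
        · set p : G.Walk u v := (pathWalk n d u.val (v.val - u.val) hum (show u.val + (v.val - u.val) < n by omega)).copy
            (Fin.ext rfl) (Fin.ext (by simp only [Fin.val_mk]; omega)) with hpdef
          have hpath : p.IsPath := by
            rw [hpdef, SimpleGraph.Walk.isPath_copy]
            exact pathWalk_isPath n d _ _ _ _
          refine ⟨p, hpath, ?_⟩
          have hval : ∀ x : Fin n, x ∈ p.support.tail.dropLast → c₀ x = m := by
            intro x hx
            rw [mem_interior_iff p hpath hueq] at hx
            obtain ⟨hxs, hxu, hxv⟩ := hx
            rw [hpdef, SimpleGraph.Walk.support_copy] at hxs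
            have := mem_support_val hxs
            have hx1 : x.val ≠ u.val := fun h => hxu (Fin.ext h)
            have hx2 : x.val ≠ v.val := fun h => hxv (Fin.ext h)
            have hvn : v.val ≤ n - 1 := by omega
            rw [hc₀eval]
            rw [if_neg (by omega), if_neg (by omega)]
          intro x hx y hy
          rw [hval x hx, hval y hy]
        · push_neg at hum
          set q : G.Walk ⟨m, hmltn⟩ v := (pathWalk n d m (v.val - m) le_rfl (show m + (v.val - m) < n by omega)).copy rfl
            (Fin.ext (by simp only [Fin.val_mk]; omega)) with hqdef
          have humem : u ∉ q.support := by
            intro hx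
            rw [hqdef, SimpleGraph.Walk.support_copy] at hx
            have := mem_support_val hx
            omega
          set p := SimpleGraph.Walk.cons
            (show G.Adj u ⟨m, hmltn⟩ by
              rw [adj_iff]
              exact ⟨fun h => absurd (congrArg Fin.val h) (by simp only [Fin.val_mk]; omega), Or.inl ⟨by omega, le_rfl⟩⟩) q with hpdef
          have hpath : p.IsPath := by
            rw [hpdef]
            refine SimpleGraph.Walk.IsPath.cons ?_ humem
            rw [hqdef, SimpleGraph.Walk.isPath_copy]
            exact pathWalk_isPath n d _ _ _ _
          refine ⟨p, hpath, ?_⟩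
          have hval : ∀ x : Fin n, x ∈ p.support.tail.dropLast → c₀ x = m := by
            intro x hx
            rw [mem_interior_iff p hpath hueq] at hx
            obtain ⟨hxs, hxu, hxv⟩ := hx
            rw [hpdef, SimpleGraph.Walk.support_cons, List.mem_cons] at hxs
            rcases hxs with rfl | hxs
            · exact absurd rfl hxu
            rw [hqdef, SimpleGraph.Walk.support_copy] at hxs
            have := mem_support_val hxs
            have hx2 : x.val ≠ v.val := fun h => hxv (Fin.ext h)
            have hvn : v.val ≤ n - 1 := by omega
            rw [hc₀eval]
            rw [if_neg (by omega), if_neg (by omega)]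
          intro x hx y hy
          rw [hval x hx, hval y hy]
    intro u v
    by_cases huv : u = v
    · subst huv
      exact ⟨SimpleGraph.Walk.nil, by simp, by simp⟩
    rcases le_total u.val v.val with h | h
    · exact H u v h
    · obtain ⟨p, hp, hmono⟩ := H v u h
      have hvu : v ≠ u := Ne.symm huv
      refine ⟨p.reverse, hp.reverse, ?_⟩
      intro x hx y hy
      rw [mem_interior_iff p.reverse hp.reverse huv] at hx hy
      rw [SimpleGraph.Walk.support_reverse, List.mem_reverse] at hx hy
      have hx' : x ∈ p.support.tail.dropLast := by
        rw [mem_interior_iff p hp hvu]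
        exact ⟨hx.1, hx.2.2, hx.2.1⟩
      have hy' : y ∈ p.support.tail.dropLast := by
        rw [mem_interior_iff p hp hvu]
        exact ⟨hy.1, hy.2.2, hy.2.1⟩
      exact hmono x hx' y hy'
  -- conclude
  have hmem : m + 2 ∈ {k : ℕ | ∃ c : Fin n → ℕ, IsMVCColoring G c ∧ (Set.range c).ncard = k} :=
    ⟨c₀, hc₀MVC, hc₀card⟩
  have hbdd : ∀ k ∈ {k : ℕ | ∃ c : Fin n → ℕ, IsMVCColoring G c ∧ (Set.range c).ncard = k},
      k ≤ m + 2 := by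
    rintro k ⟨c, hc, rfl⟩
    exact hub c hc
  rw [mvc]
  exact le_antisymm (csSup_le ⟨m + 2, hmem⟩ hbdd) (le_csSup ⟨m + 2, hbdd⟩ hmem)
end

section
/- Let C_n be the cycle on n vertices. Then mvc(C_n) = n for n ≤ 5, and mvc(C_n) = 3 for n ≥ 6. -/
open SimpleGraph

namespace MVCAux

open scoped Fin.CommRing

variable {n : ℕ} [NeZero n]

lemma val_one (hn : 3 ≤ n) : ((1 : Fin n) : ℕ) = 1 := by
  rw [Fin.val_one' n]; exact Nat.mod_eq_of_lt (by omega)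

lemma adj_iff (hn : 3 ≤ n) {u v : Fin n} :
    (cycleGraph n).Adj u v ↔ v = u + 1 ∨ v = u - 1 := by
  rw [cycleGraph_adj']
  have h1 : ((1 : Fin n) : ℕ) = 1 := val_one hn
  have e1 : ∀ x : Fin n, (x : ℕ) = 1 ↔ x = 1 := by
    intro x; rw [Fin.ext_iff, h1]
  rw [e1, e1, sub_eq_iff_eq_add, sub_eq_iff_eq_add]
  constructor
  · rintro (h | h)
    · right; rw [h]; ring
    · left; rw [h]; ring
  · rintro (h | h)
    · right; rw [h]; ring
    · left; rw [h]; ring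

lemma adj_succ (hn : 3 ≤ n) (u : Fin n) : (cycleGraph n).Adj u (u + 1) :=
  (adj_iff hn).2 (Or.inl rfl)

/-- The walk going upward from `u` with `k` steps. -/
def upWalk (hn : 3 ≤ n) (u : Fin n) : (k : ℕ) → (cycleGraph n).Walk u (u + (k : Fin n))
  | 0 => Walk.nil.copy rfl (by simp)
  | (k+1) => ((upWalk hn u k).concat (adj_succ hn _)).copy rfl (by push_cast; ring)

lemma upWalk_support (hn : 3 ≤ n) (u : Fin n) (k : ℕ) :
    (upWalk hn u k).support = (List.range (k+1)).map (fun i : ℕ => u + (i : Fin n)) := by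
  induction k with
  | zero => simp [upWalk, List.range_succ]
  | succ k ih =>
      have hcast : u + ((k+1 : ℕ) : Fin n) = u + (k : Fin n) + 1 := by push_cast; ring
      rw [upWalk, Walk.support_copy, Walk.support_concat, ih, List.range_succ (n := k+1),
        List.map_append]
      simp [hcast]
      ring

lemma upWalk_isPath (hn : 3 ≤ n) (u : Fin n) {k : ℕ} (hk : k < n) :
    (upWalk hn u k).IsPath := by
  rw [Walk.isPath_def, upWalk_support]
  refine List.Nodup.map_on ?_ List.nodup_range
  intro i hi j hj hij
  rw [List.mem_range] at hi hj
  have : (i : Fin n) = (j : Fin n) := by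
    have := add_left_cancel hij
    exact this
  have := congrArg Fin.val this
  rwa [Fin.val_natCast, Fin.val_natCast, Nat.mod_eq_of_lt (by omega), Nat.mod_eq_of_lt (by omega)] at this


lemma list_tail_dropLast {α : Type*} (l : List α) : l.tail.dropLast = l.dropLast.tail := by
  match l with
  | [] => rfl
  | [a] => rfl
  | a :: b :: t => simp

lemma tail_dropLast_map_range {α : Type*} (f : ℕ → α) (k : ℕ) :
    ((List.range (k+1)).map f).tail.dropLast = (List.range (k-1)).map (fun i => f (i+1)) := by
  cases k with
  | zero => simp [List.range_succ]
  | succ k =>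
      rw [List.range_succ_eq_map, List.map_cons, List.tail_cons, List.map_map, List.range_succ]
      simp only [List.map_append, List.map_cons, List.map_nil, List.dropLast_concat,
        Nat.add_sub_cancel]
      rfl

lemma mem_upWalk_interior (hn : 3 ≤ n) (u : Fin n) (k : ℕ) (x : Fin n) :
    x ∈ (upWalk hn u k).support.tail.dropLast ↔
      ∃ i : ℕ, 1 ≤ i ∧ i < k ∧ x = u + (i : Fin n) := by
  rw [upWalk_support, tail_dropLast_map_range]
  simp only [List.mem_map, List.mem_range]
  constructor
  · rintro ⟨i, hi, rfl⟩
    exact ⟨i+1, by omega, by omega, rfl⟩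
  · rintro ⟨i, h1, h2, rfl⟩
    exact ⟨i-1, by omega, by rw [show i-1+1 = i by omega]⟩

lemma mem_reverse_interior {V : Type*} {G : SimpleGraph V} {u v : V} (p : G.Walk u v) (x : V) :
    x ∈ p.reverse.support.tail.dropLast ↔ x ∈ p.support.tail.dropLast := by
  have h2 : ∀ m : List V, m.reverse.dropLast = m.tail.reverse := by
    intro m
    have hm := List.tail_reverse (l := m.reverse)
    rw [List.reverse_reverse] at hm
    rw [hm, List.reverse_reverse]
  have h : ∀ l : List V, l.reverse.tail.dropLast = (l.tail.dropLast).reverse := by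
    intro l
    rw [List.tail_reverse, h2, list_tail_dropLast]
  rw [Walk.support_reverse, h, List.mem_reverse]


lemma mem_map_range_interior {α : Type*} (f : ℕ → α) (k : ℕ) (x : α) :
    x ∈ ((List.range (k+1)).map f).tail.dropLast ↔ ∃ i, 1 ≤ i ∧ i < k ∧ x = f i := by
  rw [tail_dropLast_map_range]
  simp only [List.mem_map, List.mem_range]
  constructor
  · rintro ⟨i, hi, rfl⟩
    exact ⟨i+1, by omega, by omega, rfl⟩
  · rintro ⟨i, h1, h2, rfl⟩
    exact ⟨i-1, by omega, by rw [show i-1+1 = i by omega]⟩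

lemma path_support_classify (hn : 3 ≤ n) {u v : Fin n} (p : (cycleGraph n).Walk u v)
    (hp : p.IsPath) :
    p.support = (List.range (p.length+1)).map (fun i : ℕ => u + (i : Fin n)) ∨
    p.support = (List.range (p.length+1)).map (fun i : ℕ => u - (i : Fin n)) := by
  induction p with
  | nil => left; simp [List.range_succ]
  | @cons u w v h q ih =>
    rw [Walk.cons_isPath_iff] at hp
    obtain ⟨hq, hu⟩ := hp
    have ihq := ih hq
    have hup : ∀ s : Fin n, q.support = (List.range (q.length+1)).map (fun i : ℕ => w + s * (i : Fin n)) →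
        w = u + s → ((Walk.cons h q).support =
          (List.range (q.length+1+1)).map (fun i : ℕ => u + s * (i : Fin n))) := by
      intro s hs hw
      rw [Walk.support_cons, hs, List.range_succ_eq_map (n := q.length+1), List.map_cons,
        List.map_map]
      congr 1
      · simp
      · apply List.map_congr_left
        intro i _
        show w + s * (i : Fin n) = u + s * ((i+1 : ℕ) : Fin n)
        rw [hw]
        push_cast
        ring
    rcases (adj_iff hn).1 h with hw | hw
    · -- w = u + 1
      rcases ihq with hs | hs
      · left
        rw [Walk.length_cons]
        have := hup 1 (by simpa using hs) (by rw [hw])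
        simpa using this
      · -- q goes down; only possible if q has length 0
        rcases Nat.eq_zero_or_pos q.length with h0 | h0
        · left
          have hs' : q.support = (List.range (q.length+1)).map
              (fun i : ℕ => w + 1 * (i : Fin n)) := by
            rw [h0] at hs ⊢
            simpa [List.range_succ] using hs
          have := hup 1 hs' (by rw [hw])
          rw [Walk.length_cons]
          simpa using this
        · exfalso
          apply hu
          rw [hs]
          refine List.mem_map.2 ⟨1, List.mem_range.2 (by omega), ?_⟩
          rw [hw]
          push_cast
          ring
    · -- w = u - 1
      rcases ihq with hs | hs
      · rcases Nat.eq_zero_or_pos q.length with h0 | h0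
        · right
          have hs' : q.support = (List.range (q.length+1)).map
              (fun i : ℕ => w + (-1) * (i : Fin n)) := by
            rw [h0] at hs ⊢
            simpa [List.range_succ] using hs
          have := hup (-1) hs' (by rw [hw]; ring)
          rw [Walk.length_cons]
          have h2 : ∀ i : ℕ, u + (-1) * (i : Fin n) = u - (i : Fin n) := fun i => by ring
          simpa [h2, sub_eq_add_neg] using this
        · exfalso
          apply hu
          rw [hs]
          refine List.mem_map.2 ⟨1, List.mem_range.2 (by omega), ?_⟩
          rw [hw]
          push_cast
          ring
      · right
        rw [Walk.length_cons]
        have := hup (-1) (by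
            rw [hs]; apply List.map_congr_left; intro i _; ring) (by rw [hw]; ring)
        rw [this]
        apply List.map_congr_left; intro i _; ring


lemma interior_classify (hn : 3 ≤ n) {c : Fin n → ℕ}
    (hc : IsMVCColoring (cycleGraph n) c) (u v : Fin n) :
    (∀ i j : ℕ, 1 ≤ i → i < (v-u).val → 1 ≤ j → j < (v-u).val →
      c (u + (i : Fin n)) = c (u + (j : Fin n))) ∨
    (∀ i j : ℕ, 1 ≤ i → i < (u-v).val → 1 ≤ j → j < (u-v).val →
      c (v + (i : Fin n)) = c (v + (j : Fin n))) := by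
  obtain ⟨p, hp, hmono⟩ := hc u v
  have hlen : p.length + 1 ≤ n := by
    have h1 := ((Walk.isPath_def p).1 hp).length_le_card
    rwa [Walk.length_support, Fintype.card_fin] at h1
  have hLval : ((p.length : Fin n)).val = p.length := by
    rw [Fin.val_natCast]; exact Nat.mod_eq_of_lt (by omega)
  have hlast : p.support.getLast? = some v := by
    rw [List.getLast?_eq_getLast p.support_ne_nil, Walk.getLast_support]
  rcases path_support_classify hn p hp with hs | hs
  · left
    have hv : v = u + (p.length : Fin n) := by
      rw [hs, List.range_succ, List.map_append] at hlast
      simpa using hlast.symm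
    have hvu : v - u = (p.length : Fin n) := by linear_combination hv
    have hd : (v - u).val = p.length := by rw [hvu, hLval]
    rw [hd]
    intro i j h1 h2 h3 h4
    apply hmono <;> rw [hs]
    · exact (mem_map_range_interior _ _ _).2 ⟨i, h1, h2, rfl⟩
    · exact (mem_map_range_interior _ _ _).2 ⟨j, h3, h4, rfl⟩
  · right
    have hv : v = u - (p.length : Fin n) := by
      rw [hs, List.range_succ, List.map_append] at hlast
      simpa using hlast.symm
    have huv : u - v = (p.length : Fin n) := by linear_combination -hv
    have hd : (u - v).val = p.length := by rw [huv, hLval]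
    rw [hd]
    have key : ∀ i : ℕ, i ≤ p.length →
        v + (i : Fin n) = u - ((p.length - i : ℕ) : Fin n) := by
      intro i hi
      rw [Nat.cast_sub hi]
      linear_combination hv
    intro i j h1 h2 h3 h4
    rw [key i (by omega), key j (by omega)]
    apply hmono <;> rw [hs]
    · exact (mem_map_range_interior _ _ _).2 ⟨p.length - i, by omega, by omega, rfl⟩
    · exact (mem_map_range_interior _ _ _).2 ⟨p.length - j, by omega, by omega, rfl⟩


lemma three_step (hn : 6 ≤ n) {c : Fin n → ℕ} (hc : IsMVCColoring (cycleGraph n) c)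
    (u : Fin n) :
    c (u + ((1:ℕ) : Fin n)) = c (u + ((2:ℕ) : Fin n)) ∨
    (∀ i j : ℕ, 1 ≤ i → i < n-3 → 1 ≤ j → j < n-3 →
      c (u + ((3:ℕ) : Fin n) + (i : Fin n)) = c (u + ((3:ℕ) : Fin n) + (j : Fin n))) := by
  have h := interior_classify (by omega) hc u (u + ((3:ℕ) : Fin n))
  have h3 : (u + ((3:ℕ) : Fin n)) - u = ((3:ℕ) : Fin n) := by ring
  have hval3 : (((3:ℕ) : Fin n)).val = 3 := by
    rw [Fin.val_natCast]; exact Nat.mod_eq_of_lt (by omega)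
  have h4 : u - (u + ((3:ℕ) : Fin n)) = ((n-3 : ℕ) : Fin n) := by
    rw [Nat.cast_sub (by omega : 3 ≤ n), Fin.natCast_self]; ring
  have hval4 : ((n-3 : ℕ) : Fin n).val = n - 3 := by
    rw [Fin.val_natCast]; exact Nat.mod_eq_of_lt (by omega)
  rw [h3, hval3, h4, hval4] at h
  rcases h with h | h
  · left; exact h 1 2 (by omega) (by omega) (by omega) (by omega)
  · right; exact h

lemma covers_three (hn : 6 ≤ n) {c : Fin n → ℕ} (hc : IsMVCColoring (cycleGraph n) c) :
    ∃ a b d : ℕ, ∀ v : Fin n, c v = a ∨ c v = b ∨ c v = d := by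
  by_cases hP : ∀ u : Fin n, c (u + ((1:ℕ) : Fin n)) = c (u + ((2:ℕ) : Fin n))
  · -- constant coloring
    have hstep : ∀ k : ℕ, c ((k : ℕ) : Fin n) = c (((k+1 : ℕ)) : Fin n) := by
      intro k
      have := hP (((k : ℕ) : Fin n) - ((1:ℕ) : Fin n))
      have e1 : ((k : ℕ) : Fin n) - ((1:ℕ) : Fin n) + ((1:ℕ) : Fin n) = ((k:ℕ) : Fin n) := by ring
      have e2 : ((k : ℕ) : Fin n) - ((1:ℕ) : Fin n) + ((2:ℕ) : Fin n) = ((k+1:ℕ) : Fin n) := by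
        push_cast; ring
      rw [e1, e2] at this
      exact this
    have hk : ∀ k : ℕ, c ((k : ℕ) : Fin n) = c ((0:ℕ) : Fin n) := by
      intro k; induction k with
      | zero => rfl
      | succ k ih => rw [← hstep k]; exact ih
    refine ⟨c ((0:ℕ) : Fin n), c ((0:ℕ) : Fin n), c ((0:ℕ) : Fin n), fun v => ?_⟩
    left
    have := hk v.val
    rwa [Fin.cast_val_eq_self] at this
  · push_neg at hP
    obtain ⟨u0, hu0⟩ := hP
    set vtx : ℕ → Fin n := fun k => u0 + (k : Fin n) with hvtx
    have vtx_add : ∀ (k i : ℕ), vtx k + (i : Fin n) = vtx (k + i) := by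
      intro k i; simp only [hvtx]; push_cast; ring
    have vtx_mod : ∀ k : ℕ, vtx (n + k) = vtx k := by
      intro k; simp only [hvtx]; rw [Nat.cast_add, Fin.natCast_self]; ring
    have hQ0 := (three_step hn hc u0).resolve_left hu0
    have hQ : ∀ i j : ℕ, 1 ≤ i → i < n-3 → 1 ≤ j → j < n-3 →
        c (vtx (3+i)) = c (vtx (3+j)) := by
      intro i j h1 h2 h3 h4
      have h := hQ0 i j h1 h2 h3 h4
      have e : ∀ i : ℕ, u0 + ((3:ℕ) : Fin n) + (i : Fin n) = vtx (3+i) := fun i => vtx_add 3 i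
      rwa [e i, e j] at h
    set a := c (vtx 4) with ha
    have haQ : ∀ i : ℕ, 1 ≤ i → i < n - 3 → c (vtx (3+i)) = a := by
      intro i h1 h2
      have := hQ i 1 h1 h2 (by omega) (by omega)
      rw [ha, show (4:ℕ) = 3+1 from rfl]
      exact this
    have hstep3 : ∀ k : ℕ, c (vtx (k+1)) = c (vtx (k+2)) ∨
        (∀ i j : ℕ, 1 ≤ i → i < n-3 → 1 ≤ j → j < n-3 →
          c (vtx (k+3+i)) = c (vtx (k+3+j))) := by
      intro k
      rcases three_step hn hc (vtx k) with h | h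
      · left; rwa [vtx_add, vtx_add] at h
      · right; intro i j h1 h2 h3 h4
        have := h i j h1 h2 h3 h4
        rwa [vtx_add, vtx_add, vtx_add] at this
    have hP1 : c (vtx 3) = a ∨ c (vtx 0) = c (vtx 1) := by
      rcases hstep3 2 with h | h
      · left
        norm_num at h
        rw [ha]
        exact h
      · right
        have := h (n-5) (n-4) (by omega) (by omega) (by omega) (by omega)
        rw [show (2+3+(n-5) : ℕ) = n+0 by omega, show (2+3+(n-4) : ℕ) = n+1 by omega,
          vtx_mod, vtx_mod] at this
        exact this
    have hP2 : c (vtx 0) = a ∨ c (vtx 2) = c (vtx 3) := by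
      rcases hstep3 (n-2) with h | h
      · left
        rw [show (n-2+1 : ℕ) = 3+(n-4) by omega, show (n-2+2 : ℕ) = n+0 by omega,
          vtx_mod] at h
        exact h.symm.trans (haQ (n-4) (by omega) (by omega))
      · right
        have := h 1 2 (by omega) (by omega) (by omega) (by omega)
        rw [show (n-2+3+1 : ℕ) = n+2 by omega, show (n-2+3+2 : ℕ) = n+3 by omega,
          vtx_mod, vtx_mod] at this
        exact this
    have cover : ∀ v : Fin n, c v = a ∨ c v = c (vtx 0) ∨ c v = c (vtx 1) ∨
        c v = c (vtx 2) ∨ c v = c (vtx 3) := by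
      intro v
      have hm : v = vtx (3 + (v - vtx 3).val) := by
        rw [← vtx_add, Fin.cast_val_eq_self]
        ring
      set m := (v - vtx 3).val with hmdef
      have hmn : m < n := (v - vtx 3).isLt
      by_cases h0 : m = 0
      · right; right; right; right; rw [hm, h0]
      by_cases hmid : m < n - 3
      · left; rw [hm]; exact haQ m (by omega) hmid
      have hsplit : m = n-3 ∨ m = n-2 ∨ m = n-1 := by omega
      rcases hsplit with h | h | h
      · right; left; rw [hm, h, show (3+(n-3) : ℕ) = n+0 by omega, vtx_mod]
      · right; right; left; rw [hm, h, show (3+(n-2) : ℕ) = n+1 by omega, vtx_mod]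
      · right; right; right; left; rw [hm, h, show (3+(n-1) : ℕ) = n+2 by omega, vtx_mod]
    rcases hP1 with h1 | h1 <;> rcases hP2 with h2 | h2
    · refine ⟨a, c (vtx 1), c (vtx 2), fun v => ?_⟩
      rcases cover v with h | h | h | h | h
      · left; exact h
      · left; rw [h, h2]
      · right; left; exact h
      · right; right; exact h
      · left; rw [h, h1]
    · refine ⟨a, c (vtx 0), c (vtx 1), fun v => ?_⟩
      rcases cover v with h | h | h | h | h
      · left; exact h
      · right; left; exact h
      · right; right; exact h
      · left; rw [h, h2, h1]
      · left; rw [h, h1]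
    · refine ⟨a, c (vtx 2), c (vtx 3), fun v => ?_⟩
      rcases cover v with h | h | h | h | h
      · left; exact h
      · left; rw [h, h2]
      · left; rw [h, ← h1, h2]
      · right; left; exact h
      · right; right; exact h
    · refine ⟨a, c (vtx 0), c (vtx 2), fun v => ?_⟩
      rcases cover v with h | h | h | h | h
      · left; exact h
      · right; left; exact h
      · right; left; rw [h, ← h1]
      · right; right; exact h
      · right; right; rw [h, ← h2]


lemma add_val_eq (u : Fin n) (d : ℕ) (h : u.val + d < n) :
    (u + (d : Fin n)).val = u.val + d := by
  rw [Fin.val_add, Fin.val_natCast, Nat.mod_eq_of_lt (by omega : d < n),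
    Nat.mod_eq_of_lt h]

lemma pair_symm {u v : Fin n} {c : Fin n → ℕ}
    (h : ∃ p : (cycleGraph n).Walk u v, p.IsPath ∧
      ∀ x ∈ p.support.tail.dropLast, ∀ y ∈ p.support.tail.dropLast, c x = c y) :
    ∃ p : (cycleGraph n).Walk v u, p.IsPath ∧
      ∀ x ∈ p.support.tail.dropLast, ∀ y ∈ p.support.tail.dropLast, c x = c y := by
  obtain ⟨p, hp, hm⟩ := h
  exact ⟨p.reverse, hp.reverse, fun x hx y hy =>
    hm x ((mem_reverse_interior p x).1 hx) y ((mem_reverse_interior p y).1 hy)⟩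

lemma small_mvc (hn : 3 ≤ n) (hn5 : n ≤ 5) (c : Fin n → ℕ) :
    IsMVCColoring (cycleGraph n) c := by
  intro u v
  by_cases huv : u = v
  · subst huv
    exact ⟨Walk.nil, Walk.IsPath.nil, by simp⟩
  have hd1 : 1 ≤ (v - u).val := by
    rcases Nat.eq_zero_or_pos (v - u).val with h | h
    · exfalso; apply huv; have : v - u = 0 := Fin.ext (by simpa using h); 
      have := this; exact (by linear_combination -this : u = v).symm ▸ rfl
    · exact h
  have hdn : (v - u).val < n := (v - u).isLt
  by_cases hd2 : (v - u).val ≤ 2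
  · refine ⟨(upWalk hn u ((v - u).val)).copy rfl (by rw [Fin.cast_val_eq_self]; ring), ?_, ?_⟩
    · rw [Walk.isPath_copy]
      exact upWalk_isPath hn u hdn
    · intro x hx y hy
      rw [Walk.support_copy] at hx hy
      rw [mem_upWalk_interior] at hx hy
      obtain ⟨i, hi1, hi2, rfl⟩ := hx
      obtain ⟨j, hj1, hj2, rfl⟩ := hy
      have : i = j := by omega
      rw [this]
  · -- long way around
    have he : v + ((n - (v - u).val : ℕ) : Fin n) = u := by
      rw [Nat.cast_sub (le_of_lt hdn), Fin.natCast_self, Fin.cast_val_eq_self]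
      ring
    refine ⟨((upWalk hn v (n - (v - u).val)).copy rfl he).reverse, ?_, ?_⟩
    · apply Walk.IsPath.reverse
      rw [Walk.isPath_copy]
      exact upWalk_isPath hn v (by omega)
    · intro x hx y hy
      rw [mem_reverse_interior, Walk.support_copy, mem_upWalk_interior] at hx hy
      obtain ⟨i, hi1, hi2, rfl⟩ := hx
      obtain ⟨j, hj1, hj2, rfl⟩ := hy
      have : i = j := by omega
      rw [this]

def c6 : Fin n → ℕ := fun v => if v.val = 0 then 1 else if v.val = 1 then 2 else 0

lemma c6_big {v : Fin n} (h : 2 ≤ v.val) : c6 v = 0 := by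
  rw [c6]
  rw [if_neg (by omega), if_neg (by omega)]

lemma c6_mvc (hn : 6 ≤ n) : IsMVCColoring (cycleGraph n) (c6 (n := n)) := by
  have hn' : 3 ≤ n := by omega
  have key : ∀ u v : Fin n, u.val ≤ v.val → ∃ p : (cycleGraph n).Walk u v, p.IsPath ∧
      ∀ x ∈ p.support.tail.dropLast, ∀ y ∈ p.support.tail.dropLast, c6 x = c6 y := by
    intro u v huv
    by_cases h0 : u = v
    · subst h0; exact ⟨Walk.nil, Walk.IsPath.nil, by simp⟩
    have hlt : u.val < v.val := lt_of_le_of_ne huv (fun h => h0 (Fin.ext h))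
    have hvn : v.val < n := v.isLt
    by_cases hu1 : 1 ≤ u.val
    · -- up walk
      have hend : u + ((v.val - u.val : ℕ) : Fin n) = v :=
        Fin.ext (by rw [add_val_eq u _ (by omega)]; omega)
      refine ⟨(upWalk hn' u (v.val - u.val)).copy rfl hend, ?_, ?_⟩
      · rw [Walk.isPath_copy]; exact upWalk_isPath hn' u (by omega)
      · intro x hx y hy
        rw [Walk.support_copy, mem_upWalk_interior] at hx hy
        obtain ⟨i, hi1, hi2, rfl⟩ := hx
        obtain ⟨j, hj1, hj2, rfl⟩ := hy
        rw [c6_big (by rw [add_val_eq u i (by omega)]; omega),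
          c6_big (by rw [add_val_eq u j (by omega)]; omega)]
    · -- u.val = 0
      have hu0 : u.val = 0 := by omega
      by_cases h1 : v.val = 1
      · -- adjacent
        have hadj : (cycleGraph n).Adj u v := by
          apply (adj_iff hn').2
          left
          apply Fin.ext
          have : (u + ((1:ℕ) : Fin n)).val = 1 := by rw [add_val_eq u 1 (by omega)]; omega
          rw [h1, ← this]
          norm_num
        exact ⟨Walk.cons hadj Walk.nil, by
          rw [Walk.cons_isPath_iff]
          exact ⟨Walk.IsPath.nil, by simpa using h0⟩,
          by simp⟩
      · -- v.val ≥ 2, go down from u=0, i.e. reverse of up walk from v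
        have hv2 : 2 ≤ v.val := by omega
        have hend : v + ((n - v.val : ℕ) : Fin n) = u := by
          apply Fin.ext
          rw [Fin.val_add, Fin.val_natCast, Nat.mod_eq_of_lt (by omega : n - v.val < n),
            show v.val + (n - v.val) = n by omega, Nat.mod_self, hu0]
        refine ⟨((upWalk hn' v (n - v.val)).copy rfl hend).reverse, ?_, ?_⟩
        · apply Walk.IsPath.reverse
          rw [Walk.isPath_copy]
          exact upWalk_isPath hn' v (by omega)
        · intro x hx y hy
          rw [mem_reverse_interior, Walk.support_copy, mem_upWalk_interior] at hx hy
          obtain ⟨i, hi1, hi2, rfl⟩ := hx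
          obtain ⟨j, hj1, hj2, rfl⟩ := hy
          rw [c6_big (by rw [add_val_eq v i (by omega)]; omega),
            c6_big (by rw [add_val_eq v j (by omega)]; omega)]
  intro u v
  rcases le_or_gt u.val v.val with h | h
  · exact key u v h
  · exact pair_symm (key v u (le_of_lt h))

lemma val_natCast_eq (k : ℕ) (h : k < n) : ((k : Fin n)).val = k := by
  rw [Fin.val_natCast]; exact Nat.mod_eq_of_lt h

lemma c6_range (hn : 6 ≤ n) : (Set.range (c6 (n := n))).ncard = 3 := by
  have h0 : c6 (((0:ℕ) : Fin n)) = 1 := by rw [c6]; rw [if_pos (val_natCast_eq 0 (by omega))]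
  have h1 : c6 (((1:ℕ) : Fin n)) = 2 := by
    rw [c6, if_neg (by rw [val_natCast_eq 1 (by omega)]; omega),
      if_pos (val_natCast_eq 1 (by omega))]
  have h2 : c6 (((2:ℕ) : Fin n)) = 0 := c6_big (by rw [val_natCast_eq 2 (by omega)])
  have hr : Set.range (c6 (n := n)) = {1, 2, 0} := by
    ext x
    constructor
    · rintro ⟨v, rfl⟩
      by_cases hv0 : v.val = 0
      · left; rw [c6, if_pos hv0]
      by_cases hv1 : v.val = 1
      · right; left; rw [c6, if_neg hv0, if_pos hv1]
      · right; right; exact c6_big (by omega)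
    · rintro (rfl | rfl | rfl)
      · exact ⟨_, h0⟩
      · exact ⟨_, h1⟩
      · exact ⟨_, h2⟩
  rw [hr, Set.ncard_insert_of_notMem (by norm_num),
    Set.ncard_insert_of_notMem (by norm_num), Set.ncard_singleton]

lemma ncard_range_le (c : Fin n → ℕ) : (Set.range c).ncard ≤ n := by
  classical
  have h : Set.range c = ↑(Finset.image c Finset.univ) := by
    ext x; simp
  rw [h, Set.ncard_coe_finset]
  exact le_trans Finset.card_image_le (by simp)

lemma range_val_ncard : (Set.range (Fin.val : Fin n → ℕ)).ncard = n := by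
  rw [← Nat.card_coe_set_eq, Nat.card_range_of_injective Fin.val_injective,
    Nat.card_eq_fintype_card, Fintype.card_fin]

lemma ncard_le_three {c : Fin n → ℕ} (a b d : ℕ) (h : ∀ v, c v = a ∨ c v = b ∨ c v = d) :
    (Set.range c).ncard ≤ 3 := by
  have hsub : Set.range c ⊆ {a, b, d} := by
    rintro x ⟨v, rfl⟩
    rcases h v with h' | h' | h' <;> simp [h']
  refine le_trans (Set.ncard_le_ncard hsub (Set.toFinite _)) ?_
  refine le_trans (Set.ncard_insert_le _ _) ?_
  have h2 := Set.ncard_insert_le b ({d} : Set ℕ)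
  rw [Set.ncard_singleton] at h2
  omega

lemma sSup_eq_of (S : Set ℕ) (m : ℕ) (hm : m ∈ S) (hub : ∀ k ∈ S, k ≤ m) : sSup S = m :=
  le_antisymm (csSup_le ⟨m, hm⟩ hub) (le_csSup ⟨m, hub⟩ hm)

end MVCAux

theorem stmt_6 (n : ℕ) (h3 : 3 ≤ n) :
    (n ≤ 5 → mvc (SimpleGraph.cycleGraph n) = n) ∧
    (6 ≤ n → mvc (SimpleGraph.cycleGraph n) = 3) := by
  haveI : NeZero n := ⟨by omega⟩
  constructor
  · intro h5
    apply MVCAux.sSup_eq_of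
    · exact ⟨Fin.val, MVCAux.small_mvc h3 h5 _, MVCAux.range_val_ncard⟩
    · rintro k ⟨c, hc, rfl⟩
      exact MVCAux.ncard_range_le c
  · intro h6
    apply MVCAux.sSup_eq_of
    · exact ⟨MVCAux.c6, MVCAux.c6_mvc h6, MVCAux.c6_range h6⟩
    · rintro k ⟨c, hc, rfl⟩
      obtain ⟨a, b, d, h⟩ := MVCAux.covers_three h6 hc
      exact MVCAux.ncard_le_three a b d h
end

section
/- Fix n and t with 1 ≤ t ≤ n − 5. Let G be the graph obtained from a complete graph on vertices v_1,…,v_{t+2} by deleting the edge v_{t+1}v_{t+2} and replacing it with a path v_{t+2} v_{t+3} … v_n v_{t+1} through n − t − 2 new vertices. Then mvc(G) ≤ t + 2. -/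
open SimpleGraph

/-- The graph on vertices `v_1,…,v_n` (0-indexed as `0,…,n-1`) obtained from a complete
graph on `v_1,…,v_{t+2}` (indices `0,…,t+1`) by deleting the edge `v_{t+1}v_{t+2}`
(indices `t, t+1`) and replacing it with the path
`v_{t+2} v_{t+3} … v_n v_{t+1}` (indices `t+1, t+2, …, n-1, t`). -/
def cliqueMinusEdgeWithPath (n t : ℕ) : SimpleGraph (Fin n) :=
  SimpleGraph.fromRel (fun i j =>
    (i.val < t + 2 ∧ j.val < t + 2 ∧ ¬(i.val = t ∧ j.val = t + 1) ∧
      ¬(i.val = t + 1 ∧ j.val = t)) ∨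
    (j.val = i.val + 1 ∧ t + 1 ≤ i.val) ∨ (i.val = n - 1 ∧ j.val = t))

section Aux
variable {V : Type*} {G : SimpleGraph V}

lemma walk_mem_support_dropLast {u v z : V} {p : G.Walk u v} (hz : z ∈ p.support)
    (h2 : z ≠ v) : z ∈ p.support.dropLast := by
  induction p with
  | nil => simp at hz; exact absurd hz h2
  | @cons a b c h q ih =>
    rw [Walk.support_cons] at hz ⊢
    rw [List.dropLast_cons_of_ne_nil q.support_ne_nil]
    rcases List.mem_cons.1 hz with h' | h'
    · exact h' ▸ List.mem_cons_self
    · exact List.mem_cons_of_mem _ (ih h' h2)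

lemma walk_mem_internal {u v : V} {p : G.Walk u v} {z : V} (hz : z ∈ p.support)
    (h1 : z ≠ u) (h2 : z ≠ v) : z ∈ p.support.tail.dropLast := by
  cases p with
  | nil => simp at hz; exact absurd hz h1
  | @cons a b h q =>
    rw [Walk.support_cons] at hz ⊢
    rcases List.mem_cons.1 hz with h' | h'
    · exact absurd h' h1
    · exact walk_mem_support_dropLast h' h2

lemma walk_cross (Q : V → Prop) {v : V} (hv : Q v) :
    ∀ {u : V} (p : G.Walk u v), ¬ Q u →
    ∃ x y, G.Adj x y ∧ x ∈ p.support ∧ ¬ Q x ∧ Q y := by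
  intro u p
  induction p with
  | nil => exact fun hu => absurd hv hu
  | @cons a b c h q ih =>
    intro hu
    by_cases hb : Q b
    · exact ⟨a, b, h, by simp, hu, hb⟩
    · obtain ⟨x, y, k1, k2, k3, k4⟩ := ih hv hb
      exact ⟨x, y, k1, by simp [k2], k3, k4⟩

lemma walk_two_nbrs {u v : V} {p : G.Walk u v} (hp : p.IsPath) {z : V} (hz : z ∈ p.support)
    (h1 : z ≠ u) (h2 : z ≠ v) :
    ∃ a b, a ≠ b ∧ G.Adj z a ∧ G.Adj z b ∧ a ∈ p.support ∧ b ∈ p.support := by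
  classical
  have hspec : (p.takeUntil z hz).append (p.dropUntil z hz) = p := p.take_spec hz
  set q := p.takeUntil z hz with hq
  set r := p.dropUntil z hz with hr
  obtain ⟨b0, hadjb, r', hre⟩ := Walk.not_nil_iff.1 (Walk.not_nil_of_ne h2 (p := r))
  obtain ⟨a0, hadja, q', hqe⟩ :=
    Walk.not_nil_iff.1 (Walk.not_nil_of_ne h1 (p := q.reverse))
  have ha0q : a0 ∈ q.support := by
    have : a0 ∈ q.reverse.support := by rw [hqe]; simp
    rwa [Walk.support_reverse, List.mem_reverse] at this
  have hb0r : b0 ∈ r.support.tail := by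
    rw [hre]; simp
  have hdisj : List.Disjoint q.support r.support.tail := by
    have hnd := hp.support_nodup
    rw [← hspec, Walk.support_append] at hnd
    exact fun a ha hb => (List.nodup_append.1 hnd).2.2 a ha a hb rfl
  refine ⟨a0, b0, ?_, hadja, hadjb, ?_, ?_⟩
  · intro he; exact hdisj ha0q (he ▸ hb0r)
  · exact p.support_takeUntil_subset hz ha0q
  · exact p.support_dropUntil_subset hz (List.mem_of_mem_tail hb0r)

end Aux

section Graph
variable {n t : ℕ}

lemma adj_struct (hn : t + 5 ≤ n) {x y : Fin n} (h : (cliqueMinusEdgeWithPath n t).Adj x y)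
    (hy1 : t + 2 ≤ y.val) :
    (y.val ≤ n - 2 ∧ (x.val + 1 = y.val ∨ x.val = y.val + 1)) ∨
      (y.val = n - 1 ∧ (x.val = n - 2 ∨ x.val = t)) := by
  have hx := x.isLt; have hy := y.isLt
  simp only [cliqueMinusEdgeWithPath, fromRel_adj, ne_eq, Fin.ext_iff] at h
  omega

lemma nbr_t (hn : t + 5 ≤ n) {x y : Fin n} (h : (cliqueMinusEdgeWithPath n t).Adj x y)
    (hy1 : y.val = t) : x.val < t ∨ x.val = n - 1 := by
  have hx := x.isLt; have hy := y.isLt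
  simp only [cliqueMinusEdgeWithPath, fromRel_adj, ne_eq, Fin.ext_iff] at h
  omega

lemma nbr_t1 (hn : t + 5 ≤ n) {x y : Fin n} (h : (cliqueMinusEdgeWithPath n t).Adj x y)
    (hy1 : y.val = t + 1) : x.val < t ∨ x.val = t + 2 := by
  have hx := x.isLt; have hy := y.isLt
  simp only [cliqueMinusEdgeWithPath, fromRel_adj, ne_eq, Fin.ext_iff] at h
  omega

variable (hn : t + 5 ≤ n) (ht : 1 ≤ t) {c : Fin n → ℕ}
  (hc : IsMVCColoring (cliqueMinusEdgeWithPath n t) c)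

include hn ht hc in
lemma constraintC1 {m : ℕ} (hm1 : t + 3 ≤ m) (hm2 : m ≤ n - 2) :
    (∀ w : Fin n, t + 1 ≤ w.val → w.val ≤ m - 1 → c w = c ⟨t + 1, by omega⟩) ∨
    (∀ w : Fin n, (w.val = t ∨ (m + 1 ≤ w.val ∧ w.val ≤ n - 1)) → c w = c ⟨t, by omega⟩) := by
  classical
  obtain ⟨p, hp, hmono⟩ := hc ⟨0, by omega⟩ ⟨m, by omega⟩
  set S := p.support.tail.dropLast with hS
  by_cases hL : ∀ w : Fin n, t + 1 ≤ w.val → w.val ≤ m - 1 → w ∈ S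
  · left
    intro w hw1 hw2
    exact hmono w (hL w hw1 hw2) _ (hL ⟨t + 1, by omega⟩ (by simp) (by simp; omega))
  · right
    push_neg at hL
    obtain ⟨w1, h11, h12, h1S⟩ := hL
    have hw1lt := w1.isLt
    have key : ∀ w2 : Fin n, (w2.val = t ∨ (m + 1 ≤ w2.val ∧ w2.val ≤ n - 1)) → w2 ∈ S := by
      intro w2 hw2
      have hw2lt := w2.isLt
      rcases hw2 with hw2 | ⟨hw2a, hw2b⟩
      · obtain ⟨x, y, hadj, hxsup, hxQ, hyQ⟩ :=
          walk_cross (fun z : Fin n => w1.val < z.val) (v := ⟨m, by omega⟩)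
            (by simp; all_goals omega) p (by simp; all_goals omega)
        have hxQ' : ¬ w1.val < x.val := hxQ
        have hyQ' : w1.val < y.val := hyQ
        have hy2 : t + 2 ≤ y.val := by omega
        have hst := adj_struct hn hadj hy2
        have hxval : x.val = w1.val ∨ x.val = t := by omega
        have hxu : x ≠ (⟨0, by omega⟩ : Fin n) := by
          intro he; have := congrArg Fin.val he; simp at this; omega
        have hxv : x ≠ (⟨m, by omega⟩ : Fin n) := by
          intro he; have := congrArg Fin.val he; simp at this; omega
        have hxS : x ∈ S := walk_mem_internal hxsup hxu hxv
        rcases hxval with h | h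
        · exact absurd ((Fin.ext h : x = w1) ▸ hxS) h1S
        · exact (Fin.ext (by omega) : x = w2) ▸ hxS
      · obtain ⟨x, y, hadj, hxsup, hxQ, hyQ⟩ :=
          walk_cross (fun z : Fin n => w1.val < z.val ∧ z.val < w2.val) (v := ⟨m, by omega⟩)
            (by simp; all_goals omega) p (by simp; all_goals omega)
        have hxQ' : ¬ (w1.val < x.val ∧ x.val < w2.val) := hxQ
        have hyQ' : w1.val < y.val ∧ y.val < w2.val := hyQ
        have hst := adj_struct hn hadj (by omega)
        have hxval : x.val = w1.val ∨ x.val = w2.val := by omega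
        have hxu : x ≠ (⟨0, by omega⟩ : Fin n) := by
          intro he; have := congrArg Fin.val he; simp at this; omega
        have hxv : x ≠ (⟨m, by omega⟩ : Fin n) := by
          intro he; have := congrArg Fin.val he; simp at this; omega
        have hxS : x ∈ S := walk_mem_internal hxsup hxu hxv
        rcases hxval with h | h
        · exact absurd ((Fin.ext h : x = w1) ▸ hxS) h1S
        · exact (Fin.ext h : x = w2) ▸ hxS
    intro w hw
    exact hmono w (key w hw) _ (key ⟨t, by omega⟩ (Or.inl (by simp)))

include hn ht hc in
lemma constraintC3 :
    (∃ i : Fin n, i.val < t ∧ c i = c ⟨t + 1, by omega⟩) ∨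
    (∀ w : Fin n, t + 3 ≤ w.val → w.val ≤ n - 1 → c w = c ⟨t + 3, by omega⟩) := by
  classical
  obtain ⟨p, hp, hmono⟩ := hc ⟨t, by omega⟩ ⟨t + 2, by omega⟩
  set S := p.support.tail.dropLast with hS
  have hSsub : ∀ x, x ∈ S → x ∈ p.support := fun x hx =>
    List.tail_subset _ (List.dropLast_subset _ hx)
  by_cases hB : ∀ w : Fin n, t + 3 ≤ w.val → w.val ≤ n - 1 → w ∈ S
  · right
    intro w hw1 hw2
    exact hmono w (hB w hw1 hw2) _ (hB ⟨t + 3, by omega⟩ (by simp) (by simp; omega))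
  · left
    push_neg at hB
    obtain ⟨w2, h21, h22, h2S⟩ := hB
    have hw2lt := w2.isLt
    obtain ⟨x, y, hadj, hxsup, hxQ, hyQ⟩ :=
      walk_cross (fun z : Fin n => t + 2 ≤ z.val ∧ z.val < w2.val) (v := ⟨t + 2, by omega⟩)
        (by simp; all_goals omega) p (by simp; all_goals omega)
    have hxQ' : ¬ (t + 2 ≤ x.val ∧ x.val < w2.val) := hxQ
    have hyQ' : t + 2 ≤ y.val ∧ y.val < w2.val := hyQ
    have hst := adj_struct hn hadj (by omega)
    have hxval : x.val = t + 1 ∨ x.val = w2.val := by omega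
    have hxu : x ≠ (⟨t, by omega⟩ : Fin n) := by
      intro he; have := congrArg Fin.val he; simp at this; omega
    have hxv : x ≠ (⟨t + 2, by omega⟩ : Fin n) := by
      intro he; have := congrArg Fin.val he; simp at this; omega
    have hxS : x ∈ S := walk_mem_internal hxsup hxu hxv
    have ht1S : (⟨t + 1, by omega⟩ : Fin n) ∈ S := by
      rcases hxval with h | h
      · exact (Fin.ext (by simp [h]) : x = ⟨t + 1, by omega⟩) ▸ hxS
      · exact absurd ((Fin.ext h : x = w2) ▸ hxS) h2S
    obtain ⟨a, b, hab, hadja, hadjb, hasup, hbsup⟩ :=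
      walk_two_nbrs hp (hSsub _ ht1S)
        (by intro he; have := congrArg Fin.val he; simp at this)
        (by intro he; have := congrArg Fin.val he; simp at this)
    have hna := nbr_t1 hn hadja.symm (by simp)
    have hnb := nbr_t1 hn hadjb.symm (by simp)
    have halt := a.isLt; have hblt := b.isLt
    have hone : (a.val < t ∧ a ∈ p.support) ∨ (b.val < t ∧ b ∈ p.support) := by
      rcases hna with h | h
      · exact Or.inl ⟨h, hasup⟩
      · rcases hnb with h' | h'
        · exact Or.inr ⟨h', hbsup⟩
        · exact absurd (Fin.ext (by omega) : a = b) hab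
    obtain ⟨i, hi, hisup⟩ : ∃ i : Fin n, i.val < t ∧ i ∈ p.support := by
      rcases hone with ⟨h, h'⟩ | ⟨h, h'⟩
      · exact ⟨a, h, h'⟩
      · exact ⟨b, h, h'⟩
    have hiS : i ∈ S := walk_mem_internal hisup
      (by intro he; have := congrArg Fin.val he; simp at this; omega)
      (by intro he; have := congrArg Fin.val he; simp at this; omega)
    exact ⟨i, hi, hmono i hiS _ ht1S⟩

include hn ht hc in
lemma constraintC4 :
    (∃ i : Fin n, i.val < t ∧ c i = c ⟨t, by omega⟩) ∨
    (∀ w : Fin n, t + 2 ≤ w.val → w.val ≤ n - 2 → c w = c ⟨t + 2, by omega⟩) := by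
  classical
  obtain ⟨p, hp, hmono⟩ := hc ⟨t + 1, by omega⟩ ⟨n - 1, by omega⟩
  set S := p.support.tail.dropLast with hS
  have hSsub : ∀ x, x ∈ S → x ∈ p.support := fun x hx =>
    List.tail_subset _ (List.dropLast_subset _ hx)
  by_cases hB : ∀ w : Fin n, t + 2 ≤ w.val → w.val ≤ n - 2 → w ∈ S
  · right
    intro w hw1 hw2
    exact hmono w (hB w hw1 hw2) _ (hB ⟨t + 2, by omega⟩ (by simp) (by simp; omega))
  · left
    push_neg at hB
    obtain ⟨w1, h11, h12, h1S⟩ := hB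
    have hw1lt := w1.isLt
    obtain ⟨x, y, hadj, hxsup, hxQ, hyQ⟩ :=
      walk_cross (fun z : Fin n => w1.val < z.val) (v := ⟨n - 1, by omega⟩)
        (by simp; all_goals omega) p (by simp; all_goals omega)
    have hxQ' : ¬ w1.val < x.val := hxQ
    have hyQ' : w1.val < y.val := hyQ
    have hst := adj_struct hn hadj (by omega)
    have hxval : x.val = w1.val ∨ x.val = t := by omega
    have hxu : x ≠ (⟨t + 1, by omega⟩ : Fin n) := by
      intro he; have := congrArg Fin.val he; simp at this; omega
    have hxv : x ≠ (⟨n - 1, by omega⟩ : Fin n) := by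
      intro he; have := congrArg Fin.val he; simp at this; omega
    have hxS : x ∈ S := walk_mem_internal hxsup hxu hxv
    have htS : (⟨t, by omega⟩ : Fin n) ∈ S := by
      rcases hxval with h | h
      · exact absurd ((Fin.ext h : x = w1) ▸ hxS) h1S
      · exact (Fin.ext (by simp [h]) : x = ⟨t, by omega⟩) ▸ hxS
    obtain ⟨a, b, hab, hadja, hadjb, hasup, hbsup⟩ :=
      walk_two_nbrs hp (hSsub _ htS)
        (by intro he; have := congrArg Fin.val he; simp at this)
        (by intro he; have := congrArg Fin.val he; simp at this; omega)
    have hna := nbr_t hn hadja.symm (by simp)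
    have hnb := nbr_t hn hadjb.symm (by simp)
    have halt := a.isLt; have hblt := b.isLt
    have hone : (a.val < t ∧ a ∈ p.support) ∨ (b.val < t ∧ b ∈ p.support) := by
      rcases hna with h | h
      · exact Or.inl ⟨h, hasup⟩
      · rcases hnb with h' | h'
        · exact Or.inr ⟨h', hbsup⟩
        · exact absurd (Fin.ext (by omega) : a = b) hab
    obtain ⟨i, hi, hisup⟩ : ∃ i : Fin n, i.val < t ∧ i ∈ p.support := by
      rcases hone with ⟨h, h'⟩ | ⟨h, h'⟩
      · exact ⟨a, h, h'⟩
      · exact ⟨b, h, h'⟩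
    have hiS : i ∈ S := walk_mem_internal hisup
      (by intro he; have := congrArg Fin.val he; simp at this; omega)
      (by intro he; have := congrArg Fin.val he; simp at this; omega)
    exact ⟨i, hi, hmono i hiS _ htS⟩

include hn in
lemma count_bound (c : Fin n → ℕ) (a b : Fin n)
    (h : ∀ v : Fin n, (∃ i : Fin n, i.val < t ∧ c i = c v) ∨ c v = c a ∨ c v = c b) :
    (Set.range c).ncard ≤ t + 2 := by
  classical
  have hn0 : 0 < n := by omega
  set F : Finset ℕ :=
    ((Finset.range t).image fun k => c ⟨k % n, Nat.mod_lt _ hn0⟩) ∪ {c a, c b} with hF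
  have hsub : Set.range c ⊆ ↑F := by
    rintro y ⟨v, rfl⟩
    rcases h v with ⟨i, hi, hci⟩ | hv | hv
    · refine Finset.mem_coe.2 (Finset.mem_union_left _ (Finset.mem_image.2
        ⟨i.val, Finset.mem_range.2 hi, ?_⟩))
      rw [← hci]
      congr 1
      exact Fin.ext (by simp [Nat.mod_eq_of_lt i.isLt])
    · exact Finset.mem_coe.2 (Finset.mem_union_right _ (by simp [hv]))
    · exact Finset.mem_coe.2 (Finset.mem_union_right _ (by simp [hv]))
  have h1 : (Set.range c).ncard ≤ F.card := by
    have := Set.ncard_le_ncard hsub (Finset.finite_toSet F)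
    rwa [Set.ncard_coe_finset] at this
  have h2 : F.card ≤ t + 2 := by
    refine le_trans (Finset.card_union_le _ _) ?_
    have e1 := Finset.card_image_le (s := Finset.range t)
      (f := fun k => c ⟨k % n, Nat.mod_lt _ hn0⟩)
    have e2 : ({c a, c b} : Finset ℕ).card ≤ 2 := by
      refine le_trans (Finset.card_insert_le _ _) ?_
      simp
    simp only [Finset.card_range] at e1
    omega
  exact le_trans h1 h2

end Graph

set_option maxHeartbeats 1000000 in
theorem stmt_7 (n t : ℕ) (h1 : 1 ≤ t) (h2 : t ≤ n - 5) :
    mvc (cliqueMinusEdgeWithPath n t) ≤ t + 2 := by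
  have hn : t + 5 ≤ n := by omega
  apply csSup_le'
  rintro k ⟨c, hc, rfl⟩
  classical
  have hvc : ∀ (v : Fin n) (k : ℕ) (hk : k < n), v.val = k → c v = c ⟨k, hk⟩ := by
    intro v k hk h; congr 1; exact Fin.ext (by simpa using h)
  have C3 := constraintC3 hn h1 hc
  have C4 := constraintC4 hn h1 hc
  by_cases hA : ∀ w : Fin n, t + 1 ≤ w.val → w.val ≤ n - 3 → c w = c ⟨t + 1, by omega⟩
  · rcases C3 with ⟨i, hi, hci⟩ | hB3
    · rcases C4 with ⟨j, hj, hcj⟩ | hB4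
      · -- A-A3-A4: a = n-2, b = n-1
        refine count_bound hn _ ⟨n - 2, by omega⟩ ⟨n - 1, by omega⟩ (fun v => ?_)
        have hv := v.isLt
        by_cases k1 : v.val < t
        · exact Or.inl ⟨v, k1, rfl⟩
        by_cases k2 : v.val = t
        · exact Or.inl ⟨j, hj, hcj.trans (hvc v t (by omega) k2).symm⟩
        by_cases k3 : v.val ≤ n - 3
        · exact Or.inl ⟨i, hi, hci.trans (hA v (by omega) k3).symm⟩
        by_cases k4 : v.val = n - 2
        · exact Or.inr (Or.inl (hvc v (n - 2) (by omega) k4))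
        · exact Or.inr (Or.inr (hvc v (n - 1) (by omega) (by omega)))
      · -- A-A3-B4: a = t, b = n-1
        refine count_bound hn _ ⟨t, by omega⟩ ⟨n - 1, by omega⟩ (fun v => ?_)
        have hv := v.isLt
        by_cases k1 : v.val < t
        · exact Or.inl ⟨v, k1, rfl⟩
        by_cases k2 : v.val = t
        · exact Or.inr (Or.inl (hvc v t (by omega) k2))
        by_cases k3 : v.val ≤ n - 3
        · exact Or.inl ⟨i, hi, hci.trans (hA v (by omega) k3).symm⟩
        by_cases k4 : v.val = n - 2
        · exact Or.inl ⟨i, hi, hci.trans ((hA ⟨t + 2, by omega⟩ (show t + 1 ≤ t + 2 by omega)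
            (show t + 2 ≤ n - 3 by omega)).symm.trans (hB4 v (by omega) (by omega)).symm)⟩
        · exact Or.inr (Or.inr (hvc v (n - 1) (by omega) (by omega)))
    · rcases C4 with ⟨j, hj, hcj⟩ | hB4
      · -- A-B3-A4: a = t+1, b = t+3
        refine count_bound hn _ ⟨t + 1, by omega⟩ ⟨t + 3, by omega⟩ (fun v => ?_)
        have hv := v.isLt
        by_cases k1 : v.val < t
        · exact Or.inl ⟨v, k1, rfl⟩
        by_cases k2 : v.val = t
        · exact Or.inl ⟨j, hj, hcj.trans (hvc v t (by omega) k2).symm⟩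
        by_cases k3 : v.val ≤ n - 3
        · exact Or.inr (Or.inl (hA v (by omega) k3))
        · exact Or.inr (Or.inr (hB3 v (by omega) (by omega)))
      · -- A-B3-B4: a = t, b = t+1
        have e2 : c (⟨t + 2, by omega⟩ : Fin n) = c ⟨t + 1, by omega⟩ :=
          hA _ (show t + 1 ≤ t + 2 by omega) (show t + 2 ≤ n - 3 by omega)
        refine count_bound hn _ ⟨t, by omega⟩ ⟨t + 1, by omega⟩ (fun v => ?_)
        have hv := v.isLt
        by_cases k1 : v.val < t
        · exact Or.inl ⟨v, k1, rfl⟩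
        by_cases k2 : v.val = t
        · exact Or.inr (Or.inl (hvc v t (by omega) k2))
        by_cases k3 : v.val ≤ n - 3
        · exact Or.inr (Or.inr (hA v (by omega) k3))
        by_cases k4 : v.val = n - 2
        · exact Or.inr (Or.inr ((hB4 v (by omega) (by omega)).trans e2))
        · have e3 : c (⟨t + 3, by omega⟩ : Fin n) = c ⟨t + 2, by omega⟩ :=
            hB4 _ (show t + 2 ≤ t + 3 by omega) (show t + 3 ≤ n - 2 by omega)
          exact Or.inr (Or.inr ((hB3 v (by omega) (by omega)).trans (e3.trans e2)))
  · -- Case B: c is not constant on [t+1, n-3]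
    push_neg at hA
    obtain ⟨w0f, hw01, hw02, hw0ne⟩ := hA
    have hex : ∃ k, t + 1 ≤ k ∧ k ≤ n - 3 ∧ ∃ hk : k < n, c ⟨k, hk⟩ ≠ c ⟨t + 1, by omega⟩ :=
      ⟨w0f.val, hw01, hw02, w0f.isLt, hw0ne⟩
    obtain ⟨w0, ⟨hm1, hm2, hklt, hkne⟩, hminN⟩ :
        ∃ w0, (t + 1 ≤ w0 ∧ w0 ≤ n - 3 ∧ ∃ hk : w0 < n, c ⟨w0, hk⟩ ≠ c ⟨t + 1, by omega⟩) ∧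
          ∀ k, k < w0 →
            ¬(t + 1 ≤ k ∧ k ≤ n - 3 ∧ ∃ hk : k < n, c ⟨k, hk⟩ ≠ c ⟨t + 1, by omega⟩) :=
      ⟨Nat.find hex, Nat.find_spec hex, fun k hk => Nat.find_min hex hk⟩
    have hw0t : t + 2 ≤ w0 := by
      rcases Nat.lt_or_ge w0 (t + 2) with h | h
      · exfalso
        have he : w0 = t + 1 := by omega
        exact hkne (congrArg c (Fin.ext he))
      · exact h
    have hmin : ∀ w : Fin n, t + 1 ≤ w.val → w.val ≤ w0 - 1 → c w = c ⟨t + 1, by omega⟩ := by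
      intro w k1 k2
      by_contra hne
      exact hminN w.val (by omega) ⟨k1, by omega, w.isLt, hne⟩
    have C1 := constraintC1 hn h1 hc (m := w0 + 1) (by omega) (by omega)
    have hR : ∀ w : Fin n, (w.val = t ∨ (w0 + 2 ≤ w.val ∧ w.val ≤ n - 1)) →
        c w = c ⟨t, by omega⟩ := by
      rcases C1 with hCL | hR
      · exfalso
        exact hkne (hCL ⟨w0, hklt⟩ (show t + 1 ≤ w0 by omega) (show w0 ≤ w0 + 1 - 1 by omega))
      · intro w hw
        apply hR w
        rcases hw with h | h
        · exact Or.inl h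
        · exact Or.inr (by omega)
    rcases C3 with ⟨i, hi, hci⟩ | hB3
    · rcases C4 with ⟨j, hj, hcj⟩ | hB4
      · -- B-A3-A4: a = w0, b = w0+1
        refine count_bound hn _ ⟨w0, by omega⟩ ⟨w0 + 1, by omega⟩ (fun v => ?_)
        have hv := v.isLt
        by_cases k1 : v.val < t
        · exact Or.inl ⟨v, k1, rfl⟩
        by_cases k2 : v.val = t
        · exact Or.inl ⟨j, hj, hcj.trans (hvc v t (by omega) k2).symm⟩
        by_cases k3 : v.val ≤ w0 - 1
        · exact Or.inl ⟨i, hi, hci.trans (hmin v (by omega) k3).symm⟩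
        by_cases k4 : v.val = w0
        · exact Or.inr (Or.inl (hvc v w0 (by omega) k4))
        by_cases k5 : v.val = w0 + 1
        · exact Or.inr (Or.inr (hvc v (w0 + 1) (by omega) k5))
        · exact Or.inl ⟨j, hj, hcj.trans (hR v (Or.inr ⟨by omega, by omega⟩)).symm⟩
      · -- B-A3-B4: a = t, b = t+2
        refine count_bound hn _ ⟨t, by omega⟩ ⟨t + 2, by omega⟩ (fun v => ?_)
        have hv := v.isLt
        by_cases k1 : v.val < t
        · exact Or.inl ⟨v, k1, rfl⟩
        by_cases k2 : v.val = t
        · exact Or.inr (Or.inl (hvc v t (by omega) k2))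
        by_cases k3 : v.val ≤ w0 - 1
        · exact Or.inl ⟨i, hi, hci.trans (hmin v (by omega) k3).symm⟩
        by_cases k4 : v.val ≤ w0 + 1
        · exact Or.inr (Or.inr (hB4 v (by omega) (by omega)))
        · exact Or.inr (Or.inl (hR v (Or.inr ⟨by omega, by omega⟩)))
    · have hg1 : c (⟨n - 1, by omega⟩ : Fin n) = c ⟨t + 3, by omega⟩ :=
        hB3 _ (show t + 3 ≤ n - 1 by omega) (show n - 1 ≤ n - 1 by omega)
      have hg2 : c (⟨n - 1, by omega⟩ : Fin n) = c ⟨t, by omega⟩ :=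
        hR _ (Or.inr ⟨show w0 + 2 ≤ n - 1 by omega, show n - 1 ≤ n - 1 by omega⟩)
      have hgt : c (⟨t + 3, by omega⟩ : Fin n) = c ⟨t, by omega⟩ := hg1.symm.trans hg2
      rcases C4 with ⟨j, hj, hcj⟩ | hB4
      · -- B-B3-A4: a = t+1, b = w0
        refine count_bound hn _ ⟨t + 1, by omega⟩ ⟨w0, by omega⟩ (fun v => ?_)
        have hv := v.isLt
        by_cases k1 : v.val < t
        · exact Or.inl ⟨v, k1, rfl⟩
        by_cases k2 : v.val = t
        · exact Or.inl ⟨j, hj, hcj.trans (hvc v t (by omega) k2).symm⟩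
        by_cases k3 : v.val ≤ w0 - 1
        · exact Or.inr (Or.inl (hmin v (by omega) k3))
        by_cases k4 : v.val = w0
        · exact Or.inr (Or.inr (hvc v w0 (by omega) k4))
        · exact Or.inl ⟨j, hj, hcj.trans (hgt.symm.trans (hB3 v (by omega) (by omega)).symm)⟩
      · -- B-B3-B4: a = t+2, b = t+1
        have h32 : c (⟨t + 3, by omega⟩ : Fin n) = c ⟨t + 2, by omega⟩ :=
          hB4 _ (show t + 2 ≤ t + 3 by omega) (show t + 3 ≤ n - 2 by omega)
        have ht2 : c (⟨t, by omega⟩ : Fin n) = c ⟨t + 2, by omega⟩ := hgt.symm.trans h32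
        refine count_bound hn _ ⟨t + 2, by omega⟩ ⟨t + 1, by omega⟩ (fun v => ?_)
        have hv := v.isLt
        by_cases k1 : v.val < t
        · exact Or.inl ⟨v, k1, rfl⟩
        by_cases k2 : v.val = t
        · exact Or.inr (Or.inl ((hvc v t (by omega) k2).trans ht2))
        by_cases k3 : v.val ≤ w0 - 1
        · exact Or.inr (Or.inr (hmin v (by omega) k3))
        by_cases k4 : v.val ≤ w0 + 1
        · exact Or.inr (Or.inl (hB4 v (by omega) (by omega)))
        · exact Or.inr (Or.inl ((hR v (Or.inr ⟨by omega, by omega⟩)).trans ht2))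
end

section
/- Let G be a connected graph with n vertices and exactly C(n−2,2) + 2 edges. Then mvc(G) ≥ n − 1, and this bound is sharp: the graph obtained from K_{n−2} by attaching a path of length 2 at one vertex has exactly C(n−2,2)+2 edges and mvc equal to n − 1. -/
open SimpleGraph

/-- The graph obtained from `K_{n-2}` (on vertices `0,…,n-3`) by attaching a path of
length 2 at vertex `n-3` (through vertices `n-3, n-2, n-1`). -/
def cliqueWithP2 (n : ℕ) : SimpleGraph (Fin n) :=
  SimpleGraph.fromRel (fun i j =>
    (i.val < n - 2 ∧ j.val < n - 2) ∨ (j.val = i.val + 1 ∧ n - 3 ≤ i.val))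

set_option linter.unnecessarySimpa false

open Finset

lemma ch2 (k : ℕ) : 2 * (k+1).choose 2 = (k+1) * k := by
  induction k with
  | zero => rfl
  | succ m ih =>
    have h : (m+2).choose 2 = (m+1).choose 1 + (m+1).choose 2 := rfl
    rw [h, Nat.mul_add, ih, Nat.choose_one_right]; ring

def Far {V : Type} (G : SimpleGraph V) (a b : V) : Prop :=
  a ≠ b ∧ ¬ G.Adj a b ∧ ∀ z, ¬(G.Adj a z ∧ G.Adj z b)

lemma Far.symm {V : Type} {G : SimpleGraph V} {a b : V} (h : Far G a b) : Far G b a :=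
  ⟨h.1.symm, fun h' => h.2.1 h'.symm, fun z hz => h.2.2 z ⟨hz.2.symm, hz.1.symm⟩⟩

lemma exists_adj_of_connected {V : Type} [Fintype V] {G : SimpleGraph V}
    (hc : G.Connected) (hcard : 1 < Fintype.card V) (v : V) : ∃ u, G.Adj v u := by
  obtain ⟨z, hz⟩ := Fintype.exists_ne_of_one_lt_card hcard v
  obtain ⟨w⟩ := hc.preconnected v z
  cases w with
  | nil => exact absurd rfl hz
  | cons h p => exact ⟨_, h⟩

lemma mem_nonedge {V : Type} {G : SimpleGraph V} {a b : V} :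
    s(a,b) ∈ Gᶜ.edgeSet ↔ a ≠ b ∧ ¬ G.Adj a b := by
  simp [compl_adj]

lemma injOn_sym2 {V : Type} (S : Finset V) (f : V → V)
    (hf : ∀ v ∈ S, f v ∉ S) : Set.InjOn (fun v => s(v, f v)) S := by
  intro a ha b hb hab
  simp only [Sym2.eq_iff] at hab
  rcases hab with ⟨h1, _⟩ | ⟨h1, _⟩
  · exact h1
  · exact absurd (h1 ▸ ha) (hf b hb)

lemma nonedge_count_ge {V : Type} [Fintype V] {G : SimpleGraph V} (U : Finset (Sym2 V))
    (hU : ∀ e ∈ U, e ∈ Gᶜ.edgeSet) : U.card ≤ Gᶜ.edgeSet.ncard := by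
  rw [← Set.ncard_coe_finset U]
  exact Set.ncard_le_ncard hU (Gᶜ.edgeSet.toFinite)

lemma no_disjoint_far {V : Type} [Fintype V] {G : SimpleGraph V}
    {x y x' y' : V} (h1 : Far G x y) (h2 : Far G x' y')
    (hd1 : x ≠ x') (hd2 : x ≠ y') (hd3 : y ≠ x') (hd4 : y ≠ y')
    (hcount : Gᶜ.edgeSet.ncard = 2 * Fintype.card V - 5)
    (hn : 4 ≤ Fintype.card V) : False := by
  classical
  obtain ⟨hxy, hnxy, hcxy⟩ := h1
  obtain ⟨hxy', hnxy', hcxy'⟩ := h2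
  set g1 : V → V := fun z => if G.Adj z x then y else x with hg1
  set g2 : V → V := fun z => if G.Adj z x' then y' else x' with hg2
  have hg1mem : ∀ z, g1 z = x ∨ g1 z = y := by
    intro z; by_cases h : G.Adj z x <;> simp [hg1, h]
  have hg2mem : ∀ z, g2 z = x' ∨ g2 z = y' := by
    intro z; by_cases h : G.Adj z x' <;> simp [hg2, h]
  have hg1ne : ∀ z, ¬ G.Adj z (g1 z) := by
    intro z
    by_cases h : G.Adj z x
    · simpa [hg1, h] using fun h2 => hcxy z ⟨h.symm, h2⟩
    · simpa [hg1, h] using h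
  have hg2ne : ∀ z, ¬ G.Adj z (g2 z) := by
    intro z
    by_cases h : G.Adj z x'
    · simpa [hg2, h] using fun h2 => hcxy' z ⟨h.symm, h2⟩
    · simpa [hg2, h] using h
  set S1 : Finset V := univ \ {x, y} with hS1
  set S2 : Finset V := univ \ {x, y, x', y'} with hS2
  set I1 := S1.image (fun v => s(v, g1 v)) with hI1
  set I2 := S2.image (fun v => s(v, g2 v)) with hI2
  set U := (I1 ∪ I2) ∪ {s(x,y), s(x',y')} with hUdef
  have hg1S : ∀ v ∈ S1, g1 v ∉ S1 := by
    intro v _; rcases hg1mem v with h | h <;> simp [hS1, h]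
  have hg2S : ∀ v ∈ S2, g2 v ∉ S2 := by
    intro v _; rcases hg2mem v with h | h <;> simp [hS2, h]
  have hcard1 : I1.card = Fintype.card V - 2 := by
    rw [hI1, Finset.card_image_of_injOn (injOn_sym2 S1 g1 hg1S), hS1,
      Finset.card_sdiff_of_subset (Finset.subset_univ _), Finset.card_univ]
    congr 1
    rw [Finset.card_insert_of_notMem (by simp [hxy]), Finset.card_singleton]
  have hcard2 : I2.card = Fintype.card V - 4 := by
    rw [hI2, Finset.card_image_of_injOn (injOn_sym2 S2 g2 hg2S), hS2,
      Finset.card_sdiff_of_subset (Finset.subset_univ _), Finset.card_univ]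
    congr 1
    rw [Finset.card_insert_of_notMem (by simp [hxy, hd1, hd2]),
      Finset.card_insert_of_notMem (by simp [hd3, hd4]),
      Finset.card_insert_of_notMem (by simp [hxy']), Finset.card_singleton]
  have hd12 : Disjoint I1 I2 := by
    rw [Finset.disjoint_left]
    rintro e he1 he2
    rw [hI1, Finset.mem_image] at he1
    rw [hI2, Finset.mem_image] at he2
    obtain ⟨v, hv, rfl⟩ := he1
    obtain ⟨v', hv', hee⟩ := he2
    rw [hS1, Finset.mem_sdiff] at hv
    rw [hS2, Finset.mem_sdiff] at hv'
    simp only [Finset.mem_insert, Finset.mem_singleton, not_or] at hv hv'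
    rw [Sym2.eq_iff] at hee
    rcases hee with ⟨h1, h2⟩ | ⟨h1, h2⟩
    · rcases hg1mem v with h | h <;> rcases hg2mem v' with h' | h' <;>
        simp_all
    · rcases hg1mem v with h | h <;> simp_all <;> tauto
  have hd3' : Disjoint (I1 ∪ I2) ({s(x,y), s(x',y')} : Finset (Sym2 V)) := by
    rw [Finset.disjoint_left]
    rintro e he1 he2
    simp only [Finset.mem_insert, Finset.mem_singleton] at he2
    rw [Finset.mem_union] at he1
    rcases he1 with he1 | he1
    · rw [hI1, Finset.mem_image] at he1
      obtain ⟨v, hv, rfl⟩ := he1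
      rw [hS1, Finset.mem_sdiff] at hv
      simp only [Finset.mem_insert, Finset.mem_singleton, not_or] at hv
      rcases hg1mem v with h | h <;> rcases he2 with he2 | he2 <;>
        rw [Sym2.eq_iff] at he2 <;> simp_all
    · rw [hI2, Finset.mem_image] at he1
      obtain ⟨v, hv, rfl⟩ := he1
      rw [hS2, Finset.mem_sdiff] at hv
      simp only [Finset.mem_insert, Finset.mem_singleton, not_or] at hv
      rcases hg2mem v with h | h <;> rcases he2 with he2 | he2 <;>
        rw [Sym2.eq_iff] at he2 <;> simp_all
  have hpaircard : ({s(x,y), s(x',y')} : Finset (Sym2 V)).card = 2 := by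
    rw [Finset.card_insert_of_notMem, Finset.card_singleton]
    simp only [Finset.mem_singleton, Sym2.eq_iff]
    push_neg
    constructor
    · intro h; exact absurd h hd1
    · intro h; exact absurd h hd2
  have hUcard : U.card = 2 * Fintype.card V - 4 := by
    rw [hUdef, Finset.card_union_of_disjoint hd3', Finset.card_union_of_disjoint hd12,
      hcard1, hcard2, hpaircard]
    omega
  have hUsub : ∀ e ∈ U, e ∈ Gᶜ.edgeSet := by
    intro e he
    rw [hUdef] at he
    simp only [Finset.mem_union, Finset.mem_insert, Finset.mem_singleton] at he
    rcases he with (he | he) | (rfl | rfl)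
    · rw [hI1, Finset.mem_image] at he
      obtain ⟨v, hv, rfl⟩ := he
      rw [mem_nonedge]
      refine ⟨?_, hg1ne v⟩
      rw [hS1, Finset.mem_sdiff] at hv
      simp only [Finset.mem_insert, Finset.mem_singleton, not_or] at hv
      rcases hg1mem v with h | h <;> rw [h] <;> tauto
    · rw [hI2, Finset.mem_image] at he
      obtain ⟨v, hv, rfl⟩ := he
      rw [mem_nonedge]
      refine ⟨?_, hg2ne v⟩
      rw [hS2, Finset.mem_sdiff] at hv
      simp only [Finset.mem_insert, Finset.mem_singleton, not_or] at hv
      rcases hg2mem v with h | h <;> rw [h] <;> tauto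
    · exact mem_nonedge.2 ⟨hxy, hnxy⟩
    · exact mem_nonedge.2 ⟨hxy', hnxy'⟩
  have := nonedge_count_ge U hUsub
  rw [hUcard, hcount] at this
  omega

lemma no_far_triangle {V : Type} [Fintype V] {G : SimpleGraph V}
    {x y z : V} (hxy : Far G x y) (hyz : Far G y z) (hxz : Far G x z)
    (hcount : Gᶜ.edgeSet.ncard = 2 * Fintype.card V - 5)
    (hn : 4 ≤ Fintype.card V) : False := by
  classical
  have hxyne := hxy.1; have hyzne := hyz.1; have hxzne := hxz.1
  set f : V → V := fun w => if G.Adj w x then y else x with hf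
  set g : V → V := fun w => if G.Adj w x then z else if G.Adj w y then z else y with hg
  have hfmem : ∀ w, f w = x ∨ f w = y := by
    intro w; by_cases h : G.Adj w x <;> simp [hf, h]
  have hgmem : ∀ w, g w = y ∨ g w = z := by
    intro w; by_cases h : G.Adj w x <;> by_cases h2 : G.Adj w y <;> simp [hg, h, h2]
  have hfg : ∀ w, f w ≠ g w := by
    intro w; by_cases h : G.Adj w x <;> by_cases h2 : G.Adj w y <;>
      simp [hf, hg, h, h2, hxyne, hyzne, hxzne, hxyne.symm]
  have hfne : ∀ w, ¬ G.Adj w (f w) := by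
    intro w
    by_cases h : G.Adj w x
    · simpa [hf, h] using fun h2 => hxy.2.2 w ⟨h.symm, h2⟩
    · simpa [hf, h] using h
  have hgne : ∀ w, ¬ G.Adj w (g w) := by
    intro w
    by_cases h : G.Adj w x
    · simpa [hg, h] using fun h2 => hxz.2.2 w ⟨h.symm, h2⟩
    · by_cases h2 : G.Adj w y
      · simpa [hg, h, h2] using fun h3 => hyz.2.2 w ⟨h2.symm, h3⟩
      · simpa [hg, h, h2] using h2
  set S : Finset V := univ \ {x, y, z} with hS
  set If := S.image (fun v => s(v, f v)) with hIf
  set Ig := S.image (fun v => s(v, g v)) with hIg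
  set Tri : Finset (Sym2 V) := {s(x,y), s(y,z), s(x,z)} with hTri
  set U := (If ∪ Ig) ∪ Tri with hU
  have hfS : ∀ v ∈ S, f v ∉ S := by
    intro v _; rcases hfmem v with h | h <;> simp [hS, h]
  have hgS : ∀ v ∈ S, g v ∉ S := by
    intro v _; rcases hgmem v with h | h <;> simp [hS, h]
  have hScard : S.card = Fintype.card V - 3 := by
    rw [hS, Finset.card_sdiff_of_subset (Finset.subset_univ _), Finset.card_univ]
    congr 1
    rw [Finset.card_insert_of_notMem (by simp [hxyne, hxzne]),
      Finset.card_insert_of_notMem (by simp [hyzne]), Finset.card_singleton]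
  have hcardf : If.card = Fintype.card V - 3 := by
    rw [hIf, Finset.card_image_of_injOn (injOn_sym2 S f hfS), hScard]
  have hcardg : Ig.card = Fintype.card V - 3 := by
    rw [hIg, Finset.card_image_of_injOn (injOn_sym2 S g hgS), hScard]
  have hdisfg : Disjoint If Ig := by
    rw [Finset.disjoint_left]
    rintro e he1 he2
    rw [hIf, Finset.mem_image] at he1
    rw [hIg, Finset.mem_image] at he2
    obtain ⟨v, hv, rfl⟩ := he1
    obtain ⟨v', hv', hee⟩ := he2
    rw [hS, Finset.mem_sdiff] at hv hv'
    simp only [Finset.mem_insert, Finset.mem_singleton, not_or] at hv hv'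
    rw [Sym2.eq_iff] at hee
    rcases hee with ⟨h1, h2⟩ | ⟨h1, h2⟩
    · exact hfg v (h1 ▸ h2.symm)
    · rcases hgmem v' with h | h
      · exact hv.2.2.1 ((h.symm.trans h2).symm)
      · exact hv.2.2.2 ((h.symm.trans h2).symm)
  have hdisTri : Disjoint (If ∪ Ig) Tri := by
    rw [Finset.disjoint_left]
    rintro e he1 he2
    rw [hTri] at he2
    simp only [Finset.mem_insert, Finset.mem_singleton] at he2
    rw [Finset.mem_union] at he1
    rcases he1 with he1 | he1 <;>
    · first
      | (rw [hIf, Finset.mem_image] at he1; obtain ⟨v, hv, rfl⟩ := he1)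
      | (rw [hIg, Finset.mem_image] at he1; obtain ⟨v, hv, rfl⟩ := he1)
      rw [hS, Finset.mem_sdiff] at hv
      simp only [Finset.mem_insert, Finset.mem_singleton, not_or] at hv
      rcases he2 with he2 | he2 | he2 <;> rw [Sym2.eq_iff] at he2 <;> tauto
  have t1 : s(y,z) ≠ s(x,z) := by
    rw [Ne, Sym2.eq_iff]
    rintro (⟨h, -⟩ | ⟨h, h'⟩)
    · exact hxyne h.symm
    · exact hyzne h
  have t2 : s(x,y) ≠ s(y,z) := by
    rw [Ne, Sym2.eq_iff]
    rintro (⟨h, -⟩ | ⟨h, -⟩)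
    · exact hxyne h
    · exact hxzne h
  have t3 : s(x,y) ≠ s(x,z) := by
    rw [Ne, Sym2.eq_iff]
    rintro (⟨-, h⟩ | ⟨h, -⟩)
    · exact hyzne h
    · exact hxzne h
  have hTricard : Tri.card = 3 := by
    rw [hTri, Finset.card_insert_of_notMem (by simp [t2, t3]),
      Finset.card_insert_of_notMem (by simp [t1]), Finset.card_singleton]
  have hUcard : U.card = 2 * Fintype.card V - 3 := by
    rw [hU, Finset.card_union_of_disjoint hdisTri, Finset.card_union_of_disjoint hdisfg,
      hcardf, hcardg, hTricard]
    omega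
  have hUsub : ∀ e ∈ U, e ∈ Gᶜ.edgeSet := by
    intro e he
    rw [hU] at he
    simp only [Finset.mem_union] at he
    rcases he with he | he
    · rcases he with he | he <;>
      · first
        | (rw [hIf, Finset.mem_image] at he; obtain ⟨v, hv, rfl⟩ := he;
           refine mem_nonedge.2 ⟨?_, hfne v⟩;
           rw [hS, Finset.mem_sdiff] at hv;
           simp only [Finset.mem_insert, Finset.mem_singleton, not_or] at hv;
           rcases hfmem v with h | h <;> rw [h] <;> tauto)
        | (rw [hIg, Finset.mem_image] at he; obtain ⟨v, hv, rfl⟩ := he;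
           refine mem_nonedge.2 ⟨?_, hgne v⟩;
           rw [hS, Finset.mem_sdiff] at hv;
           simp only [Finset.mem_insert, Finset.mem_singleton, not_or] at hv;
           rcases hgmem v with h | h <;> rw [h] <;> tauto)
    · rw [hTri] at he
      simp only [Finset.mem_insert, Finset.mem_singleton] at he
      rcases he with rfl | rfl | rfl
      · exact mem_nonedge.2 ⟨hxyne, hxy.2.1⟩
      · exact mem_nonedge.2 ⟨hyzne, hyz.2.1⟩
      · exact mem_nonedge.2 ⟨hxzne, hxz.2.1⟩
  have := nonedge_count_ge U hUsub
  rw [hUcard, hcount] at this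
  omega

lemma exists_w {V : Type} [Fintype V] {G : SimpleGraph V} (hc : G.Connected)
    (hn : 4 ≤ Fintype.card V)
    (hcount : Gᶜ.edgeSet.ncard = 2 * Fintype.card V - 5)
    (y : V) (b1 b2 : V) (hb1 : Far G y b1) (hb2 : Far G y b2) (hbne : b1 ≠ b2) :
    ∃ w, w ≠ y ∧ ¬ G.Adj y w ∧ ¬ Far G y w ∧ ∀ b, Far G y b → G.Adj w b := by
  classical
  by_contra hcon
  push_neg at hcon
  set A : Finset V := G.neighborFinset y with hA
  set F : Finset V := univ.filter (fun b => Far G y b) with hF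
  set R : Finset V := univ \ insert y (A ∪ F) with hR
  have hyA : y ∉ A := by simp [hA]
  have hyF : y ∉ F := by simp [hF]; intro h; exact absurd rfl h.1
  have hAF : Disjoint A F := by
    rw [Finset.disjoint_left]
    intro a haA haF
    rw [hF, Finset.mem_filter] at haF
    rw [hA, mem_neighborFinset] at haA
    exact haF.2.2.1 haA
  -- every w in R misses some element of F
  have hmiss : ∀ w ∈ R, ∃ b ∈ F, ¬ G.Adj w b := by
    intro w hw
    rw [hR, Finset.mem_sdiff, Finset.mem_insert, Finset.mem_union] at hw
    push_neg at hw
    obtain ⟨-, hwy, hwA, hwF⟩ := hw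
    have h1 : ¬ G.Adj y w := by rw [hA, mem_neighborFinset] at hwA; exact hwA
    have h2 : ¬ Far G y w := by
      rw [hF, Finset.mem_filter] at hwF; intro h; exact hwF ⟨Finset.mem_univ w, h⟩
    obtain ⟨b, hbF, hbw⟩ := hcon w hwy h1 h2
    exact ⟨b, by rw [hF, Finset.mem_filter]; exact ⟨Finset.mem_univ b, hbF⟩, hbw⟩
  -- choice of missed vertex
  set m : V → V := fun w => if h : ∃ b ∈ F, ¬ G.Adj w b then h.choose else w with hm
  have hmspec : ∀ w ∈ R, m w ∈ F ∧ ¬ G.Adj w (m w) := by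
    intro w hw
    obtain ⟨b, hb, hnb⟩ := hmiss w hw
    have hex : ∃ b ∈ F, ¬ G.Adj w b := ⟨b, hb, hnb⟩
    rw [hm]
    simp only [dif_pos hex]
    exact ⟨hex.choose_spec.1, hex.choose_spec.2⟩
  -- the nonedges
  set E1 := (univ \ insert y A).image (fun v => s(y, v)) with hE1
  set E2 := (A ×ˢ F).image (fun p => s(p.1, p.2)) with hE2
  set E3 := R.image (fun w => s(w, m w)) with hE3
  set U := (E1 ∪ E2) ∪ E3 with hU
  -- cards
  have hcard1 : E1.card = Fintype.card V - (A.card + 1) := by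
    rw [hE1, Finset.card_image_of_injOn, Finset.card_sdiff_of_subset (Finset.subset_univ _),
      Finset.card_univ, Finset.card_insert_of_notMem hyA]
    intro a ha b hb hab
    rw [Sym2.eq_iff] at hab
    rw [Finset.mem_coe, Finset.mem_sdiff, Finset.mem_insert] at ha hb
    push_neg at ha hb
    rcases hab with ⟨-, h⟩ | ⟨h, h'⟩
    · exact h
    · exact absurd h' ha.2.1
  have hcard2 : E2.card = A.card * F.card := by
    rw [hE2, Finset.card_image_of_injOn, Finset.card_product]
    rintro ⟨a, b⟩ hab ⟨a', b'⟩ hab' he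
    rw [Finset.mem_coe, Finset.mem_product] at hab hab'
    rw [Sym2.eq_iff] at he
    rcases he with ⟨h1, h2⟩ | ⟨h1, h2⟩
    · exact Prod.ext h1 h2
    · exact absurd hab'.1 (Finset.disjoint_right.1 hAF (h2 ▸ hab.2))
  have hcard3 : E3.card = R.card := by
    rw [hE3, Finset.card_image_of_injOn]
    intro a ha b hb hab
    rw [Finset.mem_coe] at ha hb
    rw [Sym2.eq_iff] at hab
    rcases hab with ⟨h, -⟩ | ⟨h1, h2⟩
    · exact h
    · -- a = m b ∈ F, but a ∈ R and R ∩ F = ∅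
      have := (hmspec b hb).1
      rw [← h1] at this
      rw [hR, Finset.mem_sdiff, Finset.mem_insert, Finset.mem_union] at ha
      push_neg at ha
      exact absurd this ha.2.2.2
  -- memberships: all are nonedges
  have hUsub : ∀ e ∈ U, e ∈ Gᶜ.edgeSet := by
    intro e he
    rw [hU] at he
    simp only [Finset.mem_union] at he
    rcases he with (he | he) | he
    · rw [hE1, Finset.mem_image] at he
      obtain ⟨v, hv, rfl⟩ := he
      rw [Finset.mem_sdiff, Finset.mem_insert] at hv
      push_neg at hv
      refine mem_nonedge.2 ⟨fun h => hv.2.1 h.symm, fun h => ?_⟩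
      exact hv.2.2 (by rw [hA, mem_neighborFinset]; exact h)
    · rw [hE2, Finset.mem_image] at he
      obtain ⟨⟨a, b⟩, hab, rfl⟩ := he
      rw [Finset.mem_product] at hab
      obtain ⟨haA, hbF⟩ := hab
      rw [hA, mem_neighborFinset] at haA
      rw [hF, Finset.mem_filter] at hbF
      exact mem_nonedge.2 ⟨fun h => hbF.2.2.1 (h ▸ haA), fun h => hbF.2.2.2 _ ⟨haA, h⟩⟩
    · rw [hE3, Finset.mem_image] at he
      obtain ⟨w, hw, rfl⟩ := he
      obtain ⟨hmF, hmadj⟩ := hmspec w hw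
      refine mem_nonedge.2 ⟨?_, hmadj⟩
      intro h
      rw [hR, Finset.mem_sdiff, Finset.mem_insert, Finset.mem_union] at hw
      push_neg at hw
      exact hw.2.2.2 (h ▸ hmF)
  -- disjointness
  have hyAF : ∀ a ∈ A, a ≠ y := by
    intro a ha h; exact hyA (h ▸ ha)
  have hyFF : ∀ b ∈ F, b ≠ y := by
    intro b hb h; exact hyF (h ▸ hb)
  have hd12 : Disjoint E1 E2 := by
    rw [Finset.disjoint_left]
    rintro e he1 he2
    rw [hE1, Finset.mem_image] at he1
    rw [hE2, Finset.mem_image] at he2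
    obtain ⟨v, hv, rfl⟩ := he1
    obtain ⟨⟨a, b⟩, hab, he⟩ := he2
    rw [Finset.mem_product] at hab
    rw [Sym2.eq_iff] at he
    rcases he with ⟨h1, -⟩ | ⟨-, h2⟩
    · exact hyAF a hab.1 h1
    · exact hyFF b hab.2 h2
  have hd13 : Disjoint (E1 ∪ E2) E3 := by
    rw [Finset.disjoint_left]
    rintro e he1 he3
    rw [hE3, Finset.mem_image] at he3
    obtain ⟨w, hw, he⟩ := he3
    have hmF := (hmspec w hw).1
    rw [hR, Finset.mem_sdiff, Finset.mem_insert, Finset.mem_union] at hw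
    push_neg at hw
    rw [Finset.mem_union] at he1
    rcases he1 with he1 | he1
    · rw [hE1, Finset.mem_image] at he1
      obtain ⟨v, hv, he'⟩ := he1
      rw [← he'] at he
      rw [Sym2.eq_iff] at he
      rcases he with ⟨h1, -⟩ | ⟨-, h2⟩
      · exact hw.2.1 h1
      · exact hyFF _ hmF h2
    · rw [hE2, Finset.mem_image] at he1
      obtain ⟨⟨a, b⟩, hab, he'⟩ := he1
      rw [Finset.mem_product] at hab
      rw [← he'] at he
      rw [Sym2.eq_iff] at he
      rcases he with ⟨h1, -⟩ | ⟨h1, -⟩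
      · exact hw.2.2.1 (h1.symm ▸ hab.1)
      · exact hw.2.2.2 (h1.symm ▸ hab.2)
  -- partition card facts
  have hsub : insert y (A ∪ F) ⊆ univ := Finset.subset_univ _
  have hins : (insert y (A ∪ F)).card = 1 + A.card + F.card := by
    rw [Finset.card_insert_of_notMem
        (by intro h; rcases Finset.mem_union.1 h with h | h; exacts [hyA h, hyF h]),
      Finset.card_union_of_disjoint hAF]
    omega
  have hRcard : R.card = Fintype.card V - (1 + A.card + F.card) := by
    rw [hR, Finset.card_sdiff_of_subset hsub, Finset.card_univ, hins]
  have hcardle : Fintype.card V ≥ 1 + A.card + F.card := by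
    rw [← hins]
    exact le_trans (Finset.card_le_card hsub) (le_of_eq Finset.card_univ)
  have hA1 : 1 ≤ A.card := by
    obtain ⟨u, hu⟩ := exists_adj_of_connected hc (show 1 < Fintype.card V by omega) y
    exact Finset.card_pos.2 ⟨u, by rw [hA, mem_neighborFinset]; exact hu⟩
  have hF2 : 2 ≤ F.card := by
    have h1 : b1 ∈ F := by rw [hF, Finset.mem_filter]; exact ⟨Finset.mem_univ _, hb1⟩
    have h2 : b2 ∈ F := by rw [hF, Finset.mem_filter]; exact ⟨Finset.mem_univ _, hb2⟩
    calc 2 = ({b1, b2} : Finset V).card := by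
            rw [Finset.card_insert_of_notMem (by simp [hbne]), Finset.card_singleton]
      _ ≤ F.card := Finset.card_le_card (by intro t ht; simp at ht; rcases ht with rfl | rfl <;> assumption)
  have hUcard := nonedge_count_ge U hUsub
  rw [hU, Finset.card_union_of_disjoint hd13, Finset.card_union_of_disjoint hd12,
    hcard1, hcard2, hcard3, hRcard, hcount] at hUcard
  -- arithmetic contradiction
  obtain ⟨a', ha'⟩ : ∃ a', A.card = a' + 1 := ⟨A.card - 1, by omega⟩
  obtain ⟨f', hf'⟩ : ∃ f', F.card = f' + 2 := ⟨F.card - 2, by omega⟩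
  have hexp : A.card * F.card = a' * f' + 2 * a' + f' + 2 := by rw [ha', hf']; ring
  omega

lemma key {V : Type} [Fintype V] {G : SimpleGraph V} (hc : G.Connected)
    (hn : 4 ≤ Fintype.card V)
    (hcount : Gᶜ.edgeSet.ncard = 2 * Fintype.card V - 5) :
    ∃ u w, u ≠ w ∧ ∀ a b, Far G a b →
      (G.Adj a u ∧ G.Adj u w ∧ G.Adj w b) ∨ (G.Adj a w ∧ G.Adj w u ∧ G.Adj u b) := by
  classical
  by_cases hF : ∃ a b, Far G a b
  case neg =>
    obtain ⟨u, w, huw⟩ := Fintype.exists_pair_of_one_lt_card (α := V) (by omega)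
    exact ⟨u, w, huw, fun a b hab => absurd ⟨a, b, hab⟩ hF⟩
  case pos =>
  obtain ⟨x0, y0, hxy0⟩ := hF
  have hmeet : ∀ a b a' b', Far G a b → Far G a' b' →
      a = a' ∨ a = b' ∨ b = a' ∨ b = b' := by
    intro a b a' b' h h'
    by_contra hcon
    push_neg at hcon
    exact no_disjoint_far h h' hcon.1 hcon.2.1 hcon.2.2.1 hcon.2.2.2 hcount hn
  have hcommon : ∃ y, (∃ b, Far G y b) ∧ ∀ a b, Far G a b → a = y ∨ b = y := by
    by_cases h1 : ∀ a b, Far G a b → a = y0 ∨ b = y0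
    · exact ⟨y0, ⟨x0, hxy0.symm⟩, h1⟩
    by_cases h2 : ∀ a b, Far G a b → a = x0 ∨ b = x0
    · exact ⟨x0, ⟨y0, hxy0⟩, h2⟩
    exfalso
    push_neg at h1 h2
    obtain ⟨a1, b1, hf1, ha1, hb1⟩ := h1
    obtain ⟨a2, b2, hf2, ha2, hb2⟩ := h2
    have hc1 : ∃ c, Far G x0 c ∧ c ≠ y0 := by
      rcases hmeet a1 b1 x0 y0 hf1 hxy0 with h | h | h | h
      · exact ⟨b1, h ▸ hf1, hb1⟩
      · exact absurd h ha1
      · exact ⟨a1, (h ▸ hf1).symm, ha1⟩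
      · exact absurd h hb1
    have hc2 : ∃ d, Far G y0 d ∧ d ≠ x0 := by
      rcases hmeet a2 b2 x0 y0 hf2 hxy0 with h | h | h | h
      · exact absurd h ha2
      · exact ⟨b2, h ▸ hf2, hb2⟩
      · exact absurd h hb2
      · exact ⟨a2, (h ▸ hf2).symm, ha2⟩
    obtain ⟨c, hfc, hcy0⟩ := hc1
    obtain ⟨d, hfd, hdx0⟩ := hc2
    have hcd : c = d := by
      rcases hmeet x0 c y0 d hfc hfd with h | h | h | h
      · exact absurd h hxy0.1
      · exact absurd h.symm hdx0
      · exact absurd h hcy0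
      · exact h
    subst hcd
    exact no_far_triangle hxy0 hfd hfc hcount hn
  obtain ⟨y, ⟨b0, hb0⟩, hy⟩ := hcommon
  have hwex : ∃ w, w ≠ y ∧ ¬ G.Adj y w ∧ ¬ Far G y w ∧ ∀ b, Far G y b → G.Adj w b := by
    by_cases hone : ∀ b, Far G y b → b = b0
    · obtain ⟨w, hwadj⟩ := exists_adj_of_connected hc (show 1 < Fintype.card V by omega) b0
      refine ⟨w, ?_, ?_, ?_, ?_⟩
      · rintro rfl; exact hb0.2.1 hwadj.symm
      · intro h; exact hb0.2.2 w ⟨h, hwadj.symm⟩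
      · intro h; exact G.ne_of_adj hwadj (hone w h).symm
      · intro b hb; rw [hone b hb]; exact hwadj.symm
    · push_neg at hone
      obtain ⟨b1, hb1, hb1ne⟩ := hone
      exact exists_w hc hn hcount y b1 b0 hb1 hb0 hb1ne
  obtain ⟨w, hwy, hwA, hwF, hwall⟩ := hwex
  have hu : ∃ u, G.Adj y u ∧ G.Adj u w := by
    by_contra hcon
    push_neg at hcon
    exact hwF ⟨fun h => hwy h.symm, hwA, fun z hz => hcon z hz.1 hz.2⟩
  obtain ⟨u, hyu, huw⟩ := hu
  refine ⟨u, w, G.ne_of_adj huw, ?_⟩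
  intro a b hab
  rcases hy a b hab with h | h
  · subst h
    exact Or.inl ⟨hyu, huw, hwall b hab⟩
  · subst h
    exact Or.inr ⟨(hwall a hab.symm).symm, huw.symm, hyu.symm⟩

lemma exists_coloring {V : Type} [Fintype V] {G : SimpleGraph V}
    (hG : ∃ u w, u ≠ w ∧ ∀ a b, Far G a b →
      (G.Adj a u ∧ G.Adj u w ∧ G.Adj w b) ∨ (G.Adj a w ∧ G.Adj w u ∧ G.Adj u b)) :
    ∃ c : V → ℕ, IsMVCColoring G c ∧ (Set.range c).ncard = Fintype.card V - 1 := by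
  classical
  obtain ⟨u, w, huw, hP⟩ := hG
  set ι : V → ℕ := fun v => (Fintype.equivFin V v : ℕ) with hι
  have hιinj : Function.Injective ι := by
    intro a b h
    exact (Fintype.equivFin V).injective (Fin.val_injective h)
  set c : V → ℕ := fun v => if v = w then ι u else ι v with hcdef
  have hcu : c u = ι u := by rw [hcdef]; simp
  have hcw : c w = ι u := by rw [hcdef]; simp
  refine ⟨c, ?_, ?_⟩
  · intro a b
    by_cases hab : a = b
    · subst hab
      exact ⟨Walk.nil, Walk.IsPath.nil, by simp⟩
    by_cases hadj : G.Adj a b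
    · exact ⟨Walk.cons hadj Walk.nil, by simp [Walk.isPath_def, hab], by simp⟩
    by_cases hcom : ∃ z, G.Adj a z ∧ G.Adj z b
    · obtain ⟨z, h1, h2⟩ := hcom
      refine ⟨Walk.cons h1 (Walk.cons h2 Walk.nil), ?_, ?_⟩
      · simp [Walk.isPath_def, List.nodup_cons, hab, G.ne_of_adj h1, G.ne_of_adj h2]
      · intro x hx y hy
        simp only [Walk.support_cons, Walk.support_nil, List.tail_cons,
          List.dropLast_cons₂, List.dropLast_singleton, List.mem_singleton] at hx hy
        subst hx; subst hy; rfl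
    · have hfar : Far G a b := ⟨hab, hadj, fun z hz => hcom ⟨z, hz⟩⟩
      rcases hP a b hfar with ⟨h1, h2, h3⟩ | ⟨h1, h2, h3⟩
      · refine ⟨Walk.cons h1 (Walk.cons h2 (Walk.cons h3 Walk.nil)), ?_, ?_⟩
        · have hne1 : a ≠ w := fun h => hadj (by rw [h]; exact h3)
          have hne2 : u ≠ b := fun h => hadj (by rw [← h]; exact h1)
          simp [Walk.isPath_def, List.nodup_cons, hab, G.ne_of_adj h1, G.ne_of_adj h2,
            G.ne_of_adj h3, hne1, hne2]
        · intro x hx y hy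
          simp only [Walk.support_cons, Walk.support_nil, List.tail_cons,
            List.dropLast_cons₂, List.dropLast_singleton, List.mem_cons,
            List.not_mem_nil, or_false, List.mem_singleton] at hx hy
          rcases hx with rfl | rfl <;> rcases hy with rfl | rfl <;>
            simp [hcu, hcw]
      · refine ⟨Walk.cons h1 (Walk.cons h2 (Walk.cons h3 Walk.nil)), ?_, ?_⟩
        · have hne1 : a ≠ u := fun h => hadj (by rw [h]; exact h3)
          have hne2 : w ≠ b := fun h => hadj (by rw [← h]; exact h1)
          simp [Walk.isPath_def, List.nodup_cons, hab, G.ne_of_adj h1, G.ne_of_adj h2,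
            G.ne_of_adj h3, hne1, hne2]
        · intro x hx y hy
          simp only [Walk.support_cons, Walk.support_nil, List.tail_cons,
            List.dropLast_cons₂, List.dropLast_singleton, List.mem_cons,
            List.not_mem_nil, or_false, List.mem_singleton] at hx hy
          rcases hx with rfl | rfl <;> rcases hy with rfl | rfl <;>
            simp [hcu, hcw]
  · have hrange : Set.range c = ι '' {v | v ≠ w} := by
      ext t
      constructor
      · rintro ⟨v, rfl⟩
        by_cases h : v = w
        · exact ⟨u, huw, by simp [hcdef, h]⟩
        · exact ⟨v, h, by simp [hcdef, h]⟩
      · rintro ⟨v, hv, rfl⟩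
        refine ⟨v, ?_⟩
        simp only [hcdef]
        rw [if_neg hv]
    have hset : {v : V | v ≠ w} = Set.univ \ {w} := by
      ext v; simp
    rw [hrange, Set.ncard_image_of_injective _ hιinj, hset,
      Set.ncard_diff (Set.subset_univ _), Set.ncard_univ, Set.ncard_singleton,
      Nat.card_eq_fintype_card]

lemma le_mvc_of_coloring {V : Type} [Fintype V] {G : SimpleGraph V} {k : ℕ}
    (h : ∃ c : V → ℕ, IsMVCColoring G c ∧ (Set.range c).ncard = k) : k ≤ mvc G := by
  apply le_csSup
  · refine ⟨Fintype.card V, ?_⟩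
    rintro m ⟨c, -, rfl⟩
    rw [← Set.image_univ]
    calc (c '' Set.univ).ncard ≤ Set.univ.ncard := Set.ncard_image_le Set.finite_univ
      _ = Fintype.card V := by rw [Set.ncard_univ, Nat.card_eq_fintype_card]
  · exact h

lemma part1 {V : Type} [Fintype V] (G : SimpleGraph V) (hc : G.Connected)
    {n : ℕ} (hn : 4 ≤ n) (hcard : Fintype.card V = n)
    (hE : G.edgeSet.ncard = (n - 2).choose 2 + 2) : n - 1 ≤ mvc G := by
  classical
  have hcompl : Gᶜ.edgeSet.ncard = 2 * Fintype.card V - 5 := by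
    have hsplit : Gᶜ.edgeFinset = (⊤ : SimpleGraph V).edgeFinset \ G.edgeFinset := by
      ext e
      induction e with
      | _ a b =>
        simp only [mem_edgeFinset, Finset.mem_sdiff, mem_edgeSet, compl_adj, top_adj]
        try tauto
    have htop : (⊤ : SimpleGraph V).edgeFinset.card = (Fintype.card V).choose 2 :=
      card_edgeFinset_top_eq_card_choose_two
    have hsubE : G.edgeFinset ⊆ (⊤ : SimpleGraph V).edgeFinset := by
      intro e he
      rw [mem_edgeFinset] at *
      exact edgeSet_mono le_top he
    have hGcard : G.edgeFinset.card = (n-2).choose 2 + 2 := by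
      rw [← Set.ncard_coe_finset, coe_edgeFinset]; exact hE
    have h1 : Gᶜ.edgeSet.ncard = Gᶜ.edgeFinset.card := by
      rw [← Set.ncard_coe_finset, coe_edgeFinset]
    rw [h1, hsplit, Finset.card_sdiff_of_subset hsubE, htop, hGcard, hcard]
    obtain ⟨m, rfl⟩ := Nat.exists_eq_add_of_le hn
    have e1 := ch2 (m + 3)
    have e2 := ch2 (m + 1)
    have e1' : (m+3+1) * (m+3) = m*m + 7*m + 12 := by ring
    have e2' : (m+1+1) * (m+1) = m*m + 3*m + 2 := by ring
    rw [e1'] at e1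
    rw [e2'] at e2
    have h4 : 4 + m - 2 = m + 1 + 1 := by omega
    have h5 : 4 + m = m + 3 + 1 := by omega
    rw [h4, h5]
    omega
  rw [← hcard] at hn ⊢
  exact le_mvc_of_coloring (exists_coloring (key hc hn hcompl))

-- PART 2 material
lemma cliqueWithP2_adj {n : ℕ} {i j : Fin n} :
    (cliqueWithP2 n).Adj i j ↔ i ≠ j ∧
      ((i.val < n - 2 ∧ j.val < n - 2) ∨
       (j.val = i.val + 1 ∧ n - 3 ≤ i.val) ∨ (i.val = j.val + 1 ∧ n - 3 ≤ j.val)) := by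
  rw [cliqueWithP2, fromRel_adj]
  tauto

lemma card_val_lt {n k : ℕ} (h : k ≤ n) :
    ((univ : Finset (Fin n)).filter (fun j => j.val < k)).card = k := by
  have him : ((univ : Finset (Fin n)).filter (fun j => j.val < k)).image Fin.val
      = Finset.range k := by
    ext m
    simp only [Finset.mem_image, Finset.mem_filter, Finset.mem_univ, true_and,
      Finset.mem_range]
    constructor
    · rintro ⟨j, hj, rfl⟩; exact hj
    · intro hm; exact ⟨⟨m, lt_of_lt_of_le hm h⟩, hm, rfl⟩
  calc ((univ : Finset (Fin n)).filter (fun j => j.val < k)).card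
      = (((univ : Finset (Fin n)).filter (fun j => j.val < k)).image Fin.val).card :=
        (Finset.card_image_of_injOn (Fin.val_injective.injOn)).symm
    _ = (Finset.range k).card := by rw [him]
    _ = k := Finset.card_range k

lemma cliqueWithP2_conn {n : ℕ} (hn : 4 ≤ n) : (cliqueWithP2 n).Connected := by
  rw [connected_iff]
  refine ⟨?_, ⟨⟨0, by omega⟩⟩⟩
  have hZ : (0 : ℕ) < n := by omega
  have hA : n - 3 < n := by omega
  have hB : n - 2 < n := by omega
  have hC : n - 1 < n := by omega
  have adjAZ : (cliqueWithP2 n).Adj ⟨n-3, hA⟩ ⟨0, hZ⟩ := by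
    rw [cliqueWithP2_adj]
    simp only [Ne, Fin.ext_iff, Fin.val_mk]
    omega
  have adjBA : (cliqueWithP2 n).Adj ⟨n-2, hB⟩ ⟨n-3, hA⟩ := by
    rw [cliqueWithP2_adj]
    simp only [Ne, Fin.ext_iff, Fin.val_mk]
    omega
  have adjCB : (cliqueWithP2 n).Adj ⟨n-1, hC⟩ ⟨n-2, hB⟩ := by
    rw [cliqueWithP2_adj]
    simp only [Ne, Fin.ext_iff, Fin.val_mk]
    omega
  have key : ∀ v : Fin n, (cliqueWithP2 n).Reachable v ⟨0, hZ⟩ := by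
    intro v
    by_cases h1 : v.val < n - 2
    · by_cases h0 : v = ⟨0, hZ⟩
      · rw [h0]
      · refine Adj.reachable ?_
        rw [cliqueWithP2_adj]
        refine ⟨h0, Or.inl ⟨h1, ?_⟩⟩
        simp only [Fin.val_mk]
        omega
    · by_cases h2 : v.val = n - 2
      · have hv : v = ⟨n-2, hB⟩ := by
          rw [Fin.ext_iff]
          simp only [Fin.val_mk]
          omega
        rw [hv]
        exact (Adj.reachable adjBA).trans (Adj.reachable adjAZ)
      · have hv : v = ⟨n-1, hC⟩ := by
          rw [Fin.ext_iff]
          simp only [Fin.val_mk]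
          have := v.isLt
          omega
        rw [hv]
        exact ((Adj.reachable adjCB).trans (Adj.reachable adjBA)).trans
          (Adj.reachable adjAZ)
  intro u v
  exact (key u).trans (key v).symm

lemma cliqueWithP2_count {n : ℕ} (hn : 4 ≤ n) :
    (cliqueWithP2 n).edgeSet.ncard = (n - 2).choose 2 + 2 := by
  classical
  rw [← coe_edgeFinset, Set.ncard_coe_finset]
  have h2 := (cliqueWithP2 n).two_mul_card_edgeFinset
  have hA : n - 3 < n := by omega
  have hB : n - 2 < n := by omega
  have hC : n - 1 < n := by omega
  set T : Finset (Fin n) := univ.filter (fun j => j.val < n - 2) with hT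
  set Q : Finset (Fin n × Fin n) :=
    {(⟨n-3, hA⟩, ⟨n-2, hB⟩), (⟨n-2, hB⟩, ⟨n-3, hA⟩),
     (⟨n-2, hB⟩, ⟨n-1, hC⟩), (⟨n-1, hC⟩, ⟨n-2, hB⟩)} with hQ
  have hsplit : ((univ : Finset (Fin n × Fin n)).filter
      fun p => (cliqueWithP2 n).Adj p.1 p.2) = T.offDiag ∪ Q := by
    ext ⟨i, j⟩
    have hi := i.isLt
    have hj := j.isLt
    simp only [Finset.mem_filter, Finset.mem_univ, true_and, Finset.mem_union,
      Finset.mem_offDiag, Finset.mem_insert, Finset.mem_singleton, hT, hQ,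
      cliqueWithP2_adj, Prod.mk.injEq, Ne, Fin.ext_iff, Fin.val_mk]
    omega
  have hTcard : T.card = n - 2 := card_val_lt (by omega)
  have hQcard : Q.card = 4 := by
    rw [hQ]
    rw [Finset.card_insert_of_notMem (by
        simp only [Finset.mem_insert, Finset.mem_singleton, Prod.mk.injEq,
          Fin.ext_iff, Fin.val_mk, not_or]
        omega),
      Finset.card_insert_of_notMem (by
        simp only [Finset.mem_insert, Finset.mem_singleton, Prod.mk.injEq,
          Fin.ext_iff, Fin.val_mk, not_or]
        omega),
      Finset.card_insert_of_notMem (by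
        simp only [Finset.mem_singleton, Prod.mk.injEq, Fin.ext_iff, Fin.val_mk, not_or]
        omega),
      Finset.card_singleton]
  have hdis : Disjoint T.offDiag Q := by
    rw [Finset.disjoint_left]
    rintro ⟨i, j⟩ h1 h2
    simp only [Finset.mem_offDiag, hT, Finset.mem_filter, Finset.mem_univ,
      true_and] at h1
    rw [hQ] at h2
    simp only [Finset.mem_insert, Finset.mem_singleton, Prod.mk.injEq, Fin.ext_iff,
      Fin.val_mk] at h2
    obtain ⟨hiv, hjv, -⟩ := h1
    omega
  rw [hsplit, Finset.card_union_of_disjoint hdis, Finset.offDiag_card, hTcard,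
    hQcard] at h2
  obtain ⟨m, rfl⟩ := Nat.exists_eq_add_of_le hn
  have h22 : 4 + m - 2 = m + 2 := by omega
  rw [h22] at h2 ⊢
  have hch := ch2 (m + 1)
  have e1 : (m+2) * (m+2) = m*m + 4*m + 4 := by ring
  have e2 : (m+1+1) * (m+1) = m*m + 3*m + 2 := by ring
  rw [e1] at h2
  rw [e2] at hch
  have hmm : m + 1 + 1 = m + 2 := rfl
  rw [hmm] at hch
  omega
lemma far_0_last {n : ℕ} (hn : 4 ≤ n) :
    Far (cliqueWithP2 n) ⟨0, by omega⟩ ⟨n-1, by omega⟩ := by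
  refine ⟨?_, ?_, ?_⟩
  · simp only [Ne, Fin.ext_iff, Fin.val_mk]
    omega
  · rw [cliqueWithP2_adj]
    simp only [Ne, Fin.ext_iff, Fin.val_mk, not_and, not_or]
    intro _
    omega
  · rintro z ⟨h1, h2⟩
    rw [cliqueWithP2_adj] at h1 h2
    have hz := z.isLt
    simp only [Ne, Fin.ext_iff, Fin.val_mk] at h1 h2
    omega

lemma internal_two {V : Type} {G : SimpleGraph V} {a b : V} (p : G.Walk a b)
    (hp : p.IsPath) (hfar : Far G a b) :
    ∃ x ∈ p.support.tail.dropLast, ∃ y ∈ p.support.tail.dropLast, x ≠ y := by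
  cases p with
  | nil => exact absurd rfl hfar.1
  | cons h q =>
    rename_i x
    cases q with
    | nil => exact absurd h hfar.2.1
    | cons h2 q2 =>
      rename_i y
      cases q2 with
      | nil => exact absurd ⟨h, h2⟩ (hfar.2.2 _)
      | cons h3 q3 =>
        rename_i z
        have hsup : (Walk.cons h (Walk.cons h2 (Walk.cons h3 q3))).support
            = a :: x :: y :: z :: q3.support.tail := by
          rw [Walk.support_cons, Walk.support_cons, Walk.support_cons,
            q3.support_eq_cons, List.tail_cons]
        rw [hsup]
        have hx : x ∈ (a :: x :: y :: z :: q3.support.tail).tail.dropLast := by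
          simp [List.dropLast_cons₂]
        have hy : y ∈ (a :: x :: y :: z :: q3.support.tail).tail.dropLast := by
          rw [List.tail_cons, List.dropLast_cons₂, List.dropLast_cons₂]; simp
        refine ⟨x, hx, y, hy, ?_⟩
        have hnodup := hp.support_nodup
        rw [hsup] at hnodup
        simp only [List.nodup_cons] at hnodup
        intro hxy
        exact hnodup.2.1 (by rw [hxy]; simp)

lemma mvc_upper {n : ℕ} (hn : 4 ≤ n) : mvc (cliqueWithP2 n) ≤ n - 1 := by
  have hco := cliqueWithP2_conn hn
  apply csSup_le
  · refine ⟨1, fun _ => 0, fun u v => ?_, ?_⟩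
    · obtain ⟨w⟩ := hco.preconnected u v
      exact ⟨w.toPath.1, w.toPath.2, fun x _ y _ => rfl⟩
    · haveI : Nonempty (Fin n) := ⟨⟨0, by omega⟩⟩
      rw [Set.range_const, Set.ncard_singleton]
  · rintro k ⟨c, hc, rfl⟩
    by_contra hk
    push_neg at hk
    have hle : (Set.range c).ncard ≤ n := by
      rw [← Set.image_univ]
      calc (c '' Set.univ).ncard ≤ Set.univ.ncard := Set.ncard_image_le Set.finite_univ
        _ = n := by rw [Set.ncard_univ, Nat.card_eq_fintype_card, Fintype.card_fin]
    have hrange : Set.range c = ↑((univ : Finset (Fin n)).image c) := by simp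
    have hcardeq : ((univ : Finset (Fin n)).image c).card
        = (univ : Finset (Fin n)).card := by
      have hcn : (Set.range c).ncard = n := by omega
      rw [hrange, Set.ncard_coe_finset] at hcn
      rw [hcn, Finset.card_univ, Fintype.card_fin]
    have hinjon := Finset.card_image_iff.1 hcardeq
    have hinj : Function.Injective c := fun s t hst =>
      hinjon (by simp) (by simp) hst
    obtain ⟨p, hp, hmono⟩ := hc ⟨0, by omega⟩ ⟨n-1, by omega⟩
    obtain ⟨s, hs, t, ht, hst⟩ := internal_two p hp (far_0_last hn)
    exact hst (hinj (hmono s hs t ht))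

theorem stmt_8 (n : ℕ) (hn : 4 ≤ n) :
    (∀ {V : Type} [Fintype V] (G : SimpleGraph V), G.Connected → Fintype.card V = n →
      G.edgeSet.ncard = (n - 2).choose 2 + 2 → n - 1 ≤ mvc G) ∧
    ((cliqueWithP2 n).edgeSet.ncard = (n - 2).choose 2 + 2 ∧
      mvc (cliqueWithP2 n) = n - 1) := by
  constructor
  · intro V _ G hconn hcard hE
    exact part1 G hconn hn hcard hE
  · refine ⟨cliqueWithP2_count hn, le_antisymm (mvc_upper hn) ?_⟩
    exact part1 _ (cliqueWithP2_conn hn) hn (Fintype.card_fin n) (cliqueWithP2_count hn)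
end

section
/- Let G be a connected graph with n vertices and m = n − 1 + C(n−2,2) edges (i.e., p = m − n + 1 = C(n−2,2) and t = n − 3). Then mvc(G) = n. -/
open SimpleGraph

open Finset in
lemma common_nbr {V : Type*} [Fintype V] (G : SimpleGraph V) (hn3 : 3 ≤ Fintype.card V)
    (hm : G.edgeSet.ncard = Fintype.card V - 1 + (Fintype.card V - 2).choose 2)
    (u v : V) (hne : u ≠ v) (huv : ¬ G.Adj u v)
    (hcon : ∀ w, G.Adj u w → ¬ G.Adj w v) : False := by
  classical
  set g : V → V := fun x => if x = v then u else x with hg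
  have hgfix : ∀ x : V, x ≠ v → g x = x := by intro x hx; simp [hg, hx]
  have hgv : g v = u := by simp [hg]
  have hadj_ne_u : ∀ w, G.Adj v w → w ≠ u := by
    intro w hw h; subst h; exact huv (hw.symm)
  have himg : ∀ e ∈ G.edgeFinset,
      (∃ w, G.Adj v w ∧ e = s(v, w) ∧ Sym2.map g e = s(u, w)) ∨
      (v ∉ e ∧ Sym2.map g e = e) := by
    intro e he
    induction e with
    | h a b =>
      simp only [mem_edgeFinset, mem_edgeSet] at he
      by_cases hv : v ∈ s(a, b)
      · rw [Sym2.mem_iff] at hv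
        rcases hv with hv | hv
        · refine Or.inl ⟨b, by rw [hv]; exact he, by rw [hv], ?_⟩
          have hb : b ≠ v := fun h => he.ne (h.trans hv).symm
          rw [Sym2.map_pair_eq, hgfix b hb, ← hv, hgv]
        · refine Or.inl ⟨a, by rw [hv]; exact he.symm, by rw [hv]; exact Sym2.eq_swap, ?_⟩
          have ha : a ≠ v := fun h => he.ne (h.trans hv)
          rw [Sym2.map_pair_eq, hgfix a ha, ← hv, hgv]
          exact Sym2.eq_swap
      · refine Or.inr ⟨hv, ?_⟩
        rw [Sym2.mem_iff] at hv
        push_neg at hv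
        rw [Sym2.map_pair_eq, hgfix a hv.1.symm, hgfix b hv.2.symm]
  have hmap : ∀ e ∈ G.edgeFinset,
      Sym2.map g e ∈ (⊤ : SimpleGraph V).edgeFinset.filter (fun e => v ∉ e) := by
    intro e he
    rcases himg e he with ⟨w, hw, -, hmape⟩ | ⟨hv, hmape⟩
    · rw [hmape]
      simp only [mem_filter, mem_edgeFinset, mem_edgeSet, top_adj, Sym2.mem_iff, not_or]
      exact ⟨Ne.symm (hadj_ne_u w hw), hne.symm, hw.ne⟩
    · rw [hmape, mem_filter, mem_edgeFinset, edgeSet_top]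
      rw [mem_edgeFinset] at he
      exact ⟨G.not_isDiag_of_mem_edgeSet he, hv⟩
  have hinj : Set.InjOn (Sym2.map g) ↑G.edgeFinset := by
    intro e he e' he' heq
    rw [mem_coe] at he he'
    rcases himg e he with ⟨w, hw, hew, hmape⟩ | ⟨hv, hmape⟩ <;>
      rcases himg e' he' with ⟨w', hw', hew', hmape'⟩ | ⟨hv', hmape'⟩
    · rw [hmape, hmape', Sym2.eq_iff] at heq
      rcases heq with ⟨-, rfl⟩ | ⟨h1, h2⟩
      · rw [hew, hew']
      · exact absurd h1.symm (hadj_ne_u w' hw')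
    · -- e' fixed, image of e is s(u,w) = e' ∈ G.edgeSet → Adj u w, contra
      rw [hmape, hmape'] at heq
      rw [← heq, mem_edgeFinset, mem_edgeSet] at he'
      exact absurd (hw.symm) (hcon w he')
    · rw [hmape, hmape'] at heq
      rw [heq, mem_edgeFinset, mem_edgeSet] at he
      exact absurd (hw'.symm) (hcon w' he)
    · rw [hmape, hmape'] at heq; exact heq
  have hcard := Finset.card_le_card_of_injOn (Sym2.map g) hmap hinj
  have hsplit := Finset.card_filter_add_card_filter_not
    (s := (⊤ : SimpleGraph V).edgeFinset) (p := fun e => v ∉ e)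
  have hinc : ((⊤ : SimpleGraph V).edgeFinset.filter (fun e => ¬ v ∉ e)).card
      = Fintype.card V - 1 := by
    have : ((⊤ : SimpleGraph V).edgeFinset.filter (fun e => ¬ v ∉ e))
        = (⊤ : SimpleGraph V).incidenceFinset v := by
      rw [incidenceFinset_eq_filter]
      simp only [not_not]
    rw [this, card_incidenceFinset_eq_degree, complete_graph_degree]
  have htop := card_edgeFinset_top_eq_card_choose_two (V := V)
  have hedge : G.edgeSet.ncard = G.edgeFinset.card := by
    rw [Set.ncard_eq_toFinset_card']
    exact congrArg Finset.card (by ext e; simp)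
  obtain ⟨k, hk⟩ : ∃ k, Fintype.card V = k + 3 := ⟨Fintype.card V - 3, by omega⟩
  rw [hk] at htop hinc hm
  have e1 : k + 3 - 2 = k + 1 := by omega
  rw [e1] at hm
  have c1 : (k + 3).choose 2 = (k + 2) + (k + 2).choose 2 := by
    rw [Nat.choose_succ_succ (k+2) 1, Nat.choose_one_right]
  have c2 : (k + 2).choose 2 = (k + 1) + (k + 1).choose 2 := by
    rw [Nat.choose_succ_succ (k+1) 1, Nat.choose_one_right]
  simp only [hedge] at hm
  omega

theorem stmt_10 {V : Type*} [Fintype V] (G : SimpleGraph V) (hG : G.Connected)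
    (n : ℕ) (hn : Fintype.card V = n) (hn3 : 3 ≤ n)
    (hm : G.edgeSet.ncard = n - 1 + (n - 2).choose 2) :
    mvc G = n := by
  classical
  subst hn
  have hpath : ∀ u v : V, ∃ p : G.Walk u v, p.IsPath ∧
      ∀ x ∈ p.support.tail.dropLast, ∀ y ∈ p.support.tail.dropLast, x = y := by
    intro u v
    rcases eq_or_ne u v with rfl | hne
    · exact ⟨Walk.nil, by simp, by simp⟩
    · by_cases hadj : G.Adj u v
      · exact ⟨Walk.cons hadj Walk.nil, by simp [Walk.isPath_def, hne], by simp⟩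
      · obtain ⟨w, hw1, hw2⟩ : ∃ w, G.Adj u w ∧ G.Adj w v := by
          by_contra h
          push_neg at h
          exact common_nbr G hn3 hm u v hne hadj h
        refine ⟨Walk.cons hw1 (Walk.cons hw2 Walk.nil), ?_, ?_⟩
        · simp [Walk.isPath_def, hne, hw1.ne, hw2.ne]
        · simp only [Walk.support_cons, Walk.support_nil, List.tail_cons, List.dropLast,
            List.mem_singleton]
          rintro x rfl y rfl
          rfl
  have hall : ∀ c : V → ℕ, IsMVCColoring G c := by
    intro c u v
    obtain ⟨p, hp, hmono⟩ := hpath u v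
    exact ⟨p, hp, fun x hx y hy => by rw [hmono x hx y hy]⟩
  set S := {k : ℕ | ∃ c : V → ℕ, IsMVCColoring G c ∧ (Set.range c).ncard = k} with hS
  have hub : ∀ k ∈ S, k ≤ Fintype.card V := by
    rintro k ⟨c, -, rfl⟩
    calc (Set.range c).ncard = (c '' Set.univ).ncard := by rw [Set.image_univ]
      _ ≤ (Set.univ : Set V).ncard := Set.ncard_image_le Set.finite_univ
      _ = Fintype.card V := by rw [Set.ncard_univ, Nat.card_eq_fintype_card]
  have hmem : Fintype.card V ∈ S := by
    refine ⟨fun x => (Fintype.equivFin V x : ℕ), hall _, ?_⟩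
    have hcinj : Function.Injective (fun x => ((Fintype.equivFin V x : ℕ))) :=
      fun a b h => (Fintype.equivFin V).injective (Fin.val_injective h)
    rw [← Set.image_univ, Set.ncard_image_of_injective _ hcinj, Set.ncard_univ,
      Nat.card_eq_fintype_card]
  exact le_antisymm (csSup_le ⟨_, hmem⟩ hub) (le_csSup ⟨Fintype.card V, hub⟩ hmem)
end

section
/- For n ≥ 3, f_v(n,3) = n − 1; that is, every connected graph on n vertices satisfies mvc(G) ≥ 3, and n − 1 is the minimum possible number of edges of a connected graph. -/
open SimpleGraph

section Aux
variable {V : Type*}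

lemma reachable_trans_aux {G G' : SimpleGraph V}
    (h : ∀ a b : V, G.Adj a b → G'.Reachable a b) {u v : V} (p : G.Walk u v) :
    G'.Reachable u v := by
  induction p with
  | nil => exact Reachable.refl _
  | cons ha _ ih => exact (h _ _ ha).trans ih

lemma exists_tree_le [Fintype V] (G : SimpleGraph V) (hG : G.Connected) :
    ∃ T : SimpleGraph V, T ≤ G ∧ T.IsTree := by
  classical
  generalize hN : G.edgeSet.ncard = N
  induction N using Nat.strong_induction_on generalizing G with
  | _ N ih =>
    by_cases hac : G.IsAcyclic
    · exact ⟨G, le_refl G, ⟨hG, hac⟩⟩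
    · rw [isAcyclic_iff_forall_adj_isBridge] at hac
      push_neg at hac
      obtain ⟨v, w, hadj, hbr⟩ := hac
      rw [isBridge_iff] at hbr
      push_neg at hbr
      have hreach : (G \ fromEdgeSet {s(v, w)}).Reachable v w := hbr
      set G' := G \ fromEdgeSet {s(v, w)} with hG'
      have hle' : G' ≤ G := sdiff_le
      have hstep : ∀ a b : V, G.Adj a b → G'.Reachable a b := by
        intro a b hab
        by_cases he : s(a, b) = s(v, w)
        · rcases Sym2.eq_iff.mp he with ⟨rfl, rfl⟩ | ⟨rfl, rfl⟩
          · exact hreach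
          · exact hreach.symm
        · exact Adj.reachable (by
            rw [hG']
            exact ⟨hab, by simp [he]⟩)
      have hpre : G'.Preconnected := by
        intro a b
        obtain ⟨p⟩ := hG.preconnected a b
        exact reachable_trans_aux hstep p
      have hne : Nonempty V := hG.nonempty
      have hconn' : G'.Connected := ⟨hpre⟩
      have hedge : G'.edgeSet = G.edgeSet \ {s(v, w)} := by
        rw [hG']
        simp
      have hlt : G'.edgeSet.ncard < N := by
        rw [← hN, hedge]
        exact Set.ncard_diff_singleton_lt_of_mem hadj (Set.toFinite _)
      obtain ⟨T, hT, htree⟩ := ih _ hlt G' hconn' rfl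
      exact ⟨T, hT.trans hle', htree⟩

lemma exists_adj_tail {G : SimpleGraph V} {u v : V} (p : G.Walk u v) (h : u ≠ v) :
    ∃ y ∈ p.support.tail, G.Adj u y := by
  cases p with
  | nil => exact absurd rfl h
  | cons ha q => exact ⟨_, by simp, ha⟩

lemma two_le_degree_of_internal [Fintype V] [DecidableEq V] {G : SimpleGraph V}
    [DecidableRel G.Adj] {u v : V} {p : G.Walk u v} (hp : p.IsPath) {x : V}
    (hx : x ∈ p.support.tail.dropLast) : 2 ≤ G.degree x := by
  have hxt : x ∈ p.support.tail := List.dropLast_subset _ hx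
  have hxs : x ∈ p.support := List.mem_of_mem_tail hxt
  have hnodup := hp.support_nodup
  have hcons := p.support_eq_cons
  have hxu : x ≠ u := by
    rw [hcons] at hnodup
    rintro rfl
    exact (List.nodup_cons.mp hnodup).1 hxt
  have htail_ne : p.support.tail ≠ [] := by
    intro h; rw [h] at hxt; exact absurd hxt List.not_mem_nil
  have hxv : x ≠ v := by
    have hlast : p.support.tail.getLast htail_ne = v := by
      rw [List.getLast_tail]; exact p.getLast_support
    have hnd : p.support.tail.Nodup := by
      rw [hcons] at hnodup; exact (List.nodup_cons.mp hnodup).2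
    intro hxv
    have := List.dropLast_append_getLast htail_ne
    rw [← this] at hnd
    rcases List.nodup_append'.mp hnd with ⟨_, _, hdisj⟩
    exact hdisj hx (by simp [hlast, hxv])
  -- split the walk at x
  set q := p.takeUntil x hxs with hq
  set r := p.dropUntil x hxs with hr
  obtain ⟨z, hz, hxz⟩ := exists_adj_tail r hxv
  obtain ⟨y, hy, hxy⟩ := exists_adj_tail q.reverse hxu
  have hy' : y ∈ q.support := by
    have : q.reverse.support.tail ⊆ q.reverse.support := List.tail_subset _
    have h2 := this hy
    rwa [Walk.support_reverse, List.mem_reverse] at h2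
  have hsupp : p.support = q.support ++ r.support.tail := by
    conv_lhs => rw [← p.take_spec hxs]
    rw [Walk.support_append]
  have hyz : y ≠ z := by
    rw [hsupp] at hnodup
    rcases List.nodup_append'.mp hnodup with ⟨_, _, hdisj⟩
    exact fun h => hdisj hy' (h ▸ hz)
  have hym : y ∈ G.neighborFinset x := by rw [SimpleGraph.mem_neighborFinset]; exact hxy
  have hzm : z ∈ G.neighborFinset x := by rw [SimpleGraph.mem_neighborFinset]; exact hxz
  exact Finset.one_lt_card.mpr ⟨y, hym, z, hzm, hyz⟩

lemma tree_ncard_edges {n : ℕ} {T : SimpleGraph (Fin n)} (hT : T.IsTree) :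
    T.edgeSet.ncard = n - 1 := by
  classical
  have h := hT.card_edgeFinset
  rw [Fintype.card_fin] at h
  rw [Set.ncard_eq_toFinset_card']
  have : T.edgeSet.toFinset = T.edgeFinset := rfl
  rw [this]
  omega

lemma exists_two_leaves {n : ℕ} (hn : 2 ≤ n) {T : SimpleGraph (Fin n)}
    [DecidableRel T.Adj] (hT : T.IsTree) :
    ∃ a b : Fin n, a ≠ b ∧ T.degree a = 1 ∧ T.degree b = 1 := by
  classical
  have hcard := hT.card_edgeFinset
  rw [Fintype.card_fin] at hcard
  have hsum : ∑ v, T.degree v = 2 * T.edgeFinset.card :=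
    T.sum_degrees_eq_twice_card_edges
  have hdegpos : ∀ v : Fin n, 1 ≤ T.degree v := by
    intro v
    have : Nontrivial (Fin n) := Fin.nontrivial_iff_two_le.mpr hn
    obtain ⟨w, hw⟩ := exists_ne v
    obtain ⟨p⟩ := hT.isConnected.preconnected v w
    obtain ⟨y, _, hvy⟩ := exists_adj_tail p (Ne.symm hw)
    exact T.degree_pos_iff_exists_adj v |>.mpr ⟨y, hvy⟩
  have hsplit : (Finset.univ.filter (fun v : Fin n => T.degree v = 1)).card
      + (Finset.univ.filter (fun v : Fin n => ¬T.degree v = 1)).card = n := by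
    rw [Finset.card_filter_add_card_filter_not]
    simp
  have hcard2 : 2 ≤ (Finset.univ.filter (fun v : Fin n => T.degree v = 1)).card := by
    by_contra hlt
    push_neg at hlt
    have hbound : ∀ v : Fin n, (if T.degree v = 1 then 1 else 2) ≤ T.degree v := by
      intro v
      by_cases h : T.degree v = 1
      · simp [h]
      · have := hdegpos v
        simp only [h, if_false]
        omega
    have hle : ∑ v : Fin n, (if T.degree v = 1 then 1 else 2) ≤ ∑ v, T.degree v :=
      Finset.sum_le_sum fun v _ => hbound v
    rw [Finset.sum_ite, Finset.sum_const, Finset.sum_const, hsum] at hle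
    simp only [smul_eq_mul] at hle
    omega
  obtain ⟨a, ha, b, hb, hab⟩ := Finset.one_lt_card.mp hcard2
  rw [Finset.mem_filter] at ha hb
  exact ⟨a, b, hab, ha.2, hb.2⟩

end Aux

lemma three_le_mvc {n : ℕ} (hn : 3 ≤ n) (G : SimpleGraph (Fin n)) (hG : G.Connected) :
    3 ≤ mvc G := by
  classical
  obtain ⟨T, hTle, hTree⟩ := exists_tree_le G hG
  obtain ⟨a, b, hab, hda, hdb⟩ := exists_two_leaves (by omega) hTree
  set c : Fin n → ℕ := fun x => if x = a then 1 else if x = b then 2 else 0 with hc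
  have hmvc : IsMVCColoring G c := by
    intro u v
    obtain ⟨w⟩ := hTree.isConnected.preconnected u v
    let p : T.Path u v := w.toPath
    have hpe : ∀ e ∈ (p : T.Walk u v).edges, e ∈ G.edgeSet := fun e he =>
      edgeSet_mono hTle ((p : T.Walk u v).edges_subset_edgeSet he)
    refine ⟨(p : T.Walk u v).transfer G hpe, Walk.IsPath.transfer hpe p.2, ?_⟩
    have hsupp := Walk.support_transfer (p : T.Walk u v) hpe
    rw [hsupp]
    have hzero : ∀ x ∈ (p : T.Walk u v).support.tail.dropLast, c x = 0 := by
      intro x hx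
      have h2 := two_le_degree_of_internal p.2 hx
      have hxa : x ≠ a := fun h => by rw [h, hda] at h2; omega
      have hxb : x ≠ b := fun h => by rw [h, hdb] at h2; omega
      simp [hc, hxa, hxb]
    intro x hx y hy
    rw [hzero x hx, hzero y hy]
  have h1 : c a = 1 := by simp [hc]
  have h2 : c b = 2 := by simp [hc, hab.symm]
  obtain ⟨z, hz1, hz2⟩ : ∃ z : Fin n, z ≠ a ∧ z ≠ b := by
    by_contra h
    push_neg at h
    have hsub : (Finset.univ : Finset (Fin n)) ⊆ {a, b} := by
      intro z _
      rcases eq_or_ne z a with rfl | hza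
      · simp
      · simp [h z hza]
    have hle := Finset.card_le_card hsub
    have : ({a, b} : Finset (Fin n)).card ≤ 2 :=
      (Finset.card_insert_le _ _).trans (by simp)
    simp [Finset.card_univ] at hle
    omega
  have h0 : c z = 0 := by simp [hc, hz1, hz2]
  have hsub : ({0, 1, 2} : Set ℕ) ⊆ Set.range c := by
    intro k hk
    simp only [Set.mem_insert_iff, Set.mem_singleton_iff] at hk
    rcases hk with rfl | rfl | rfl
    exacts [⟨z, h0⟩, ⟨a, h1⟩, ⟨b, h2⟩]
  have h3 : 3 ≤ (Set.range c).ncard := by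
    have hfin : (Set.range c).Finite := Set.finite_range c
    have hle := Set.ncard_le_ncard hsub hfin
    have : ({0, 1, 2} : Set ℕ).ncard = 3 := by
      rw [Set.ncard_insert_of_notMem (by simp), Set.ncard_insert_of_notMem (by simp),
        Set.ncard_singleton]
    omega
  have hmem : (Set.range c).ncard ∈
      {k : ℕ | ∃ c' : Fin n → ℕ, IsMVCColoring G c' ∧ (Set.range c').ncard = k} :=
    ⟨c, hmvc, rfl⟩
  have hbdd : BddAbove {k : ℕ | ∃ c' : Fin n → ℕ, IsMVCColoring G c' ∧
      (Set.range c').ncard = k} := by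
    refine ⟨n, fun k hk => ?_⟩
    obtain ⟨c', _, rfl⟩ := hk
    have hrange : Set.range c' = ↑(Finset.univ.image c') := by simp
    rw [hrange, Set.ncard_coe_finset]
    exact Finset.card_image_le.trans (by simp)
  exact h3.trans (le_csSup hbdd hmem)


theorem stmt_13 (n : ℕ) (hn : 3 ≤ n) :
    (∀ G : SimpleGraph (Fin n), G.Connected → 3 ≤ mvc G) ∧
    IsLeast {m : ℕ | ∃ G : SimpleGraph (Fin n), G.Connected ∧ G.edgeSet.ncard = m}
      (n - 1) := by
  refine ⟨fun G hG => three_le_mvc hn G hG, ?_, ?_⟩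
  · have : Nonempty (Fin n) := ⟨⟨0, by omega⟩⟩
    obtain ⟨T, _, hTree⟩ := exists_tree_le (⊤ : SimpleGraph (Fin n)) connected_top
    exact ⟨T, hTree.isConnected, tree_ncard_edges hTree⟩
  · rintro m ⟨G, hG, rfl⟩
    obtain ⟨T, hle, hTree⟩ := exists_tree_le G hG
    calc n - 1 = T.edgeSet.ncard := (tree_ncard_edges hTree).symm
    _ ≤ G.edgeSet.ncard := Set.ncard_le_ncard (edgeSet_mono hle) (Set.toFinite _)
end

section
/- Let G be a graph on n ≥ 5 vertices such that both G and its complement are connected. Then n + 3 ≤ mvc(G) + mvc(complement of G) ≤ 2n. -/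
open SimpleGraph

section Aux

variable {V : Type*}

/-- internal vertices are in the support -/
lemma internal_mem {G : SimpleGraph V} {x y : V} {p : G.Walk x y} {z : V}
    (hz : z ∈ p.support.tail.dropLast) : z ∈ p.support :=
  List.tail_subset _ (List.dropLast_subset _ hz)

/-- internal vertices of a path differ from the endpoints -/
lemma internal_ne {G : SimpleGraph V} {x y : V} {p : G.Walk x y} (hp : p.IsPath) {z : V}
    (hz : z ∈ p.support.tail.dropLast) : z ≠ x ∧ z ≠ y := by
  have hnd : p.support.Nodup := hp.support_nodup
  constructor
  · intro h; subst h
    have hc := p.support_eq_cons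
    rw [hc] at hnd
    exact (List.nodup_cons.mp hnd).1 (List.dropLast_subset _ hz)
  · intro h; subst h
    have h2 : z ∈ p.support.dropLast := by
      have hc := p.support_eq_cons
      rcases e : p.support.tail with _ | ⟨hd, tl⟩
      · rw [e] at hz; simp at hz
      · rw [hc, e]
        rw [e] at hz
        simp only [List.dropLast_cons₂]
        exact List.mem_cons_of_mem _ hz
    have h3 := List.dropLast_append_getLast p.support_ne_nil
    rw [p.getLast_support] at h3
    rw [← h3] at hnd
    have := (List.nodup_append'.mp hnd).2.2
    exact this h2 (List.mem_singleton_self z)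

/-- every element of the mvc set is at most the number of vertices. -/
lemma mem_le_card [Fintype V] {G : SimpleGraph V} {k : ℕ}
    (hk : k ∈ {k : ℕ | ∃ c : V → ℕ, IsMVCColoring G c ∧ (Set.range c).ncard = k}) :
    k ≤ Fintype.card V := by
  obtain ⟨c, -, rfl⟩ := hk
  rw [← Set.image_univ]
  calc (c '' Set.univ).ncard ≤ (Set.univ : Set V).ncard := Set.ncard_image_le Set.finite_univ
  _ = _ := by rw [Set.ncard_univ, Nat.card_eq_fintype_card]

lemma one_mem [Fintype V] [Nonempty V] {G : SimpleGraph V} (hG : G.Connected) :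
    (1 : ℕ) ∈ {k : ℕ | ∃ c : V → ℕ, IsMVCColoring G c ∧ (Set.range c).ncard = k} := by
  classical
  refine ⟨fun _ => 0, fun u v => ?_, ?_⟩
  · obtain ⟨p⟩ := hG u v
    exact ⟨p.bypass, p.bypass_isPath, fun _ _ _ _ => rfl⟩
  · rw [Set.range_const]; simp

lemma le_mvc [Fintype V] {G : SimpleGraph V} {k : ℕ}
    (h : k ∈ {k : ℕ | ∃ c : V → ℕ, IsMVCColoring G c ∧ (Set.range c).ncard = k}) :
    k ≤ mvc G :=
  le_csSup ⟨Fintype.card V, fun _ hk => mem_le_card hk⟩ h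

lemma mvc_le [Fintype V] [Nonempty V] {G : SimpleGraph V} (hG : G.Connected) :
    mvc G ≤ Fintype.card V :=
  csSup_le ⟨1, one_mem hG⟩ (fun _ hk => mem_le_card hk)

/-- Diameter at most two gives an injective MVC coloring. -/
lemma d2_mem [Fintype V] [Nonempty V] {G : SimpleGraph V}
    (h2 : ∀ u v : V, u ≠ v → G.Adj u v ∨ ∃ w, G.Adj u w ∧ G.Adj w v) :
    Fintype.card V ∈
      {k : ℕ | ∃ c : V → ℕ, IsMVCColoring G c ∧ (Set.range c).ncard = k} := by
  classical
  set c : V → ℕ := fun x => ((Fintype.equivFin V) x : ℕ) with hc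
  have hinj : Function.Injective c := fun x y h =>
    (Fintype.equivFin V).injective (Fin.val_injective h)
  refine ⟨c, fun u v => ?_, ?_⟩
  · by_cases huv : u = v
    · subst huv
      exact ⟨Walk.nil, Walk.IsPath.nil, by simp⟩
    · rcases h2 u v huv with h | ⟨w, hw1, hw2⟩
      · exact ⟨Walk.cons h Walk.nil, by simp [Walk.isPath_def, h.ne], by simp⟩
      · refine ⟨Walk.cons hw1 (Walk.cons hw2 Walk.nil), ?_, ?_⟩
        · simp [Walk.isPath_def, hw1.ne, hw1.ne', huv, hw2.ne, hw2.ne']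
        · simp only [Walk.support_cons, Walk.support_nil, List.tail_cons, List.dropLast_cons₂,
            List.dropLast_singleton, List.mem_singleton]
          rintro x rfl y rfl; rfl
  · rw [← Set.image_univ, Set.ncard_image_of_injective _ hinj, Set.ncard_univ,
      Nat.card_eq_fintype_card]

/-- A spanning double star with centers `u`, `v` gives an MVC coloring with `n - 1` colors. -/
lemma ds_mem [Fintype V] {G : SimpleGraph V} {u v : V} (huv : G.Adj u v)
    (hds : ∀ w : V, w ≠ u → w ≠ v → G.Adj u w ∨ G.Adj v w) :
    Fintype.card V - 1 ∈
      {k : ℕ | ∃ c : V → ℕ, IsMVCColoring G c ∧ (Set.range c).ncard = k} := by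
  classical
  set e : V → ℕ := fun x => ((Fintype.equivFin V) x : ℕ) with he
  have hinj : Function.Injective e := fun x y h =>
    (Fintype.equivFin V).injective (Fin.val_injective h)
  set c : V → ℕ := fun x => if x = v then e u else e x with hcdef
  have hcu : c u = e u := by simp [hcdef]
  have hcv : c v = e u := by simp [hcdef]
  refine ⟨c, fun x y => ?_, ?_⟩
  · by_cases hxy : x = y
    · subst hxy; exact ⟨Walk.nil, Walk.IsPath.nil, by simp⟩
    by_cases hadj : G.Adj x y
    · exact ⟨Walk.cons hadj Walk.nil, by simp [Walk.isPath_def, hadj.ne], by simp⟩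
    -- now x ≠ y, not adjacent; in particular {x,y} ≠ {u,v}
    have hone : ∀ a b : V, G.Adj x a → G.Adj a b → G.Adj b y → x ≠ b → a ≠ y → c a = c b →
        ∃ p : G.Walk x y, p.IsPath ∧
          ∀ x' ∈ p.support.tail.dropLast, ∀ y' ∈ p.support.tail.dropLast, c x' = c y' := by
      intro a b h1 h2 h3 hxb hay hab
      refine ⟨Walk.cons h1 (Walk.cons h2 (Walk.cons h3 Walk.nil)), ?_, ?_⟩
      · simp [Walk.isPath_def, h1.ne, h1.ne', h2.ne, h2.ne', h3.ne, h3.ne', hxy, hxb, hay]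
      · intro x' hx' y' hy'
        simp only [Walk.support_cons, Walk.support_nil, List.tail_cons, List.dropLast_cons₂,
          List.dropLast_singleton, List.mem_cons, List.mem_singleton, List.not_mem_nil,
          or_false] at hx' hy'
        rcases hx' with rfl | rfl <;> rcases hy' with rfl | rfl <;> simp [hab]
    have htwo : ∀ a : V, G.Adj x a → G.Adj a y →
        ∃ p : G.Walk x y, p.IsPath ∧
          ∀ x' ∈ p.support.tail.dropLast, ∀ y' ∈ p.support.tail.dropLast, c x' = c y' := by
      intro a h1 h2
      refine ⟨Walk.cons h1 (Walk.cons h2 Walk.nil), ?_, ?_⟩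
      · simp [Walk.isPath_def, h1.ne, h1.ne', h2.ne, h2.ne', hxy]
      · simp only [Walk.support_cons, Walk.support_nil, List.tail_cons, List.dropLast_cons₂,
          List.dropLast_singleton, List.mem_singleton]
        rintro x' rfl y' rfl; rfl
    by_cases hxu : x = u
    · subst hxu
      have hyv : y ≠ v := fun h => hadj (h ▸ huv)
      have hyu : y ≠ x := Ne.symm hxy
      rcases hds y hyu hyv with h | h
      · exact absurd h hadj
      · exact htwo v huv h
    by_cases hxv : x = v
    · subst hxv
      have hyu : y ≠ u := fun h => hadj (h ▸ huv.symm)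
      have hyv : y ≠ x := Ne.symm hxy
      rcases hds y hyu hyv with h | h
      · exact htwo u huv.symm h
      · exact absurd h hadj
    by_cases hyu : y = u
    · subst hyu
      rcases hds x hxu hxv with h | h
      · exact absurd h.symm hadj
      · exact htwo v h.symm huv.symm
    by_cases hyv : y = v
    · subst hyv
      rcases hds x hxu hxv with h | h
      · exact htwo u h.symm huv
      · exact absurd h.symm hadj
    -- generic vertices
    rcases hds x hxu hxv with h1 | h1 <;> rcases hds y hyu hyv with h2 | h2
    · exact htwo u h1.symm h2
    · exact hone u v h1.symm huv h2 hxv (Ne.symm hyu) (hcu.trans hcv.symm)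
    · exact hone v u h1.symm huv.symm h2 hxu (Ne.symm hyv) (hcv.trans hcu.symm)
    · exact htwo v h1.symm h2
  · have hrange : Set.range c = e '' {x : V | x ≠ v} := by
      ext t
      constructor
      · rintro ⟨x, rfl⟩
        by_cases hx : x = v
        · exact ⟨u, huv.ne, by simp [hcdef, hx]⟩
        · exact ⟨x, hx, by simp [hcdef, hx]⟩
      · rintro ⟨x, hx, rfl⟩
        refine ⟨x, ?_⟩
        simp only [hcdef]
        exact if_neg hx
    rw [hrange, Set.ncard_image_of_injective _ hinj]
    have hset : {x : V | x ≠ v} = Set.univ \ {v} := by ext; simp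
    rw [hset, Set.ncard_diff (by simp), Set.ncard_univ, Nat.card_eq_fintype_card,
      Set.ncard_singleton]

lemma reachable_induce {G : SimpleGraph V} {s : Set V} {x y : V} (p : G.Walk x y) :
    (∀ z ∈ p.support, z ∈ s) → ∀ (hx : x ∈ s) (hy : y ∈ s),
    (G.induce s).Reachable ⟨x, hx⟩ ⟨y, hy⟩ := by
  induction p with
  | nil => intro _ hx hy; exact Reachable.refl _
  | @cons x w y h q ih =>
    intro hp hx hy
    have hw : w ∈ s := hp _ (by simp)
    refine (Adj.reachable (v := (⟨w, hw⟩ : s)) ?_).trans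
      (ih (fun z hz => hp z (by simp [hz])) hw hy)
    simp only [comap_adj, Function.Embedding.coe_subtype]
    exact h

lemma walk_avoiding {G : SimpleGraph V} (hG : G.Connected) {r a : V}
    (ha : ∀ x, G.dist r x ≤ G.dist r a) {y : V} (hy : y ≠ a) :
    ∃ p : G.Walk r y, a ∉ p.support := by
  classical
  obtain ⟨p, hp⟩ := hG.exists_walk_length_eq_dist r y
  by_cases hmem : a ∈ p.support
  · exfalso
    have h1 := SimpleGraph.dist_le (p.takeUntil a hmem)
    have h2 := SimpleGraph.dist_le (p.dropUntil a hmem)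
    have h3 : (p.takeUntil a hmem).length + (p.dropUntil a hmem).length = p.length := by
      have := congrArg Walk.length (p.take_spec hmem)
      rwa [Walk.length_append] at this
    have h4 := ha y
    have h5 : G.dist a y = 0 := by omega
    exact hy ((hG.dist_eq_zero_iff).mp h5).symm
  · exact ⟨p, hmem⟩

/-- In a connected graph with at least 3 vertices, there are two distinct vertices `a b`
such that every pair of vertices is joined by a walk whose support avoids `a`, `b`
except at endpoints. -/
lemma twoGood [Fintype V] {G : SimpleGraph V} (hG : G.Connected)
    (hcard : 3 ≤ Fintype.card V) :
    ∃ a b : V, a ≠ b ∧ ∀ x y : V, ∃ W : G.Walk x y,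
      ∀ z ∈ W.support, z = x ∨ z = y ∨ (z ≠ a ∧ z ≠ b) := by
  classical
  haveI hne : Nonempty V := Fintype.card_pos_iff.mp (by omega)
  obtain ⟨r⟩ := id hne
  obtain ⟨a, ha⟩ := Finite.exists_max (G.dist r)
  obtain ⟨x0, hx0⟩ := Fintype.exists_ne_of_one_lt_card (by omega) r
  have hra : G.dist r a ≠ 0 := by
    have h1 : 0 < G.dist r x0 := hG.pos_dist_of_ne (Ne.symm hx0)
    have := ha x0; omega
  have har : a ≠ r := by
    intro h; rw [h, SimpleGraph.dist_self] at hra; exact hra rfl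
  have KEY : ∀ y, y ≠ a → ∃ p : G.Walk r y, a ∉ p.support := fun y hy =>
    walk_avoiding hG ha hy
  obtain ⟨w, haw⟩ : ∃ w, G.Adj a w := by
    obtain ⟨p, hp⟩ := hG.exists_walk_length_eq_dist a r
    cases p with
    | nil => exact absurd rfl har
    | cons h q => exact ⟨_, h⟩
  set s : Set V := {x | x ≠ a} with hs
  have hws : w ∈ s := haw.ne'
  have hrs : r ∈ s := Ne.symm har
  haveI : Nonempty s := ⟨⟨w, hws⟩⟩
  have reach_r : ∀ (x : V) (hx : x ∈ s), (G.induce s).Reachable ⟨r, hrs⟩ ⟨x, hx⟩ := by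
    intro x hx
    obtain ⟨p, hp⟩ := KEY x hx
    exact reachable_induce (s := s) p (fun z hz (hza : z = a) => hp (by rwa [hza] at hz)) hrs hx
  have hHconn : (G.induce s).Connected := by
    rw [connected_iff]
    refine ⟨fun x y => ?_, inferInstance⟩
    exact (reach_r x.1 x.2).symm.trans (reach_r y.1 y.2)
  obtain ⟨b', hb'⟩ := Finite.exists_max ((G.induce s).dist ⟨w, hws⟩)
  set b : V := b'.1 with hbdef
  have hbs : b ≠ a := b'.2
  obtain ⟨z0, hz0a, hz0w⟩ : ∃ z, z ≠ a ∧ z ≠ w := by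
    by_contra hcon
    push_neg at hcon
    have hsub : (Finset.univ : Finset V) ⊆ {a, w} := by
      intro z _
      by_cases hza : z = a
      · simp [hza]
      · simp [hcon z hza]
    have := Finset.card_le_card hsub
    have h2 : ({a, w} : Finset V).card ≤ 2 :=
      (Finset.card_insert_le _ _).trans (by simp)
    simp only [Finset.card_univ] at this
    omega
  have hwb' : (⟨w, hws⟩ : s) ≠ b' := by
    intro h
    have h1 : 0 < (G.induce s).dist ⟨w, hws⟩ ⟨z0, hz0a⟩ :=
      hHconn.pos_dist_of_ne (by simp [Subtype.ext_iff, Ne.symm hz0w])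
    have h2 := hb' ⟨z0, hz0a⟩
    rw [← h, SimpleGraph.dist_self] at h2
    omega
  have KEY2 : ∀ (x : V) (hx : x ∈ s), (⟨x, hx⟩ : s) ≠ b' →
      ∃ p : G.Walk w x, ∀ z ∈ p.support, z ≠ a ∧ z ≠ b := by
    intro x hx hxb
    obtain ⟨q, hq⟩ := walk_avoiding hHconn hb' hxb
    refine ⟨q.map (SimpleGraph.Embedding.induce s).toHom, ?_⟩
    intro z hz
    erw [Walk.support_map, List.mem_map] at hz
    obtain ⟨z', hz', rfl⟩ := hz
    refine ⟨z'.2, fun hzb => ?_⟩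
    exact hq (by rwa [show z' = b' from Subtype.ext hzb] at hz')
  have W1 : ∀ (x : V), x ≠ a → x ≠ b →
      ∃ p : G.Walk w x, ∀ z ∈ p.support, z ≠ a ∧ z ≠ b := by
    intro x hxa hxb
    exact KEY2 x hxa (fun h => hxb (congrArg Subtype.val h))
  have W2 : ∃ p : G.Walk w b, ∀ z ∈ p.support, z ≠ a := by
    obtain ⟨q⟩ := hHconn ⟨w, hws⟩ b'
    refine ⟨q.map (SimpleGraph.Embedding.induce s).toHom, ?_⟩
    intro z hz
    erw [Walk.support_map, List.mem_map] at hz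
    obtain ⟨z', hz', rfl⟩ := hz
    exact z'.2
  refine ⟨a, b, Ne.symm hbs, ?_⟩
  -- helper walks from a and from b
  have Hab : ∀ y : V, ∃ W : G.Walk a y,
      ∀ z ∈ W.support, z = a ∨ z = y ∨ (z ≠ a ∧ z ≠ b) := by
    intro y
    by_cases hya : y = a
    · subst hya; exact ⟨Walk.nil, by simp⟩
    by_cases hyb : y = b
    · subst hyb
      obtain ⟨p, hp⟩ := W2
      refine ⟨Walk.cons haw p, ?_⟩
      intro z hz
      rw [Walk.support_cons, List.mem_cons] at hz
      rcases hz with rfl | hz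
      · exact Or.inl rfl
      · by_cases hzb : z = b
        · exact Or.inr (Or.inl hzb)
        · exact Or.inr (Or.inr ⟨hp z hz, hzb⟩)
    · obtain ⟨p, hp⟩ := W1 y hya hyb
      refine ⟨Walk.cons haw p, ?_⟩
      intro z hz
      rw [Walk.support_cons, List.mem_cons] at hz
      rcases hz with rfl | hz
      · exact Or.inl rfl
      · exact Or.inr (Or.inr (hp z hz))
  have Hbb : ∀ y : V, ∃ W : G.Walk b y,
      ∀ z ∈ W.support, z = b ∨ z = y ∨ (z ≠ a ∧ z ≠ b) := by
    intro y
    by_cases hyb : y = b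
    · subst hyb; exact ⟨Walk.nil, by simp⟩
    by_cases hya : y = a
    · subst hya
      obtain ⟨W, hW⟩ := Hab b
      refine ⟨W.reverse, ?_⟩
      intro z hz
      rw [Walk.support_reverse, List.mem_reverse] at hz
      rcases hW z hz with h | h | h
      · exact Or.inr (Or.inl h)
      · exact Or.inl h
      · exact Or.inr (Or.inr h)
    · obtain ⟨q, hq⟩ := W2
      obtain ⟨p, hp⟩ := W1 y hya hyb
      refine ⟨(q.reverse).append p, ?_⟩
      intro z hz
      rw [Walk.mem_support_append_iff] at hz
      rcases hz with hz | hz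
      · rw [Walk.support_reverse, List.mem_reverse] at hz
        by_cases hzb : z = b
        · exact Or.inl hzb
        · exact Or.inr (Or.inr ⟨hq z hz, hzb⟩)
      · exact Or.inr (Or.inr (hp z hz))
  intro x y
  by_cases hxa : x = a
  · subst hxa; obtain ⟨W, hW⟩ := Hab y; exact ⟨W, hW⟩
  by_cases hxb : x = b
  · subst hxb; obtain ⟨W, hW⟩ := Hbb y; exact ⟨W, hW⟩
  by_cases hya : y = a
  · subst hya
    obtain ⟨W, hW⟩ := Hab x
    refine ⟨W.reverse, ?_⟩
    intro z hz
    rw [Walk.support_reverse, List.mem_reverse] at hz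
    rcases hW z hz with h | h | h
    · exact Or.inr (Or.inl h)
    · exact Or.inl h
    · exact Or.inr (Or.inr h)
  by_cases hyb : y = b
  · subst hyb
    obtain ⟨W, hW⟩ := Hbb x
    refine ⟨W.reverse, ?_⟩
    intro z hz
    rw [Walk.support_reverse, List.mem_reverse] at hz
    rcases hW z hz with h | h | h
    · exact Or.inr (Or.inl h)
    · exact Or.inl h
    · exact Or.inr (Or.inr h)
  · obtain ⟨p, hp⟩ := W1 x hxa hxb
    obtain ⟨q, hq⟩ := W1 y hya hyb
    refine ⟨(p.reverse).append q, ?_⟩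
    intro z hz
    rw [Walk.mem_support_append_iff] at hz
    rcases hz with hz | hz
    · rw [Walk.support_reverse, List.mem_reverse] at hz
      exact Or.inr (Or.inr (hp z hz))
    · exact Or.inr (Or.inr (hq z hz))

/-- Any connected graph on at least three vertices admits an MVC coloring with 3 colors. -/
lemma three_mem [Fintype V] {G : SimpleGraph V} (hG : G.Connected)
    (hcard : 3 ≤ Fintype.card V) :
    (3 : ℕ) ∈ {k : ℕ | ∃ c : V → ℕ, IsMVCColoring G c ∧ (Set.range c).ncard = k} := by
  classical
  obtain ⟨a, b, hab, hW⟩ := twoGood hG hcard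
  set c : V → ℕ := fun z => if z = a then 1 else if z = b then 2 else 0 with hcdef
  refine ⟨c, fun x y => ?_, ?_⟩
  · obtain ⟨W, hWs⟩ := hW x y
    refine ⟨W.bypass, W.bypass_isPath, ?_⟩
    have hzero : ∀ z ∈ W.bypass.support.tail.dropLast, c z = 0 := by
      intro z hz
      have hzs : z ∈ W.support := W.support_bypass_subset (internal_mem hz)
      have hne := internal_ne W.bypass_isPath hz
      rcases hWs z hzs with h | h | h
      · exact absurd h hne.1
      · exact absurd h hne.2
      · simp [hcdef, h.1, h.2]
    intro z1 h1 z2 h2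
    rw [hzero z1 h1, hzero z2 h2]
  · obtain ⟨z0, hz0⟩ : ∃ z0 : V, z0 ≠ a ∧ z0 ≠ b := by
      by_contra hcon
      push_neg at hcon
      have hsub : (Finset.univ : Finset V) ⊆ {a, b} := by
        intro z _
        by_cases hza : z = a
        · simp [hza]
        · simp [hcon z hza]
      have := Finset.card_le_card hsub
      have h2 : ({a, b} : Finset V).card ≤ 2 :=
        (Finset.card_insert_le _ _).trans (by simp)
      simp only [Finset.card_univ] at this
      omega
    have hrange : Set.range c = {1, 2, 0} := by
      ext t
      constructor
      · rintro ⟨x, rfl⟩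
        by_cases hxa : x = a
        · simp [hcdef, hxa]
        by_cases hxb : x = b
        · subst hxb; simp [hcdef, Ne.symm hab]
        · simp [hcdef, hxa, hxb]
      · intro ht
        rcases ht with rfl | rfl | rfl
        · exact ⟨a, by simp [hcdef]⟩
        · exact ⟨b, by simp [hcdef, hab.symm]⟩
        · exact ⟨z0, by simp [hcdef, hz0.1, hz0.2]⟩
    rw [hrange]
    rw [Set.ncard_insert_of_notMem (by simp), Set.ncard_insert_of_notMem (by simp),
      Set.ncard_singleton]

end Aux

theorem stmt_15 {V : Type*} [Fintype V] (G : SimpleGraph V)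
    (hn : 5 ≤ Fintype.card V) (hG : G.Connected) (hGc : Gᶜ.Connected) :
    Fintype.card V + 3 ≤ mvc G + mvc Gᶜ ∧ mvc G + mvc Gᶜ ≤ 2 * Fintype.card V := by
  classical
  haveI : Nonempty V := Fintype.card_pos_iff.mp (by omega)
  set n := Fintype.card V with hndef
  have hub : mvc G + mvc Gᶜ ≤ 2 * n := by
    have h1 := mvc_le hG
    have h2 := mvc_le hGc
    omega
  refine ⟨?_, hub⟩
  -- from failure of diameter-2 property to a spanning double star of the complement
  have ds_of_not : ∀ (H : SimpleGraph V),
      ¬(∀ u v : V, u ≠ v → H.Adj u v ∨ ∃ w, H.Adj u w ∧ H.Adj w v) →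
      ∃ u v : V, Hᶜ.Adj u v ∧ ∀ w : V, w ≠ u → w ≠ v → Hᶜ.Adj u w ∨ Hᶜ.Adj v w := by
    intro H hH
    push_neg at hH
    obtain ⟨u, v, huv, hnadj, hno⟩ := hH
    refine ⟨u, v, ⟨huv, hnadj⟩, fun w hwu hwv => ?_⟩
    by_cases h : H.Adj u w
    · exact Or.inr ⟨Ne.symm hwv, fun hadj => (hno w h) hadj.symm⟩
    · exact Or.inl ⟨Ne.symm hwu, h⟩
  by_cases h1 : ∀ u v : V, u ≠ v → G.Adj u v ∨ ∃ w, G.Adj u w ∧ G.Adj w v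
  · have hmvcG : n ≤ mvc G := le_mvc (d2_mem h1)
    by_cases h2 : ∀ u v : V, u ≠ v → Gᶜ.Adj u v ∨ ∃ w, Gᶜ.Adj u w ∧ Gᶜ.Adj w v
    · have hmvcGc : n ≤ mvc Gᶜ := le_mvc (d2_mem h2)
      omega
    · have hmvcGc : 3 ≤ mvc Gᶜ := le_mvc (three_mem hGc (by omega))
      omega
  · -- Gᶜ has a spanning double star
    obtain ⟨u, v, huv, hds⟩ := ds_of_not G h1
    have hmvcGc : n - 1 ≤ mvc Gᶜ := le_mvc (ds_mem huv hds)
    by_cases h2 : ∀ u v : V, u ≠ v → Gᶜ.Adj u v ∨ ∃ w, Gᶜ.Adj u w ∧ Gᶜ.Adj w v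
    · have hmvcGc2 : n ≤ mvc Gᶜ := le_mvc (d2_mem h2)
      have hmvcG3 : 3 ≤ mvc G := le_mvc (three_mem hG (by omega))
      omega
    · obtain ⟨u', v', huv', hds'⟩ := ds_of_not Gᶜ h2
      rw [compl_compl] at huv' hds'
      have hmvcG : n - 1 ≤ mvc G := le_mvc (ds_mem huv' hds')
      omega
end

section
/- For n ≥ 5, the path P_n satisfies mvc(P_n) + mvc(complement of P_n) = n + 3. -/
open SimpleGraph

lemma sSup_eq_of_mem_ub {S : Set ℕ} {m : ℕ} (hm : m ∈ S) (hub : ∀ k ∈ S, k ≤ m) :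
    sSup S = m :=
  le_antisymm (csSup_le ⟨m, hm⟩ hub) (le_csSup ⟨m, fun _ hk => hub _ hk⟩ hm)

section PathLemmas

lemma not_mem_dropLast_of_nodup {α : Type*} {l : List α} (hl : l.Nodup) (h : l ≠ []) :
    l.getLast h ∉ l.dropLast := by
  intro hx
  have he := List.dropLast_append_getLast h
  rw [← he, List.nodup_append] at hl
  exact hl.2.2 _ hx _ (List.mem_singleton_self _) rfl

/-- the monotone walk in the path graph -/
def walkUp {n : ℕ} : (d : ℕ) → (u v : Fin n) → (↑u + d = ↑v) → (pathGraph n).Walk u v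
  | 0, u, v, h => (Walk.nil : (pathGraph n).Walk u u).copy rfl (Fin.ext (by omega))
  | d+1, u, v, h =>
      Walk.cons (u := u) (v := ⟨↑u + 1, by omega⟩)
        (by rw [pathGraph_adj]; left; rfl)
        (walkUp d ⟨↑u + 1, by omega⟩ v (by simp; omega))

lemma walkUp_support {n : ℕ} : ∀ (d : ℕ) (u v : Fin n) (h : ↑u + d = ↑v),
    ∀ x ∈ (walkUp d u v h).support, ↑u ≤ ↑x ∧ ↑x ≤ ↑v := by
  intro d
  induction d with
  | zero => intro u v h x hx; simp [walkUp, Walk.support_copy] at hx; subst hx; omega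
  | succ d ih =>
      intro u v h x hx
      simp [walkUp] at hx
      rcases hx with rfl | hx
      · omega
      · have := ih ⟨↑u + 1, by omega⟩ v (by simp; omega) x hx
        have h1 : (↑u:ℕ) + 1 ≤ ↑x := this.1
        have h2 : (↑x:ℕ) ≤ ↑v := this.2
        omega

lemma walkUp_isPath {n : ℕ} : ∀ (d : ℕ) (u v : Fin n) (h : ↑u + d = ↑v),
    (walkUp d u v h).IsPath := by
  intro d
  induction d with
  | zero => intro u v h; simp [walkUp]
  | succ d ih =>
      intro u v h
      rw [walkUp, Walk.cons_isPath_iff]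
      refine ⟨ih _ _ _, fun hx => ?_⟩
      have := walkUp_support d ⟨↑u + 1, by omega⟩ v (by simp; omega) u hx
      have h1 : (↑u:ℕ) + 1 ≤ ↑u := this.1
      omega

lemma reverse_tail_dropLast {α : Type*} (l : List α) :
    l.reverse.tail.dropLast = (l.tail.dropLast).reverse := by
  have h1 : ∀ m : List α, m.reverse.tail = m.dropLast.reverse := by
    intro m
    have := List.dropLast_reverse (l := m.reverse)
    rw [List.reverse_reverse] at this
    rw [this, List.reverse_reverse]
  rw [h1, List.dropLast_reverse, List.tail_dropLast]

lemma walkUp_interior {n : ℕ} (d : ℕ) (u v : Fin n) (h : ↑u + d = ↑v) :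
    ∀ x ∈ (walkUp d u v h).support.tail.dropLast, ↑u < ↑x ∧ ↑x < ↑v := by
  intro x hx
  set p := walkUp d u v h with hp
  have hpath := walkUp_isPath d u v h
  have hnd : p.support.Nodup := hpath.support_nodup
  have hxt : x ∈ p.support.tail := List.mem_of_mem_dropLast hx
  have hxs : x ∈ p.support := List.mem_of_mem_tail hxt
  have hbd := walkUp_support d u v h x hxs
  have hne : p.support ≠ [] := p.support_ne_nil
  have hxu : x ≠ u := by
    intro rfl'
    subst rfl'
    rw [p.support_eq_cons] at hnd
    exact (List.nodup_cons.mp hnd).1 hxt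
  have hxd : x ∈ p.support.dropLast := by
    rw [← List.tail_dropLast] at hx
    exact List.mem_of_mem_tail hx
  have hxv : x ≠ v := by
    intro rfl'
    subst rfl'
    have hlast := p.getLast_support
    have := not_mem_dropLast_of_nodup hnd hne
    rw [hlast] at this
    exact this hxd
  have h1 : (↑u:ℕ) ≠ ↑x := fun he => hxu (Fin.ext he.symm)
  have h2 : (↑x:ℕ) ≠ ↑v := fun he => hxv (Fin.ext he)
  omega

lemma monopath {n : ℕ} (u v : Fin n) : ∃ p : (pathGraph n).Walk u v, p.IsPath ∧
    ∀ x ∈ p.support.tail.dropLast, 0 < (x:ℕ) ∧ (x:ℕ) < n - 1 := by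
  rcases le_or_gt (u:ℕ) (v:ℕ) with h | h
  · refine ⟨walkUp (↑v - ↑u) u v (by omega), walkUp_isPath _ _ _ _, fun x hx => ?_⟩
    have := walkUp_interior _ u v (by omega) x hx
    have hv := v.isLt
    omega
  · refine ⟨(walkUp (↑u - ↑v) v u (by omega)).reverse, (walkUp_isPath _ _ _ _).reverse,
      fun x hx => ?_⟩
    rw [Walk.support_reverse, reverse_tail_dropLast, List.mem_reverse] at hx
    have := walkUp_interior _ v u (by omega) x hx
    have hu := u.isLt
    omega

lemma mem_dropLast_of_ne_getLast {α : Type*} {l : List α} {x : α} (h : l ≠ [])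
    (hx : x ∈ l) (hne : x ≠ l.getLast h) : x ∈ l.dropLast := by
  conv at hx => rw [← List.dropLast_append_getLast h]
  rcases List.mem_append.mp hx with h' | h'
  · exact h'
  · exact absurd (List.mem_singleton.mp h') hne

lemma walk_mem_interior {V : Type*} {G : SimpleGraph V} {u v : V} (p : G.Walk u v)
    {x : V} (hx : x ∈ p.support) (hxu : x ≠ u) (hxv : x ≠ v) :
    x ∈ p.support.tail.dropLast := by
  cases p with
  | nil => simp at hx; exact absurd hx hxu
  | cons h q =>
      simp only [Walk.support_cons, List.tail_cons]
      rcases List.mem_cons.mp hx with he | hq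
      · exact absurd he hxu
      · exact mem_dropLast_of_ne_getLast q.support_ne_nil hq
          (by rw [q.getLast_support]; exact hxv)

lemma walk_ivt {n : ℕ} {u v : Fin n} (p : (pathGraph n).Walk u v) :
    ∀ k : ℕ, min ↑u ↑v ≤ k → k ≤ max ↑u ↑v → ∃ x ∈ p.support, (x:ℕ) = k := by
  induction p with
  | @nil a => intro k h1 h2; exact ⟨a, by simp, by omega⟩
  | @cons a b d h q ih =>
      intro k h1 h2
      have hadj := pathGraph_adj.mp h
      by_cases hk : k = ↑a
      · exact ⟨a, by simp, hk.symm⟩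
      · have hb : min ↑b ↑d ≤ k ∧ k ≤ max ↑b ↑d := by omega
        obtain ⟨x, hx, hxk⟩ := ih k hb.1 hb.2
        exact ⟨x, by simp [hx], hxk⟩

lemma mvcP_ub {n : ℕ} (hn : 5 ≤ n) (c : Fin n → ℕ) (hc : IsMVCColoring (pathGraph n) c) :
    (Set.range c).ncard ≤ 3 := by
  have h0 : 0 < n := by omega
  set v0 : Fin n := ⟨0, by omega⟩ with hv0
  set v1 : Fin n := ⟨1, by omega⟩ with hv1
  set vl : Fin n := ⟨n-1, by omega⟩ with hvl
  have e0 : (v0:ℕ) = 0 := rfl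
  have e1 : (v1:ℕ) = 1 := rfl
  have el : (vl:ℕ) = n - 1 := rfl
  obtain ⟨p, hp, hmono⟩ := hc v0 vl
  have hint : ∀ x : Fin n, 0 < (x:ℕ) → (x:ℕ) < n-1 → x ∈ p.support.tail.dropLast := by
    intro x hx1 hx2
    have hxs : x ∈ p.support := by
      obtain ⟨y, hy, hyk⟩ := walk_ivt p ↑x (by omega) (by omega)
      rwa [show y = x from Fin.ext hyk] at hy
    exact walk_mem_interior p hxs (fun he => by rw [he, e0] at hx1; omega)
      (fun he => by rw [he, el] at hx2; omega)
  have hmemv1 : v1 ∈ p.support.tail.dropLast := hint v1 (by omega) (by omega)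
  have hsub : Set.range c ⊆ {c v0, c v1, c vl} := by
    rintro _ ⟨i, rfl⟩
    by_cases hi0 : (i:ℕ) = 0
    · rw [show i = v0 from Fin.ext (by omega)]; simp
    by_cases hil : (i:ℕ) = n-1
    · rw [show i = vl from Fin.ext (by omega)]; simp
    · have : c i = c v1 :=
        hmono i (hint i (by omega) (by omega)) v1 hmemv1
      rw [this]; simp
  have hfin : ({c v0, c v1, c vl} : Set ℕ).Finite :=
    (Set.finite_singleton _).insert _ |>.insert _
  have h1 := Set.ncard_le_ncard hsub hfin
  have h2 : ({c v0, c v1, c vl} : Set ℕ).ncard ≤ 3 := by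
    have a1 := Set.ncard_insert_le (c v0) ({c v1, c vl} : Set ℕ)
    have a2 := Set.ncard_insert_le (c v1) ({c vl} : Set ℕ)
    have a3 : ({c vl} : Set ℕ).ncard = 1 := Set.ncard_singleton _
    omega
  omega

def cP (n : ℕ) (i : Fin n) : ℕ := if (i:ℕ) = 0 then 0 else if (i:ℕ) = n-1 then 1 else 2

lemma cP_interior {n : ℕ} {i : Fin n} (h1 : 0 < (i:ℕ)) (h2 : (i:ℕ) < n-1) :
    cP n i = 2 := by
  unfold cP
  rw [if_neg (by omega), if_neg (by omega)]

lemma mvcP_eq {n : ℕ} (hn : 5 ≤ n) : mvc (pathGraph n) = 3 := by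
  apply sSup_eq_of_mem_ub
  · refine ⟨cP n, ?_, ?_⟩
    · intro u v
      obtain ⟨p, hp, hm⟩ := monopath u v
      refine ⟨p, hp, fun x hx y hy => ?_⟩
      have hx' := hm x hx
      have hy' := hm y hy
      rw [cP_interior hx'.1 hx'.2, cP_interior hy'.1 hy'.2]
    · have hrange : Set.range (cP n) = {0, 1, 2} := by
        ext k
        constructor
        · rintro ⟨i, rfl⟩
          unfold cP
          split_ifs <;> simp
        · intro hk
          rcases hk with rfl | rfl | rfl
          · exact ⟨⟨0, by omega⟩, by simp [cP]⟩
          · exact ⟨⟨n-1, by omega⟩, by simp [cP]; omega⟩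
          · exact ⟨⟨1, by omega⟩, by simp [cP]; omega⟩
      rw [hrange]
      rw [Set.ncard_insert_of_notMem (by simp), Set.ncard_insert_of_notMem (by simp),
        Set.ncard_singleton]
  · rintro k ⟨c, hc, rfl⟩
    exact mvcP_ub hn c hc

lemma mvcC_eq {n : ℕ} (hn : 5 ≤ n) : mvc (pathGraph n)ᶜ = n := by
  apply sSup_eq_of_mem_ub
  · refine ⟨Fin.val, ?_, ?_⟩
    · intro u v
      by_cases huv : u = v
      · subst huv; exact ⟨Walk.nil, Walk.IsPath.nil, by simp⟩
      by_cases hadj : (pathGraph n)ᶜ.Adj u v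
      · refine ⟨Walk.cons hadj Walk.nil, ?_, by simp⟩
        rw [Walk.cons_isPath_iff]
        exact ⟨Walk.IsPath.nil, by simpa using huv⟩
      · -- u and v are adjacent in the path graph
        have hpadj : (pathGraph n).Adj u v := by
          by_contra h
          exact hadj ((compl_adj (pathGraph n) u v).mpr ⟨huv, h⟩)
        have hd := pathGraph_adj.mp hpadj
        set k : ℕ := if max (u:ℕ) (v:ℕ) + 2 < n then max (u:ℕ) (v:ℕ) + 2
          else min (u:ℕ) (v:ℕ) - 2 with hk
        have hkprop : k < n ∧ ((u:ℕ) + 1 ≠ k ∧ k + 1 ≠ (u:ℕ)) ∧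
            ((v:ℕ) + 1 ≠ k ∧ k + 1 ≠ (v:ℕ)) ∧ k ≠ (u:ℕ) ∧ k ≠ (v:ℕ) := by
          have hu := u.isLt
          have hv := v.isLt
          rw [hk]
          split_ifs with hcond <;> omega
        set w : Fin n := ⟨k, hkprop.1⟩ with hw
        have ew : (w:ℕ) = k := rfl
        have haw : (pathGraph n)ᶜ.Adj u w := by
          rw [compl_adj]
          refine ⟨fun he => ?_, fun hA => ?_⟩
          · have : (u:ℕ) = k := by rw [he, ew]
            omega
          · have := pathGraph_adj.mp hA
            rw [ew] at this
            omega
        have hwv : (pathGraph n)ᶜ.Adj w v := by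
          rw [compl_adj]
          refine ⟨fun he => ?_, fun hA => ?_⟩
          · have : k = (v:ℕ) := by rw [← ew, he]
            omega
          · have := pathGraph_adj.mp hA
            rw [ew] at this
            omega
        refine ⟨Walk.cons haw (Walk.cons hwv Walk.nil), ?_, ?_⟩
        · rw [Walk.cons_isPath_iff, Walk.cons_isPath_iff]
          have hA1 : u ≠ w := haw.ne
          have hA2 : w ≠ v := hwv.ne
          refine ⟨⟨Walk.IsPath.nil, by simpa using hA2⟩, ?_⟩
          simp only [Walk.support_cons, Walk.support_nil, List.mem_cons,
            List.mem_singleton, List.not_mem_nil, or_false]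
          rintro (h1 | h2)
          · exact hA1 h1
          · exact huv h2
        · simp
    · have hinj : Function.Injective (Fin.val : Fin n → ℕ) := Fin.val_injective
      rw [← Nat.card_coe_set_eq, Nat.card_range_of_injective hinj,
        Nat.card_eq_fintype_card, Fintype.card_fin]
  · rintro m ⟨c, hc, rfl⟩
    have : Set.range c = c '' Set.univ := by rw [Set.image_univ]
    rw [this]
    calc (c '' Set.univ).ncard ≤ (Set.univ : Set (Fin n)).ncard :=
          Set.ncard_image_le Set.finite_univ
      _ = n := by rw [Set.ncard_univ, Nat.card_eq_fintype_card, Fintype.card_fin]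

theorem stmt_16 (n : ℕ) (hn : 5 ≤ n) :
    mvc (SimpleGraph.pathGraph n) + mvc (SimpleGraph.pathGraph n)ᶜ = n + 3 := by
  rw [mvcP_eq hn, mvcC_eq hn]
  omega
end PathLemmas
end

section
/- In any MVC-coloring of a connected graph G that uses the maximum number mvc(G) of colors, for every color c the set of vertices colored c induces a connected subgraph of G. -/
open SimpleGraph

/-- From a `G.Adj`-chain inside `S`, all elements are reachable from the head in the
induced subgraph. -/
lemma chain_reach {V : Type*} (G : SimpleGraph V) (S : Set V) :
    ∀ (l : List V) (a : V), List.Chain G.Adj a l → ∀ (ha : a ∈ S), (∀ x ∈ l, x ∈ S) →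
    ∀ x, x ∈ a :: l → ∀ (hx : x ∈ S), (G.induce S).Reachable ⟨a, ha⟩ ⟨x, hx⟩ := by
  intro l
  induction l with
  | nil =>
    intro a _ ha _ x hx hxS
    simp only [List.mem_cons, List.not_mem_nil, or_false] at hx
    subst hx
    exact Reachable.refl _
  | cons b l ih =>
    intro a hchain ha hmem x hx hxS
    rw [List.Chain, List.chain_cons] at hchain
    obtain ⟨hab, hchain'⟩ := hchain
    rcases List.mem_cons.mp hx with rfl | hx'
    · exact Reachable.refl _
    · have hb : b ∈ S := hmem b List.mem_cons_self
      have h1 : (G.induce S).Adj ⟨a, ha⟩ ⟨b, hb⟩ := hab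
      exact h1.reachable.trans
        (ih b hchain' hb (fun y hy => hmem y (List.mem_cons_of_mem _ hy)) x hx' hxS)

theorem stmt_18 {V : Type*} [Fintype V] (G : SimpleGraph V) (hG : G.Connected)
    (c : V → ℕ) (hc : IsMVCColoring G c) (hext : (Set.range c).ncard = mvc G) :
    ∀ col ∈ Set.range c, (G.induce {v : V | c v = col}).Connected := by
  classical
  intro col hcol
  by_contra hncon
  obtain ⟨v₀, hv₀⟩ := hcol
  set S : Set V := {v : V | c v = col} with hSdef
  have hv₀S : v₀ ∈ S := hv₀
  -- not connected + nonempty ⇒ not preconnected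
  have hnp : ¬ (G.induce S).Preconnected := by
    intro hp
    exact hncon ((SimpleGraph.connected_iff _).mpr ⟨hp, ⟨⟨v₀, hv₀S⟩⟩⟩)
  rw [SimpleGraph.Preconnected] at hnp
  push_neg at hnp
  obtain ⟨a, b, hab⟩ := hnp
  -- fresh color
  set new : ℕ := (Finset.univ.image c).sup id + 1 with hnewdef
  have hnew_notin : new ∉ Set.range c := by
    rintro ⟨v, hv⟩
    have : c v ≤ (Finset.univ.image c).sup id :=
      Finset.le_sup (f := id) (Finset.mem_image_of_mem c (Finset.mem_univ v))
    omega
  -- predicate : in component of `a`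
  set P : V → Prop := fun v => ∃ hv : v ∈ S, (G.induce S).Reachable a ⟨v, hv⟩ with hPdef
  set c' : V → ℕ := fun v => if P v then new else c v with hc'def
  have hPcol : ∀ v, P v → c v = col := fun v hv => hv.1
  -- P holds on a, fails on b
  have hPa : P a.val := ⟨a.2, by rw [Subtype.coe_eta]⟩
  have hPb : ¬ P b.val := by
    rintro ⟨hv, hr⟩
    rw [Subtype.coe_eta] at hr
    exact hab hr
  -- c' is an MVC coloring
  have hc' : IsMVCColoring G c' := by
    intro u v
    obtain ⟨p, hp, hmono⟩ := hc u v
    refine ⟨p, hp, ?_⟩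
    set L := p.support.tail.dropLast with hLdef
    by_cases hcolL : ∃ x ∈ L, c x = col
    · obtain ⟨x₀, hx₀L, hx₀col⟩ := hcolL
      have hallcol : ∀ x ∈ L, c x = col := fun x hx => (hmono x hx x₀ hx₀L).trans hx₀col
      have hallS : ∀ x ∈ L, x ∈ S := hallcol
      -- all elements of L are mutually reachable in the induced graph
      have hchainL : L.Chain' G.Adj :=
        (p.isChain_adj_support.tail).prefix (List.dropLast_prefix _)
      have hreach : ∀ x ∈ L, ∀ y ∈ L, ∀ (hx : x ∈ S) (hy : y ∈ S),
          (G.induce S).Reachable ⟨x, hx⟩ ⟨y, hy⟩ := by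
        intro x hx y hy hxS hyS
        match hL : L with
        | [] => simp at hx
        | h :: t =>
          have hhS : h ∈ S := hallS h List.mem_cons_self
          have r1 := chain_reach G S t h hchainL hhS
            (fun z hz => hallS z (List.mem_cons_of_mem _ hz)) x hx hxS
          have r2 := chain_reach G S t h hchainL hhS
            (fun z hz => hallS z (List.mem_cons_of_mem _ hz)) y hy hyS
          exact r1.symm.trans r2
      -- P is constant on L
      have hPconst : ∀ x ∈ L, ∀ y ∈ L, (P x ↔ P y) := by
        intro x hx y hy
        constructor
        · rintro ⟨hxS, hr⟩
          exact ⟨hallS y hy, hr.trans (hreach x hx y hy hxS (hallS y hy))⟩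
        · rintro ⟨hyS, hr⟩
          exact ⟨hallS x hx, hr.trans (hreach y hy x hx hyS (hallS x hx))⟩
      intro x hx y hy
      by_cases hPx : P x
      · have hPy : P y := (hPconst x hx y hy).mp hPx
        simp only [hc'def, if_pos hPx, if_pos hPy]
      · have hPy : ¬ P y := fun h => hPx ((hPconst x hx y hy).mpr h)
        simp only [hc'def, if_neg hPx, if_neg hPy]
        exact hmono x hx y hy
    · push_neg at hcolL
      intro x hx y hy
      have hPx : ¬ P x := fun h => hcolL x hx (hPcol x h)
      have hPy : ¬ P y := fun h => hcolL y hy (hPcol y h)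
      simp only [hc'def, if_neg hPx, if_neg hPy]
      exact hmono x hx y hy
  -- range of c'
  have hrange : Set.range c' = insert new (Set.range c) := by
    apply Set.Subset.antisymm
    · rintro _ ⟨v, rfl⟩
      by_cases hPv : P v
      · simp [hc'def, if_pos hPv]
      · simp only [hc'def, if_neg hPv]
        exact Set.mem_insert_of_mem _ ⟨v, rfl⟩
    · rintro d hd
      rcases Set.mem_insert_iff.mp hd with rfl | ⟨v, rfl⟩
      · exact ⟨a.val, by simp [hc'def, if_pos hPa]⟩
      · by_cases hdcol : c v = col
        · refine ⟨b.val, ?_⟩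
          simp only [hc'def, if_neg hPb]
          have h2 : c (b : V) = col := b.2
          rw [h2, hdcol]
        · have hPv : ¬ P v := fun h => hdcol (hPcol v h)
          exact ⟨v, by simp [hc'def, if_neg hPv]⟩
  have hfin : (Set.range c).Finite := Set.finite_range c
  have hcard : (Set.range c').ncard = (Set.range c).ncard + 1 := by
    rw [hrange, Set.ncard_insert_of_notMem hnew_notin hfin]
  -- contradiction with maximality
  have hbdd : BddAbove {k : ℕ | ∃ c : V → ℕ, IsMVCColoring G c ∧ (Set.range c).ncard = k} := by
    refine ⟨Fintype.card V, ?_⟩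
    rintro k ⟨c'', _, rfl⟩
    rw [← Set.image_univ, ← Finset.coe_univ, ← Finset.coe_image, Set.ncard_coe_finset]
    exact le_trans Finset.card_image_le (le_of_eq Finset.card_univ)
  have hmem2 : mvc G + 1 ∈ {k : ℕ | ∃ c : V → ℕ, IsMVCColoring G c ∧ (Set.range c).ncard = k} :=
    ⟨c', hc', by rw [hcard, hext]⟩
  have := le_csSup hbdd hmem2
  rw [show sSup {k : ℕ | ∃ c : V → ℕ, IsMVCColoring G c ∧ (Set.range c).ncard = k} = mvc G
    from rfl] at this
  omega
end
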